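/- arXiv:2005.03105 — 8 statements merged into one kernel-verified Lean document; each statement's English description precedes it below -/
import Mathlib

section
/- Let n ≥ 5 and let C_1, …, C_{n−1} ∈ GL_r(ℂ) be an irreducible representation of B_n of dimension r ≥ n+1. Suppose there is a nonzero vector v ∈ ℂ^r such that the line span{v} is invariant under C_1, …, C_{n−3} and under C_{n−1} (i.e., C_i v ∈ span{v} for i ∈ {1, …, n−3} ∪ {n−1}). Then there exists a nonzero complex number y such that rank(C_1 − y·I) ≤ r − n + 2. -/
open Module Submodule Matrix

/-- auxiliary descending family of vectors: `stmt6zaux n C v m = C (n-2-(m-1)) ⬝ ... ` -/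
private noncomputable def stmt6zaux {r : ℕ} (n : ℕ) (C : ℕ → Matrix (Fin r) (Fin r) ℂ)
    (v : Fin r → ℂ) : ℕ → (Fin r → ℂ)
  | 0 => v
  | m + 1 => (C (n - 2 - m)).mulVec (stmt6zaux n C v m)

/-- `stmt6z n C v j = C j ⬝ C (j+1) ⬝ ... ⬝ C (n-2) ⬝ v` for `j ≤ n-1`. -/
private noncomputable def stmt6z {r : ℕ} (n : ℕ) (C : ℕ → Matrix (Fin r) (Fin r) ℂ)
    (v : Fin r → ℂ) (j : ℕ) : Fin r → ℂ :=
  stmt6zaux n C v (n - 1 - j)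

/-- span of the orbit of `v` under the monoid generated by `C k, ..., C (n-1)`. -/
private noncomputable def stmt6U {r : ℕ} (n : ℕ) (C : ℕ → Matrix (Fin r) (Fin r) ℂ)
    (v : Fin r → ℂ) (k : ℕ) : Submodule ℂ (Fin r → ℂ) :=
  Submodule.span ℂ ((fun A => A.mulVec v) ''
    (Submonoid.closure {A | ∃ i, k ≤ i ∧ i ≤ n - 1 ∧ A = C i} : Set (Matrix (Fin r) (Fin r) ℂ)))

private theorem stmt6_unit_equiv {r : ℕ} {A : Matrix (Fin r) (Fin r) ℂ} (h : IsUnit A) :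
    ∃ e : (Fin r → ℂ) ≃ₗ[ℂ] (Fin r → ℂ), ∀ x, e x = A.mulVec x := by
  obtain ⟨u, rfl⟩ := h
  refine ⟨LinearEquiv.ofLinear (Matrix.mulVecLin (u : Matrix (Fin r) (Fin r) ℂ))
      (Matrix.mulVecLin ((u⁻¹ : (Matrix (Fin r) (Fin r) ℂ)ˣ) : Matrix (Fin r) (Fin r) ℂ)) ?_ ?_,
    fun x => rfl⟩
  · rw [← Matrix.mulVecLin_mul, Units.mul_inv, Matrix.mulVecLin_one]
  · rw [← Matrix.mulVecLin_mul, Units.inv_mul, Matrix.mulVecLin_one]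

set_option maxHeartbeats 4000000

/-- For `n ≥ 5` and an irreducible representation of `B_n` of dimension `r ≥ n+1`:
if some line `span {v}` (`v ≠ 0`) is invariant under `C 1, …, C (n-3)` and `C (n-1)`,
then there exists `y ≠ 0` with `rank (C 1 - y • I) ≤ r - n + 2`. -/
theorem stmt_6 (n r : ℕ) (hn : 5 ≤ n) (hr : n + 1 ≤ r)
    (C : ℕ → Matrix (Fin r) (Fin r) ℂ)
    (hinv : ∀ i, 1 ≤ i → i ≤ n - 1 → IsUnit (C i))
    (hcomm : ∀ i j, 1 ≤ i → i ≤ n - 1 → 1 ≤ j → j ≤ n - 1 → i + 2 ≤ j →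
      C i * C j = C j * C i)
    (hbraid : ∀ i, 1 ≤ i → i ≤ n - 2 →
      C i * C (i + 1) * C i = C (i + 1) * C i * C (i + 1))
    (hirr : ∀ p : Submodule ℂ (Fin r → ℂ),
      (∀ i, 1 ≤ i → i ≤ n - 1 → ∀ v ∈ p, (C i).mulVec v ∈ p) → p = ⊥ ∨ p = ⊤)
    (v : Fin r → ℂ) (hv : v ≠ 0)
    (hline : ∀ i, (1 ≤ i ∧ i ≤ n - 3) ∨ i = n - 1 →
      (C i).mulVec v ∈ Submodule.span ℂ {v}) :
    ∃ y : ℂ, y ≠ 0 ∧ (C 1 - y • (1 : Matrix (Fin r) (Fin r) ℂ)).rank ≤ r - n + 2 := by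
  classical
  -- pointwise versions of the relations
  have hcomm' : ∀ i j (x : Fin r → ℂ), 1 ≤ i → i + 2 ≤ j → j ≤ n - 1 →
      (C i).mulVec ((C j).mulVec x) = (C j).mulVec ((C i).mulVec x) := by
    intro i j x h1 h2 h3
    rw [Matrix.mulVec_mulVec, Matrix.mulVec_mulVec, hcomm i j h1 (by omega) (by omega) h3 h2]
  have hbraid' : ∀ i (x : Fin r → ℂ), 1 ≤ i → i ≤ n - 2 →
      (C i).mulVec ((C (i+1)).mulVec ((C i).mulVec x)) =
      (C (i+1)).mulVec ((C i).mulVec ((C (i+1)).mulVec x)) := by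
    intro i x h1 h2
    rw [Matrix.mulVec_mulVec, Matrix.mulVec_mulVec, Matrix.mulVec_mulVec, Matrix.mulVec_mulVec,
      hbraid i h1 h2]
  have hinj : ∀ i, 1 ≤ i → i ≤ n - 1 → Function.Injective ((C i).mulVec) := by
    intro i h1 h2 x y hxy
    obtain ⟨u, hu⟩ := hinv i h1 h2
    have hu1 : ((u⁻¹ : (Matrix (Fin r) (Fin r) ℂ)ˣ) : Matrix (Fin r) (Fin r) ℂ) * C i = 1 := by
      rw [← hu]; exact Units.inv_mul _
    have := congrArg (((u⁻¹ : (Matrix (Fin r) (Fin r) ℂ)ˣ) :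
      Matrix (Fin r) (Fin r) ℂ).mulVec) hxy
    rwa [Matrix.mulVec_mulVec, Matrix.mulVec_mulVec, hu1,
      Matrix.one_mulVec, Matrix.one_mulVec] at this
  -- the common eigenvalue lam on v for C 1, ..., C (n-3), and mu for C (n-1)
  obtain ⟨lam, hlam1⟩ : ∃ c : ℂ, (C 1).mulVec v = c • v := by
    obtain ⟨a, ha⟩ := Submodule.mem_span_singleton.mp (hline 1 (Or.inl ⟨le_refl 1, by omega⟩))
    exact ⟨a, ha.symm⟩
  have hscalnz : ∀ i (c : ℂ), 1 ≤ i → i ≤ n - 1 → (C i).mulVec v = c • v → c ≠ 0 := by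
    intro i c h1 h2 hc hc0
    apply hv
    apply hinj i h1 h2
    rw [hc, hc0, Matrix.mulVec_zero, zero_smul]
  have hlamne : lam ≠ 0 := hscalnz 1 lam (le_refl 1) (by omega) hlam1
  have hlam : ∀ i, 1 ≤ i → i ≤ n - 3 → (C i).mulVec v = lam • v := by
    intro i h1 h2
    induction i, h1 using Nat.le_induction with
    | base => exact hlam1
    | succ i hi ih =>
      have hihv : (C i).mulVec v = lam • v := ih (by omega)
      obtain ⟨d, hd⟩ : ∃ c : ℂ, (C (i+1)).mulVec v = c • v := by
        obtain ⟨a, ha⟩ := Submodule.mem_span_singleton.mp (hline (i+1) (Or.inl ⟨by omega, h2⟩))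
        exact ⟨a, ha.symm⟩
      have hdne : d ≠ 0 := hscalnz (i+1) d (by omega) (by omega) hd
      have hb := hbraid' i v (by omega) (by omega)
      simp only [hihv, hd, Matrix.mulVec_smul, smul_smul] at hb
      have hco := smul_left_injective ℂ hv hb
      have hzero : (lam - d) * (lam * d) = 0 := by linear_combination hco
      rcases mul_eq_zero.mp hzero with h | h
      · have : lam = d := sub_eq_zero.mp h
        rw [hd, this]
      · exact absurd h (mul_ne_zero hlamne hdne)
  obtain ⟨mu, hmu⟩ : ∃ c : ℂ, (C (n-1)).mulVec v = c • v := by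
    obtain ⟨a, ha⟩ := Submodule.mem_span_singleton.mp (hline (n-1) (Or.inr rfl))
    exact ⟨a, ha.symm⟩
  -- the vectors z j = C j ⋯ C (n-2) v,  z (n-1) = v
  set z : ℕ → (Fin r → ℂ) := stmt6z n C v with hzdef
  have hz_top : z (n-1) = v := by
    show stmt6zaux n C v (n-1-(n-1)) = v
    rw [show n-1-(n-1) = 0 from by omega]
    rfl
  have hz_step : ∀ j, j ≤ n-2 → z j = (C j).mulVec (z (j+1)) := by
    intro j hj
    show stmt6zaux n C v (n-1-j) = (C j).mulVec (stmt6zaux n C v (n-1-(j+1)))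
    rw [show n-1-j = (n-2-j)+1 from by omega, show n-1-(j+1) = n-2-j from by omega,
      show stmt6zaux n C v ((n-2-j)+1) = (C (n-2-(n-2-j))).mulVec (stmt6zaux n C v (n-2-j))
        from rfl,
      show n-2-(n-2-j) = j from by omega]
  -- C i acts by lam on z j when i + 2 ≤ j  (i ≥ 1, j ≤ n-1)
  have hlow : ∀ j i, 1 ≤ i → i + 2 ≤ j → j ≤ n-1 → (C i).mulVec (z j) = lam • z j := by
    have key : ∀ m j i, n-1-j = m → 1 ≤ i → i + 2 ≤ j → j ≤ n-1 →
        (C i).mulVec (z j) = lam • z j := by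
      intro m
      induction m with
      | zero =>
        intro j i hm h1 h2 h3
        have : j = n-1 := by omega
        subst this
        rw [hz_top]
        exact hlam i h1 (by omega)
      | succ m ih =>
        intro j i hm h1 h2 h3
        have hj2 : j ≤ n-2 := by omega
        rw [hz_step j hj2, hcomm' i j _ h1 h2 (by omega),
          ih (j+1) i (by omega) h1 (by omega) (by omega), Matrix.mulVec_smul]
    intro j i h1 h2 h3
    exact key (n-1-j) j i rfl h1 h2 h3
  -- C i acts by lam on z j when j + 1 ≤ i ≤ n-2
  have hhigh : ∀ i j, 1 ≤ j → j + 1 ≤ i → i ≤ n-2 → (C i).mulVec (z j) = lam • z j := by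
    have key : ∀ g j i, i = j + 1 + g → 1 ≤ j → i ≤ n-2 →
        (C i).mulVec (z j) = lam • z j := by
      intro g
      induction g with
      | zero =>
        intro j i hg h1 h2
        have hij : i = j + 1 := by omega
        subst hij
        have e1 : z j = (C j).mulVec (z (j+1)) := hz_step j (by omega)
        have e2 : z (j+1) = (C (j+1)).mulVec (z (j+2)) := hz_step (j+1) (by omega)
        calc (C (j+1)).mulVec (z j)
            = (C (j+1)).mulVec ((C j).mulVec ((C (j+1)).mulVec (z (j+2)))) := by
              rw [← e2, ← e1]
          _ = (C j).mulVec ((C (j+1)).mulVec ((C j).mulVec (z (j+2)))) := by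
              rw [hbraid' j _ h1 (by omega)]
          _ = (C j).mulVec ((C (j+1)).mulVec (lam • z (j+2))) := by
              rw [hlow (j+2) j h1 (by omega) (by omega)]
          _ = lam • ((C j).mulVec ((C (j+1)).mulVec (z (j+2)))) := by
              rw [Matrix.mulVec_smul, Matrix.mulVec_smul]
          _ = lam • z j := by rw [← e2, ← e1]
      | succ g ih =>
        intro j i hg h1 h2
        have e1 : z j = (C j).mulVec (z (j+1)) := hz_step j (by omega)
        calc (C i).mulVec (z j)
            = (C i).mulVec ((C j).mulVec (z (j+1))) := by rw [← e1]
          _ = (C j).mulVec ((C i).mulVec (z (j+1))) := by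
              rw [← hcomm' j i _ h1 (by omega) (by omega)]
          _ = (C j).mulVec (lam • z (j+1)) := by
              rw [ih (j+1) i (by omega) (by omega) h2]
          _ = lam • z j := by rw [Matrix.mulVec_smul, ← e1]
    intro i j h1 h2 h3
    exact key (i - (j+1)) j i (by omega) h1 h3
  -- the orbit submodules U k
  set U : ℕ → Submodule ℂ (Fin r → ℂ) := stmt6U n C v with hUdef
  have hvU : ∀ k, v ∈ U k :=
    fun k => Submodule.subset_span ⟨1, Submonoid.one_mem _, Matrix.one_mulVec v⟩
  have hUinvar : ∀ k i, k ≤ i → i ≤ n-1 → ∀ x ∈ U k, (C i).mulVec x ∈ U k := by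
    intro k i hki hin x hx
    induction hx using Submodule.span_induction with
    | mem x hxmem =>
      obtain ⟨A, hA, rfl⟩ := hxmem
      rw [Matrix.mulVec_mulVec]
      exact Submodule.subset_span ⟨C i * A,
        Submonoid.mul_mem _ (Submonoid.subset_closure ⟨i, hki, hin, rfl⟩) hA, rfl⟩
    | zero => rw [Matrix.mulVec_zero]; exact Submodule.zero_mem _
    | add x y hx1 hy1 ihx ihy => rw [Matrix.mulVec_add]; exact Submodule.add_mem _ ihx ihy
    | smul a x hx1 ihx => rw [Matrix.mulVec_smul]; exact Submodule.smul_mem _ a ihx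
  have hUmono : ∀ k, U (k+1) ≤ U k := by
    intro k
    apply Submodule.span_mono
    apply Set.image_mono
    intro A hA
    exact Submonoid.closure_mono (fun B hB => by
      obtain ⟨i, h1, h2, h3⟩ := hB; exact ⟨i, by omega, h2, h3⟩) hA
  have hUscal : ∀ k i, 1 ≤ i → i + 2 ≤ k → i ≤ n-3 → ∀ x ∈ U k, (C i).mulVec x = lam • x := by
    intro k i h1 h2 h3 x hx
    have hAcomm : ∀ A ∈ Submonoid.closure {A | ∃ j, k ≤ j ∧ j ≤ n - 1 ∧ A = C j},
        C i * A = A * C i := by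
      intro A hA
      induction hA using Submonoid.closure_induction with
      | mem A hA =>
        obtain ⟨j, hj1, hj2, rfl⟩ := hA
        exact hcomm i j h1 (by omega) (by omega) hj2 (by omega)
      | one => rw [mul_one, one_mul]
      | mul A B hA hB ihA ihB => rw [← mul_assoc, ihA, mul_assoc, ihB, ← mul_assoc]
    induction hx using Submodule.span_induction with
    | mem x hxmem =>
      obtain ⟨A, hA, rfl⟩ := hxmem
      rw [Matrix.mulVec_mulVec, hAcomm A hA, ← Matrix.mulVec_mulVec,
        hlam i h1 h3, Matrix.mulVec_smul]
    | zero => rw [Matrix.mulVec_zero, smul_zero]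
    | add x y hx1 hy1 ihx ihy => rw [Matrix.mulVec_add, ihx, ihy, smul_add]
    | smul a x hx1 ihx => rw [Matrix.mulVec_smul, ihx, smul_comm]
  have hzU : ∀ k j, k ≤ j → j ≤ n-1 → z j ∈ U k := by
    intro k
    have key : ∀ m j, n-1-j = m → k ≤ j → j ≤ n-1 → z j ∈ U k := by
      intro m
      induction m with
      | zero =>
        intro j hm hkj hj
        have : j = n-1 := by omega
        subst this
        rw [hz_top]; exact hvU k
      | succ m ih =>
        intro j hm hkj hj
        rw [hz_step j (by omega)]
        exact hUinvar k j hkj (by omega) _ (ih (j+1) (by omega) (by omega) (by omega))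
    intro j h1 h2
    exact key (n-1-j) j rfl h1 h2
  have hUtople : U (n-1) ≤ Submodule.span ℂ {v} := by
    rw [hUdef]
    apply Submodule.span_le.mpr
    rintro _ ⟨A, hA, rfl⟩
    induction hA using Submonoid.closure_induction with
    | mem A hA =>
      obtain ⟨i, h1, h2, rfl⟩ := hA
      have : i = n-1 := by omega
      subst this
      show (C (n-1)).mulVec v ∈ _
      rw [hmu]
      exact Submodule.smul_mem _ _ (Submodule.mem_span_singleton_self v)
    | one => show (1 : Matrix (Fin r) (Fin r) ℂ).mulVec v ∈ _
             rw [Matrix.one_mulVec]; exact Submodule.mem_span_singleton_self v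
    | mul A B hA hB ihA ihB =>
      show (A * B).mulVec v ∈ _
      obtain ⟨b, hb⟩ := Submodule.mem_span_singleton.mp ihB
      have hb' : b • v = B.mulVec v := hb
      have ihA' : A.mulVec v ∈ Submodule.span ℂ {v} := ihA
      show (A * B).mulVec v ∈ (Submodule.span ℂ {v} : Set (Fin r → ℂ))
      rw [← Matrix.mulVec_mulVec, ← hb', Matrix.mulVec_smul]
      exact Submodule.smul_mem _ _ ihA'
  have hUn1 : U (n-1) = Submodule.span ℂ {v} :=
    le_antisymm hUtople (Submodule.span_le.mpr (Set.singleton_subset_iff.mpr (hvU (n-1))))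
  -- C 1 is not the scalar lam everywhere
  have hCne : ¬ (∀ x : Fin r → ℂ, (C 1).mulVec x = lam • x) := by
    intro hall1
    have hall : ∀ i, 1 ≤ i → i ≤ n-1 → ∀ x, (C i).mulVec x = lam • x := by
      intro i h1 h2
      induction i, h1 using Nat.le_induction with
      | base => exact hall1
      | succ i hi ih =>
        intro x
        have ihx := ih (by omega)
        have hb := hbraid' i x (by omega) (by omega)
        rw [ihx ((C (i+1)).mulVec ((C i).mulVec x)), ihx x, Matrix.mulVec_smul,
          ihx ((C (i+1)).mulVec x), Matrix.mulVec_smul] at hb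
        have hb2 := smul_right_injective (Fin r → ℂ) hlamne hb
        have hb3 : (C (i+1)).mulVec (lam • x) = (C (i+1)).mulVec ((C (i+1)).mulVec x) := by
          rw [Matrix.mulVec_smul, hb2]
        exact (hinj (i+1) (by omega) (by omega) hb3).symm
    have hspan := hirr (Submodule.span ℂ {v}) (by
      intro i h1 h2 x hx
      rw [hall i h1 h2 x]
      exact Submodule.smul_mem _ _ hx)
    rcases hspan with hbot | htop
    · have hvmem : v ∈ Submodule.span ℂ {v} := Submodule.mem_span_singleton_self v
      rw [hbot] at hvmem
      exact hv ((Submodule.mem_bot ℂ).mp hvmem)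
    · have h1' : Module.finrank ℂ (Submodule.span ℂ {v}) = 1 := finrank_span_singleton hv
      rw [htop, finrank_top] at h1'
      rw [Module.finrank_fin_fun] at h1'
      omega
  have hUgen : ∀ k (p : Submodule ℂ (Fin r → ℂ)), v ∈ p →
      (∀ i, k ≤ i → i ≤ n-1 → ∀ x ∈ p, (C i).mulVec x ∈ p) → U k ≤ p := by
    intro k p hvp hp
    rw [hUdef]
    apply Submodule.span_le.mpr
    rintro _ ⟨A, hA, rfl⟩
    show A.mulVec v ∈ p
    suffices h : ∀ x ∈ p, A.mulVec x ∈ p from h v hvp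
    induction hA using Submonoid.closure_induction with
    | mem A hA =>
      obtain ⟨i, h1, h2, rfl⟩ := hA
      exact fun x hx => hp i h1 h2 x hx
    | one => intro x hx; rwa [Matrix.one_mulVec]
    | mul A B hA hB ihA ihB =>
      intro x hx
      rw [← Matrix.mulVec_mulVec]
      exact ihA _ (ihB x hx)
  have hstrict : ∀ k, 3 ≤ k → k ≤ n-2 → ¬ (U k ≤ U (k+1)) := by
    intro k h3 hk hle
    have hinvall : ∀ i, 1 ≤ i → i ≤ n-1 → ∀ x ∈ U (k+1), (C i).mulVec x ∈ U (k+1) := by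
      intro i h1 h2 x hx
      by_cases hik : k+1 ≤ i
      · exact hUinvar (k+1) i hik h2 x hx
      · by_cases hik2 : i = k
        · rw [hik2]
          exact hle (hUinvar k k le_rfl (by omega) x (hUmono k hx))
        · rw [hUscal (k+1) i h1 (by omega) (by omega) x hx]
          exact Submodule.smul_mem _ _ hx
    rcases hirr _ hinvall with hbot | htop
    · have := hvU (k+1)
      rw [hbot] at this
      exact hv ((Submodule.mem_bot ℂ).mp this)
    · apply hCne
      intro x
      exact hUscal (k+1) 1 le_rfl (by omega) (by omega) x (htop ▸ Submodule.mem_top)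
  -- eigenspaces
  set E : ℕ → Submodule ℂ (Fin r → ℂ) :=
    fun i => LinearMap.ker (Matrix.mulVecLin (C i - lam • 1)) with hEdef
  have hEmem : ∀ i (x : Fin r → ℂ), x ∈ E i ↔ (C i).mulVec x = lam • x := by
    intro i x
    rw [hEdef]
    simp only [LinearMap.mem_ker, Matrix.mulVecLin_apply, Matrix.sub_mulVec,
      Matrix.smul_mulVec, Matrix.one_mulVec, sub_eq_zero]
  have hU3E : U 3 ≤ E 1 := by
    intro x hx
    rw [hEmem]
    exact hUscal 3 1 le_rfl (by omega) (by omega) x hx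
  -- main contradiction setup
  by_contra hcon
  push_neg at hcon
  have hrankbig := hcon lam hlamne
  have hrn : (C 1 - lam • 1).rank + finrank ℂ (E 1) = r := by
    rw [Matrix.rank, hEdef, LinearMap.finrank_range_add_finrank_ker, Module.finrank_fin_fun]
  have hE1le : finrank ℂ (E 1) ≤ n - 3 := by omega
  -- dimensions of the chain
  have hdm : ∀ k, 3 ≤ k → k ≤ n-1 → n - k ≤ finrank ℂ (U k) := by
    have key : ∀ m k, 3 ≤ k → k ≤ n-1 → n-1-k = m → n - k ≤ finrank ℂ (U k) := by
      intro m
      induction m with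
      | zero =>
        intro k h3 h1 hm
        have : k = n-1 := by omega
        subst this
        rw [hUn1, finrank_span_singleton hv]
        omega
      | succ m ih =>
        intro k h3 h1 hm
        have hlt : U (k+1) < U k :=
          lt_of_le_of_ne (hUmono k) (fun he => hstrict k h3 (by omega) (le_of_eq he.symm))
        have hfl := Submodule.finrank_lt_finrank_of_lt hlt
        have ih' := ih (k+1) (by omega) (by omega) (by omega)
        omega
    intro k h3 h1
    exact key (n-1-k) k h3 h1 rfl
  have hd3low : n - 3 ≤ finrank ℂ (U 3) := hdm 3 le_rfl (by omega)
  have hd3E : finrank ℂ (U 3) ≤ finrank ℂ (E 1) := Submodule.finrank_mono hU3E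
  have hU3eqE : U 3 = E 1 := Submodule.eq_of_le_of_finrank_le hU3E (by omega)
  have hd3 : finrank ℂ (U 3) = n - 3 := by omega
  have hdk : ∀ k, 3 ≤ k → k ≤ n-1 → finrank ℂ (U k) = n - k := by
    intro k h3 h1
    induction k, h3 using Nat.le_induction with
    | base => exact hd3
    | succ k hk ih =>
      have ihk := ih (by omega)
      have hlt : U (k+1) < U k :=
        lt_of_le_of_ne (hUmono k) (fun he => hstrict k hk (by omega) (le_of_eq he.symm))
      have h2 := Submodule.finrank_lt_finrank_of_lt hlt
      have hlowk := hdm (k+1) (by omega) h1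
      omega
  -- U k = U (k+1) ⊔ ℂ z k for 3 ≤ k ≤ n-2
  have hspan : ∀ k, 3 ≤ k → k ≤ n-2 →
      U k = U (k+1) ⊔ Submodule.span ℂ {z k} := by
    have core : ∀ k, 3 ≤ k → k ≤ n-2 →
        (∀ x ∈ U (k+1), (C k).mulVec x ∈ U (k+1) ⊔ Submodule.span ℂ {z k}) →
        U k = U (k+1) ⊔ Submodule.span ℂ {z k} := by
      intro k h3 hk hstep
      have hzknot : z k ∉ U (k+1) := by
        intro hzk
        apply hstrict k h3 hk
        apply hUgen k (U (k+1)) (hvU (k+1))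
        intro i hki hin x hx
        rcases eq_or_lt_of_le hki with he | hlt2
        · rw [← he]
          have hsub : U (k+1) ⊔ Submodule.span ℂ {z k} ≤ U (k+1) :=
            sup_le le_rfl (Submodule.span_le.mpr (Set.singleton_subset_iff.mpr hzk))
          exact hsub (hstep x hx)
        · exact hUinvar (k+1) i (by omega) hin x hx
      have hYle : U (k+1) ⊔ Submodule.span ℂ {z k} ≤ U k :=
        sup_le (hUmono k)
          (Submodule.span_le.mpr (Set.singleton_subset_iff.mpr (hzU k k le_rfl (by omega))))
      have hlt : U (k+1) < U (k+1) ⊔ Submodule.span ℂ {z k} := by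
        refine lt_of_le_of_ne le_sup_left (fun he => hzknot ?_)
        rw [he]
        exact Submodule.mem_sup_right (Submodule.mem_span_singleton_self _)
      have hfY := Submodule.finrank_lt_finrank_of_lt hlt
      have h1 := hdk k h3 (by omega)
      have h2 := hdk (k+1) (by omega) (by omega)
      exact (Submodule.eq_of_le_of_finrank_le hYle (by omega)).symm
    have key : ∀ m k, 3 ≤ k → k ≤ n-2 → n-2-k = m →
        U k = U (k+1) ⊔ Submodule.span ℂ {z k} := by
      intro m
      induction m with
      | zero =>
        intro k h3 hk hm
        apply core k h3 hk
        intro x hx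
        have hk' : k = n-2 := by omega
        subst hk'
        have hxv : x ∈ Submodule.span ℂ {v} := hUtople (by
          rw [show n-1 = n-2+1 from by omega]; exact hx)
        obtain ⟨a, ha⟩ := Submodule.mem_span_singleton.mp hxv
        rw [← ha, Matrix.mulVec_smul]
        have hcv : (C (n-2)).mulVec v = z (n-2) := by
          rw [hz_step (n-2) le_rfl, show n-2+1 = n-1 from by omega, hz_top]
        rw [hcv]
        exact Submodule.mem_sup_right
          (Submodule.smul_mem _ _ (Submodule.mem_span_singleton_self _))
      | succ m ih =>
        intro k h3 hk hm
        apply core k h3 hk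
        intro x hx
        rw [ih (k+1) (by omega) (by omega) (by omega)] at hx
        obtain ⟨y, hy, w, hw, hsum⟩ := Submodule.mem_sup.mp hx
        obtain ⟨b, hb⟩ := Submodule.mem_span_singleton.mp hw
        rw [← hsum, Matrix.mulVec_add, ← hb, Matrix.mulVec_smul,
          hUscal (k+2) k (by omega) (by omega) (by omega) y hy,
          ← hz_step k (by omega)]
        refine Submodule.add_mem _ ?_ ?_
        · exact Submodule.mem_sup_left (Submodule.smul_mem _ _ (hUmono (k+1) hy))
        · exact Submodule.mem_sup_right
            (Submodule.smul_mem _ _ (Submodule.mem_span_singleton_self _))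
    intro k h3 hk
    exact key (n-2-k) k h3 hk rfl
  -- explicit description of U k
  have hUkspan : ∀ k, 3 ≤ k → k ≤ n-1 →
      U k = Submodule.span ℂ (insert v {x | ∃ j, k ≤ j ∧ j ≤ n-2 ∧ x = z j}) := by
    have key : ∀ m k, 3 ≤ k → k ≤ n-1 → n-1-k = m →
        U k = Submodule.span ℂ (insert v {x | ∃ j, k ≤ j ∧ j ≤ n-2 ∧ x = z j}) := by
      intro m
      induction m with
      | zero =>
        intro k h3 hk hm
        have hk' : k = n-1 := by omega
        subst hk'
        have hset : {x | ∃ j, (n-1) ≤ j ∧ j ≤ n-2 ∧ x = z j} = (∅ : Set (Fin r → ℂ)) := by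
          ext x
          simp only [Set.mem_setOf_eq, Set.mem_empty_iff_false, iff_false, not_exists]
          intro j hj
          omega
        rw [hset, LawfulSingleton.insert_empty_eq]
        exact hUn1
      | succ m ih =>
        intro k h3 hk hm
        have hsetEq : insert v {x | ∃ j, k+1 ≤ j ∧ j ≤ n-2 ∧ x = z j} ∪ {z k} =
            insert v {x | ∃ j, k ≤ j ∧ j ≤ n-2 ∧ x = z j} := by
          ext x
          simp only [Set.mem_union, Set.mem_insert_iff, Set.mem_singleton_iff,
            Set.mem_setOf_eq]
          constructor
          · rintro ((rfl | ⟨j, h1, h2, rfl⟩) | rfl)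
            · exact Or.inl rfl
            · exact Or.inr ⟨j, by omega, h2, rfl⟩
            · exact Or.inr ⟨k, le_rfl, by omega, rfl⟩
          · rintro (rfl | ⟨j, h1, h2, rfl⟩)
            · exact Or.inl (Or.inl rfl)
            · rcases eq_or_lt_of_le h1 with he | hlt
              · exact Or.inr (by rw [he])
              · exact Or.inl (Or.inr ⟨j, by omega, h2, rfl⟩)
        rw [hspan k h3 (by omega), ih (k+1) (by omega) (by omega) (by omega),
          ← Submodule.span_union, hsetEq]
    intro k h3 hk
    exact key (n-1-k) k h3 hk rfl
  -- the vectors s = C 2 z 3 and t = C 1 s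
  set sv : Fin r → ℂ := (C 2).mulVec (z 3) with hsdef
  set tv : Fin r → ℂ := (C 1).mulVec sv with htdef
  have hz2 : ∀ j, 4 ≤ j → j ≤ n-1 → (C 2).mulVec (z j) = lam • z j :=
    fun j h1 h2 => hlow j 2 (by omega) (by omega) h2
  have hC2U4 : ∀ x ∈ U 4, (C 2).mulVec x = lam • x :=
    fun x hx => hUscal 4 2 (by omega) le_rfl (by omega) x hx
  have hC1U3 : ∀ x ∈ U 3, (C 1).mulVec x = lam • x :=
    fun x hx => hUscal 3 1 le_rfl le_rfl (by omega) x hx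
  have hs3 : (C 3).mulVec sv = lam • sv := by
    have e4 : z 3 = (C 3).mulVec (z 4) := hz_step 3 (by omega)
    calc (C 3).mulVec sv
        = (C 3).mulVec ((C 2).mulVec ((C 3).mulVec (z 4))) := by rw [hsdef, e4]
      _ = (C 2).mulVec ((C 3).mulVec ((C 2).mulVec (z 4))) :=
          (hbraid' 2 (z 4) (by omega) (by omega)).symm
      _ = (C 2).mulVec ((C 3).mulVec (lam • z 4)) := by rw [hz2 4 le_rfl (by omega)]
      _ = lam • ((C 2).mulVec ((C 3).mulVec (z 4))) := by
          rw [Matrix.mulVec_smul, Matrix.mulVec_smul]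
      _ = lam • sv := by rw [← e4, ← hsdef]
  have hseig : ∀ i, 3 ≤ i → i ≤ n-2 → (C i).mulVec sv = lam • sv := by
    intro i h1 h2
    rcases eq_or_lt_of_le h1 with he | hgt
    · rw [← he]; exact hs3
    · rw [hsdef, ← hcomm' 2 i (z 3) (by omega) (by omega) (by omega),
        hhigh i 3 (by omega) (by omega) h2, Matrix.mulVec_smul]
  have ht2 : (C 2).mulVec tv = lam • tv := by
    rw [htdef, hsdef, ← hbraid' 1 (z 3) (by omega) (by omega),
      hlow 3 1 le_rfl (by omega) (by omega), Matrix.mulVec_smul, Matrix.mulVec_smul]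
  have hteig : ∀ i, 3 ≤ i → i ≤ n-2 → (C i).mulVec tv = lam • tv := by
    intro i h1 h2
    rw [htdef, ← hcomm' 1 i sv le_rfl (by omega) (by omega), hseig i h1 h2,
      Matrix.mulVec_smul]
  have hU3C2 : ∀ x ∈ U 3, (C 2).mulVec x ∈ U 3 ⊔ Submodule.span ℂ {sv} := by
    intro x hx
    rw [hUkspan 3 le_rfl (by omega)] at hx
    induction hx using Submodule.span_induction with
    | mem x hxmem =>
      rcases Set.mem_insert_iff.mp hxmem with rfl | ⟨j, h1, h2, rfl⟩
      · rw [hlam 2 (by omega) (by omega)]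
        exact Submodule.mem_sup_left (Submodule.smul_mem _ _ (hvU 3))
      · rcases eq_or_lt_of_le h1 with he | h4
        · rw [← he, ← hsdef]
          exact Submodule.mem_sup_right (Submodule.mem_span_singleton_self sv)
        · rw [hz2 j (by omega) (by omega)]
          exact Submodule.mem_sup_left
            (Submodule.smul_mem _ _ (hzU 3 j (by omega) (by omega)))
    | zero => rw [Matrix.mulVec_zero]; exact Submodule.zero_mem _
    | add a b ha hb iha ihb => rw [Matrix.mulVec_add]; exact Submodule.add_mem _ iha ihb
    | smul c a ha iha => rw [Matrix.mulVec_smul]; exact Submodule.smul_mem _ c iha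
  have hsnotU : sv ∉ U 3 := by
    intro hsmem
    have hinvall : ∀ i, 1 ≤ i → i ≤ n-1 → ∀ x ∈ U 3, (C i).mulVec x ∈ U 3 := by
      intro i h1 h2 x hx
      rcases lt_or_ge i 3 with hlt | hge
      · rcases (by omega : i = 1 ∨ i = 2) with rfl | rfl
        · rw [hC1U3 x hx]; exact Submodule.smul_mem _ _ hx
        · have hsub : U 3 ⊔ Submodule.span ℂ {sv} ≤ U 3 :=
            sup_le le_rfl (Submodule.span_le.mpr (Set.singleton_subset_iff.mpr hsmem))
          exact hsub (hU3C2 x hx)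
      · exact hUinvar 3 i hge h2 x hx
    rcases hirr _ hinvall with hbot | htop
    · exact hv ((Submodule.mem_bot ℂ).mp (hbot ▸ hvU 3))
    · exact hCne (fun x => hC1U3 x (htop ▸ Submodule.mem_top))
  have hsne : sv ≠ 0 := fun h => hsnotU (h ▸ Submodule.zero_mem _)
  have htnotU : tv ∉ U 3 := by
    intro htm
    apply hsnotU
    have hmem : lam⁻¹ • tv ∈ U 3 := Submodule.smul_mem _ _ htm
    have h1 : (C 1).mulVec (lam⁻¹ • tv) = tv := by
      rw [hC1U3 _ hmem, smul_smul, mul_inv_cancel₀ hlamne, one_smul]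
    have h2 : (C 1).mulVec sv = tv := htdef.symm
    have h3 := hinj 1 (by omega) (by omega) (h2.trans h1.symm)
    rw [h3]; exact hmem
  -- decompose w3 = C (n-1) z 3 over the basis of U 3
  set w3 : Fin r → ℂ := (C (n-1)).mulVec (z 3) with hw3def
  have hw3U : w3 ∈ U 3 := hUinvar 3 (n-1) (by omega) le_rfl _ (hzU 3 3 le_rfl (by omega))
  obtain ⟨alpha, y, hy, hw3⟩ : ∃ (α : ℂ) (y : Fin r → ℂ), y ∈ U 4 ∧ w3 = α • z 3 + y := by
    have hsetEq : (insert v {x | ∃ j, 3 ≤ j ∧ j ≤ n-2 ∧ x = z j} : Set (Fin r → ℂ)) =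
        insert (z 3) (insert v {x | ∃ j, 4 ≤ j ∧ j ≤ n-2 ∧ x = z j}) := by
      ext x
      simp only [Set.mem_insert_iff, Set.mem_setOf_eq]
      constructor
      · rintro (rfl | ⟨j, h1, h2, rfl⟩)
        · exact Or.inr (Or.inl rfl)
        · rcases eq_or_lt_of_le h1 with he | h4
          · exact Or.inl (by rw [he])
          · exact Or.inr (Or.inr ⟨j, by omega, h2, rfl⟩)
      · rintro (rfl | (rfl | ⟨j, h1, h2, rfl⟩))
        · exact Or.inr ⟨3, le_rfl, by omega, rfl⟩
        · exact Or.inl rfl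
        · exact Or.inr ⟨j, by omega, h2, rfl⟩
    have hw3mem : w3 ∈ Submodule.span ℂ
        (insert (z 3) (insert v {x | ∃ j, 4 ≤ j ∧ j ≤ n-2 ∧ x = z j})) := by
      rw [← hsetEq, ← hUkspan 3 le_rfl (by omega)]
      exact hw3U
    obtain ⟨a, yy, hyy, he⟩ := Submodule.mem_span_insert.mp hw3mem
    refine ⟨a, yy, ?_, he⟩
    rw [hUkspan 4 (by omega) (by omega)]
    exact hyy
  have hC2y : (C 2).mulVec y = lam • y := hC2U4 y hy
  have hC1y : (C 1).mulVec y = lam • y := hUscal 4 1 (by omega) (by omega) (by omega) y hy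
  have hyU3 : y ∈ U 3 := hUmono 3 hy
  have hn1s : (C (n-1)).mulVec sv = alpha • sv + lam • y := by
    rw [hsdef, ← hcomm' 2 (n-1) (z 3) (by omega) (by omega) (by omega), ← hw3def, hw3,
      Matrix.mulVec_add, Matrix.mulVec_smul, hC2y, ← hsdef]
  have hn1t : (C (n-1)).mulVec tv = alpha • tv + (lam*lam) • y := by
    rw [htdef, ← hcomm' 1 (n-1) sv le_rfl (by omega) (by omega), hn1s,
      Matrix.mulVec_add, Matrix.mulVec_smul, Matrix.mulVec_smul, hC1y, ← htdef,
      smul_smul]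
  -- generic contradiction from a small invariant subspace containing v
  have hcontra_dim : ∀ (p : Submodule ℂ (Fin r → ℂ)), v ∈ p → finrank ℂ p ≤ n-1 →
      (∀ i, 1 ≤ i → i ≤ n-1 → ∀ x ∈ p, (C i).mulVec x ∈ p) → False := by
    intro p hvp hfin hinv2
    rcases hirr p hinv2 with hbot | htop
    · exact hv ((Submodule.mem_bot ℂ).mp (hbot ▸ hvp))
    · have hfr : finrank ℂ p = r := by rw [htop, finrank_top, Module.finrank_fin_fun]
      omega
  have hfinsup : ∀ (p : Submodule ℂ (Fin r → ℂ)) (x : Fin r → ℂ),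
      finrank ℂ ↥(p ⊔ Submodule.span ℂ {x}) ≤ finrank ℂ p + 1 := by
    intro p x
    have h1 := Submodule.finrank_sup_add_finrank_inf_eq p (Submodule.span ℂ {x})
    have h2 : finrank ℂ ↥(Submodule.span ℂ ({x} : Set (Fin r → ℂ))) ≤ 1 := by
      by_cases hx : x = 0
      · rw [hx, Submodule.span_zero_singleton, finrank_bot]
        omega
      · rw [finrank_span_singleton hx]
    omega
  -- tv is not in U 3 ⊔ ℂ sv
  have hts : tv ∉ U 3 ⊔ Submodule.span ℂ {sv} := by
    intro htmem
    obtain ⟨u1, hu1, w, hw, hsum⟩ := Submodule.mem_sup.mp htmem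
    obtain ⟨c, hc⟩ := Submodule.mem_span_singleton.mp hw
    by_cases hc0 : c = 0
    · apply htnotU
      rw [← hsum, ← hc, hc0, zero_smul, add_zero]
      exact hu1
    · have hp : (C 2).mulVec sv ∈ U 3 ⊔ Submodule.span ℂ {sv} := by
        have e2 : lam • tv = (C 2).mulVec u1 + c • (C 2).mulVec sv := by
          rw [← ht2, ← hsum, Matrix.mulVec_add, ← hc, Matrix.mulVec_smul]
        have e : c • (C 2).mulVec sv = lam • tv - (C 2).mulVec u1 := by
          rw [e2]; abel
        have hmem : c • (C 2).mulVec sv ∈ U 3 ⊔ Submodule.span ℂ {sv} := by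
          rw [e]
          exact Submodule.sub_mem _ (Submodule.smul_mem _ _ htmem) (hU3C2 u1 hu1)
        have h5 := Submodule.smul_mem _ c⁻¹ hmem
        rwa [smul_smul, inv_mul_cancel₀ hc0, one_smul] at h5
      have hinvall : ∀ i, 1 ≤ i → i ≤ n-1 → ∀ x ∈ U 3 ⊔ Submodule.span ℂ {sv},
          (C i).mulVec x ∈ U 3 ⊔ Submodule.span ℂ {sv} := by
        intro i h1 h2 x hx
        obtain ⟨u2, hu2, w2, hw2, hsum2⟩ := Submodule.mem_sup.mp hx
        obtain ⟨c2, hc2⟩ := Submodule.mem_span_singleton.mp hw2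
        rw [← hsum2, ← hc2, Matrix.mulVec_add, Matrix.mulVec_smul]
        refine Submodule.add_mem _ ?_ (Submodule.smul_mem _ _ ?_)
        · rcases lt_or_ge i 3 with hlt | hge
          · rcases (by omega : i = 1 ∨ i = 2) with rfl | rfl
            · rw [hC1U3 u2 hu2]
              exact Submodule.mem_sup_left (Submodule.smul_mem _ _ hu2)
            · exact hU3C2 u2 hu2
          · exact Submodule.mem_sup_left (hUinvar 3 i hge h2 u2 hu2)
        · rcases lt_or_ge i 3 with hlt | hge
          · rcases (by omega : i = 1 ∨ i = 2) with rfl | rfl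
            · rw [← htdef]; exact htmem
            · exact hp
          · rcases lt_or_ge i (n-1) with hlt2 | hge2
            · rw [hseig i hge (by omega)]
              exact Submodule.smul_mem _ _
                (Submodule.mem_sup_right (Submodule.mem_span_singleton_self sv))
            · rw [show i = n-1 from by omega, hn1s]
              exact Submodule.add_mem _
                (Submodule.smul_mem _ _
                  (Submodule.mem_sup_right (Submodule.mem_span_singleton_self sv)))
                (Submodule.smul_mem _ _ (Submodule.mem_sup_left hyU3))
      refine hcontra_dim _ (Submodule.mem_sup_left (hvU 3)) ?_ hinvall
      have := hfinsup (U 3) sv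
      omega
  -- eigenspace conjugation
  have hEfwd : ∀ i, 1 ≤ i → i ≤ n-2 → ∀ x ∈ E i,
      (C i).mulVec ((C (i+1)).mulVec x) ∈ E (i+1) := by
    intro i h1 h2 x hx
    rw [hEmem] at hx ⊢
    rw [← hbraid' i x h1 h2, hx, Matrix.mulVec_smul, Matrix.mulVec_smul]
  have hEback : ∀ i, 1 ≤ i → i ≤ n-2 → ∀ yv ∈ E (i+1), ∃ x ∈ E i,
      yv = (C i).mulVec ((C (i+1)).mulVec x) := by
    intro i h1 h2 yv hyv
    obtain ⟨ui, hui⟩ := hinv i h1 (by omega)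
    obtain ⟨ui1, hui1⟩ := hinv (i+1) (by omega) (by omega)
    have e1 : ∀ w : Fin r → ℂ,
        (C (i+1)).mulVec (((ui1⁻¹ : (Matrix (Fin r) (Fin r) ℂ)ˣ) :
          Matrix (Fin r) (Fin r) ℂ).mulVec w) = w := by
      intro w
      rw [Matrix.mulVec_mulVec, ← hui1, Units.mul_inv, Matrix.one_mulVec]
    have e2 : ∀ w : Fin r → ℂ,
        (C i).mulVec (((ui⁻¹ : (Matrix (Fin r) (Fin r) ℂ)ˣ) :
          Matrix (Fin r) (Fin r) ℂ).mulVec w) = w := by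
      intro w
      rw [Matrix.mulVec_mulVec, ← hui, Units.mul_inv, Matrix.one_mulVec]
    set x : Fin r → ℂ := ((ui1⁻¹ : (Matrix (Fin r) (Fin r) ℂ)ˣ) :
      Matrix (Fin r) (Fin r) ℂ).mulVec (((ui⁻¹ : (Matrix (Fin r) (Fin r) ℂ)ˣ) :
      Matrix (Fin r) (Fin r) ℂ).mulVec yv) with hxdef
    have hyx : yv = (C i).mulVec ((C (i+1)).mulVec x) := by
      rw [hxdef, e1, e2]
    have hgx : ∀ w, (C (i+1)).mulVec ((C i).mulVec ((C (i+1)).mulVec w)) =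
        (C i).mulVec ((C (i+1)).mulVec ((C i).mulVec w)) :=
      fun w => (hbraid' i w h1 h2).symm
    have hx : x ∈ E i := by
      rw [hEmem]
      apply hinj (i+1) (by omega) (by omega)
      apply hinj i h1 (by omega)
      calc (C i).mulVec ((C (i+1)).mulVec ((C i).mulVec x))
          = (C (i+1)).mulVec ((C i).mulVec ((C (i+1)).mulVec x)) := (hgx x).symm
        _ = (C (i+1)).mulVec yv := by rw [← hyx]
        _ = lam • yv := (hEmem _ _).mp hyv
        _ = (C i).mulVec ((C (i+1)).mulVec (lam • x)) := by
            rw [Matrix.mulVec_smul, Matrix.mulVec_smul, ← hyx]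
    exact ⟨x, hx, hyx⟩
  have hEfin : ∀ i, 1 ≤ i → i ≤ n-1 → finrank ℂ ↥(E i) = n-3 := by
    intro i h1 h2
    induction i, h1 using Nat.le_induction with
    | base => rw [← hU3eqE]; exact hd3
    | succ i hi ih =>
      have ihi := ih (by omega)
      obtain ⟨e, he⟩ := stmt6_unit_equiv
        ((hinv i (by omega) (by omega)).mul (hinv (i+1) (by omega) (by omega)))
      have hmap : Submodule.map (e : (Fin r → ℂ) →ₗ[ℂ] (Fin r → ℂ)) (E i) = E (i+1) := by
        ext yv
        constructor
        · rintro ⟨x, hx, rfl⟩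
          have hex : (e : (Fin r → ℂ) →ₗ[ℂ] (Fin r → ℂ)) x =
              (C i).mulVec ((C (i+1)).mulVec x) := by
            show e x = _
            rw [he x, ← Matrix.mulVec_mulVec]
          rw [hex]
          exact hEfwd i (by omega) (by omega) x hx
        · intro hyv
          obtain ⟨x, hx, hyx⟩ := hEback i (by omega) (by omega) yv hyv
          refine ⟨x, hx, ?_⟩
          show e x = yv
          rw [he x, ← Matrix.mulVec_mulVec]
          exact hyx.symm
      rw [← hmap, LinearEquiv.finrank_map_eq]
      exact ihi
  have hidx : n-2+1 = n-1 := by omega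
  -- the space Xi = U 3 + ℂ sv + ℂ tv
  set Xi : Submodule ℂ (Fin r → ℂ) :=
    U 3 ⊔ Submodule.span ℂ {sv} ⊔ Submodule.span ℂ {tv} with hXidef
  have hXU3 : U 3 ≤ Xi := le_trans le_sup_left le_sup_left
  have hXs : sv ∈ Xi :=
    Submodule.mem_sup_left (Submodule.mem_sup_right (Submodule.mem_span_singleton_self sv))
  have hXt : tv ∈ Xi := Submodule.mem_sup_right (Submodule.mem_span_singleton_self tv)
  have hXdec : ∀ x ∈ Xi, ∃ u ∈ U 3, ∃ a b : ℂ, x = u + a • sv + b • tv := by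
    intro x hx
    obtain ⟨q, hq, w2, hw2, hsum2⟩ := Submodule.mem_sup.mp hx
    obtain ⟨b, hb⟩ := Submodule.mem_span_singleton.mp hw2
    obtain ⟨u, hu, w1, hw1, hsum1⟩ := Submodule.mem_sup.mp hq
    obtain ⟨a, ha⟩ := Submodule.mem_span_singleton.mp hw1
    exact ⟨u, hu, a, b, by rw [← hsum2, ← hsum1, ← hb, ← ha]⟩
  have hXfin : finrank ℂ Xi ≤ n-1 := by
    have h1 := hfinsup (U 3 ⊔ Submodule.span ℂ {sv}) tv
    have h2 := hfinsup (U 3) sv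
    rw [hXidef]
    omega
  -- invariance of Xi under C i for 3 ≤ i ≤ n-1
  have hXinv3 : ∀ i, 3 ≤ i → i ≤ n-1 → ∀ x ∈ Xi, (C i).mulVec x ∈ Xi := by
    intro i h3 h1 x hx
    obtain ⟨u, hu, a, b, rfl⟩ := hXdec x hx
    rw [Matrix.mulVec_add, Matrix.mulVec_add, Matrix.mulVec_smul, Matrix.mulVec_smul]
    refine Submodule.add_mem _ (Submodule.add_mem _ ?_ (Submodule.smul_mem _ _ ?_))
      (Submodule.smul_mem _ _ ?_)
    · exact hXU3 (hUinvar 3 i h3 h1 u hu)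
    · rcases lt_or_ge i (n-1) with hlt | hge
      · rw [hseig i h3 (by omega)]
        exact Submodule.smul_mem _ _ hXs
      · rw [show i = n-1 from by omega, hn1s]
        exact Submodule.add_mem _ (Submodule.smul_mem _ _ hXs)
          (Submodule.smul_mem _ _ (hXU3 hyU3))
    · rcases lt_or_ge i (n-1) with hlt | hge
      · rw [hteig i h3 (by omega)]
        exact Submodule.smul_mem _ _ hXt
      · rw [show i = n-1 from by omega, hn1t]
        exact Submodule.add_mem _ (Submodule.smul_mem _ _ hXt)
          (Submodule.smul_mem _ _ (hXU3 hyU3))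
  -- the span FF is exactly E (n-2)
  set FF : Set (Fin r → ℂ) :=
    insert sv (insert tv {x | ∃ j, 3 ≤ j ∧ j ≤ n-3 ∧ x = z j}) with hFFdef
  have htvE : tv ∈ E (n-2) := (hEmem _ _).mpr (hteig (n-2) (by omega) le_rfl)
  have hsvE : sv ∈ E (n-2) := (hEmem _ _).mpr (hseig (n-2) (by omega) le_rfl)
  have hFFE : Submodule.span ℂ FF ≤ E (n-2) := by
    apply Submodule.span_le.mpr
    rintro x (rfl | (rfl | ⟨j, h1, h2, rfl⟩))
    · exact hsvE
    · exact htvE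
    · exact (hEmem _ _).mpr (hhigh (n-2) j (by omega) (by omega) le_rfl)
  have hFFX : Submodule.span ℂ FF ≤ Xi := by
    apply Submodule.span_le.mpr
    rintro x (rfl | (rfl | ⟨j, h1, h2, rfl⟩))
    · exact hXs
    · exact hXt
    · exact hXU3 (hzU 3 j (by omega) (by omega))
  have hXle2 : Xi ≤ Submodule.span ℂ FF ⊔ Submodule.span ℂ {v, z (n-2)} := by
    rw [hXidef]
    refine sup_le (sup_le ?_ ?_) ?_
    · rw [hUkspan 3 le_rfl (by omega)]
      apply Submodule.span_le.mpr
      rintro x (rfl | ⟨j, h1, h2, rfl⟩)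
      · exact Submodule.mem_sup_right (Submodule.subset_span (Set.mem_insert _ _))
      · rcases lt_or_ge j (n-2) with hlt | hge
        · exact Submodule.mem_sup_left (Submodule.subset_span
            (Set.mem_insert_iff.mpr (Or.inr (Set.mem_insert_iff.mpr
              (Or.inr ⟨j, h1, by omega, rfl⟩)))))
        · rw [show j = n-2 from by omega]
          exact Submodule.mem_sup_right (Submodule.subset_span
            (Set.mem_insert_iff.mpr (Or.inr rfl)))
    · exact le_trans (Submodule.span_le.mpr (Set.singleton_subset_iff.mpr
        (Submodule.subset_span (Set.mem_insert _ _)))) le_sup_left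
    · exact le_trans (Submodule.span_le.mpr (Set.singleton_subset_iff.mpr
        (Submodule.subset_span (Set.mem_insert_iff.mpr (Or.inr
          (Set.mem_insert _ _)))))) le_sup_left
  have hXlow : n-1 ≤ finrank ℂ Xi := by
    have hlt1 : U 3 < U 3 ⊔ Submodule.span ℂ {sv} := by
      refine lt_of_le_of_ne le_sup_left (fun he => hsnotU ?_)
      rw [he]
      exact Submodule.mem_sup_right (Submodule.mem_span_singleton_self sv)
    have hlt2 : U 3 ⊔ Submodule.span ℂ {sv} < Xi := by
      refine lt_of_le_of_ne le_sup_left (fun he => hts ?_)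
      rw [he]
      exact Submodule.mem_sup_right (Submodule.mem_span_singleton_self tv)
    have hf1 := Submodule.finrank_lt_finrank_of_lt hlt1
    have hf2 := Submodule.finrank_lt_finrank_of_lt hlt2
    omega
  have hpairfin : finrank ℂ ↥(Submodule.span ℂ ({v, z (n-2)} : Set (Fin r → ℂ))) ≤ 2 := by
    rw [show ({v, z (n-2)} : Set (Fin r → ℂ)) = insert v {z (n-2)} from rfl,
      Submodule.span_insert]
    have h1 : finrank ℂ ↥(Submodule.span ℂ ({v} : Set (Fin r → ℂ)) ⊔
        Submodule.span ℂ {z (n-2)}) ≤ finrank ℂ ↥(Submodule.span ℂ ({v} : Set (Fin r → ℂ))) + 1 :=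
      hfinsup _ _
    have h2 : finrank ℂ ↥(Submodule.span ℂ ({v} : Set (Fin r → ℂ))) = 1 :=
      finrank_span_singleton hv
    omega
  have hFFfin : n-3 ≤ finrank ℂ ↥(Submodule.span ℂ FF) := by
    have h1 := Submodule.finrank_sup_add_finrank_inf_eq (Submodule.span ℂ FF)
      (Submodule.span ℂ ({v, z (n-2)} : Set (Fin r → ℂ)))
    have h2 := Submodule.finrank_mono hXle2
    omega
  have hEn2span : Submodule.span ℂ FF = E (n-2) :=
    Submodule.eq_of_le_of_finrank_le hFFE
      (by rw [hEfin (n-2) (by omega) (by omega)]; exact hFFfin)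
  have hEn2X : E (n-2) ≤ Xi := by rw [← hEn2span]; exact hFFX
  have hE2inv1 : ∀ x ∈ E (n-2), (C 1).mulVec x ∈ E (n-2) := by
    intro x hx
    rw [hEmem] at hx ⊢
    rw [← hcomm' 1 (n-2) x le_rfl (by omega) (by omega), hx, Matrix.mulVec_smul]
  have hgX : (C 1).mulVec tv ∈ Xi := hEn2X (hE2inv1 tv htvE)
  have hEbackn : ∀ yv ∈ E (n-1), ∃ x ∈ E (n-2),
      yv = (C (n-2)).mulVec ((C (n-1)).mulVec x) := by
    intro yv hyv
    have h6 := hEback (n-2) (by omega) le_rfl yv (by rw [hidx]; exact hyv)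
    rw [hidx] at h6
    exact h6
  have hEn1X : E (n-1) ≤ Xi := by
    intro yv hyv
    obtain ⟨x, hx, rfl⟩ := hEbackn yv hyv
    exact hXinv3 (n-2) (by omega) (by omega) _
      (hXinv3 (n-1) (by omega) le_rfl _ (hEn2X hx))
  have hE1inv2 : ∀ x ∈ E (n-1), (C 2).mulVec x ∈ E (n-1) := by
    intro x hx
    rw [hEmem] at hx ⊢
    rw [← hcomm' 2 (n-1) x (by omega) (by omega) le_rfl, hx, Matrix.mulVec_smul]
  have hpX : (C 2).mulVec sv ∈ Xi := by
    by_cases halpha : alpha = 0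
    · exfalso
      have hn1FF : ∀ x ∈ Submodule.span ℂ FF, (C (n-1)).mulVec x ∈ U 3 := by
        intro x hx
        induction hx using Submodule.span_induction with
        | mem x hxm =>
          rcases hxm with rfl | (rfl | ⟨j, hj1, hj2, rfl⟩)
          · rw [hn1s, halpha, zero_smul, zero_add]
            exact Submodule.smul_mem _ _ hyU3
          · rw [hn1t, halpha, zero_smul, zero_add]
            exact Submodule.smul_mem _ _ hyU3
          · exact hUinvar 3 (n-1) (by omega) le_rfl _ (hzU 3 j (by omega) (by omega))
        | zero => rw [Matrix.mulVec_zero]; exact Submodule.zero_mem _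
        | add a b ha hb iha ihb =>
          rw [Matrix.mulVec_add]; exact Submodule.add_mem _ iha ihb
        | smul c a ha iha =>
          rw [Matrix.mulVec_smul]; exact Submodule.smul_mem _ c iha
      have hE1U : E (n-1) ≤ U 3 := by
        intro yv hyv
        obtain ⟨x, hx, hyeq⟩ := hEbackn yv hyv
        rw [← hEn2span] at hx
        rw [hyeq]
        exact hUinvar 3 (n-2) (by omega) (by omega) _ (hn1FF x hx)
      have hEU : E (n-1) = U 3 :=
        Submodule.eq_of_le_of_finrank_le hE1U
          (by rw [hEfin (n-1) (by omega) le_rfl]; omega)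
      apply hsnotU
      have hz3E : z 3 ∈ E (n-1) := by rw [hEU]; exact hzU 3 3 le_rfl (by omega)
      have h6 := hE1inv2 (z 3) hz3E
      rw [hEU] at h6
      rw [← hsdef] at h6
      exact h6
    · have hxstar : (C (n-2)).mulVec ((C (n-1)).mulVec sv) ∈ E (n-1) := by
        have h6 := hEfwd (n-2) (by omega) le_rfl sv hsvE
        rw [hidx] at h6
        exact h6
      have hu1U : (C (n-2)).mulVec y ∈ U 3 := hUinvar 3 (n-2) (by omega) (by omega) y hyU3
      have hxstar_eq : (C (n-2)).mulVec ((C (n-1)).mulVec sv) =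
          (alpha*lam) • sv + lam • ((C (n-2)).mulVec y) := by
        rw [hn1s, Matrix.mulVec_add, Matrix.mulVec_smul, Matrix.mulVec_smul,
          hseig (n-2) (by omega) le_rfl, smul_smul]
      have hc2xstar : (C 2).mulVec ((C (n-2)).mulVec ((C (n-1)).mulVec sv)) ∈ Xi :=
        hEn1X (hE1inv2 _ hxstar)
      rw [hxstar_eq, Matrix.mulVec_add, Matrix.mulVec_smul, Matrix.mulVec_smul] at hc2xstar
      have hc2u1 : (C 2).mulVec ((C (n-2)).mulVec y) ∈ Xi :=
        (sup_le hXU3 (Submodule.span_le.mpr (Set.singleton_subset_iff.mpr hXs)))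
          (hU3C2 _ hu1U)
      have hsm : (alpha*lam) • ((C 2).mulVec sv) ∈ Xi := by
        have h8 := Submodule.sub_mem _ hc2xstar (Submodule.smul_mem _ lam hc2u1)
        rwa [add_sub_cancel_right] at h8
      have hne : (alpha*lam) ≠ 0 := mul_ne_zero halpha hlamne
      have h7 := Submodule.smul_mem _ (alpha*lam)⁻¹ hsm
      rwa [smul_smul, inv_mul_cancel₀ hne, one_smul] at h7
  -- Xi is invariant under all generators: final contradiction
  apply hcontra_dim Xi (hXU3 (hvU 3)) hXfin
  intro i h1 h2 x hx
  rcases lt_or_ge i 3 with hlt | hge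
  · obtain ⟨u, hu, a, b, rfl⟩ := hXdec x hx
    rw [Matrix.mulVec_add, Matrix.mulVec_add, Matrix.mulVec_smul, Matrix.mulVec_smul]
    rcases (by omega : i = 1 ∨ i = 2) with rfl | rfl
    · refine Submodule.add_mem _ (Submodule.add_mem _ ?_ (Submodule.smul_mem _ _ ?_))
        (Submodule.smul_mem _ _ ?_)
      · rw [hC1U3 u hu]; exact Submodule.smul_mem _ _ (hXU3 hu)
      · rw [← htdef]; exact hXt
      · exact hgX
    · refine Submodule.add_mem _ (Submodule.add_mem _ ?_ (Submodule.smul_mem _ _ ?_))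
        (Submodule.smul_mem _ _ ?_)
      · exact (sup_le hXU3 (Submodule.span_le.mpr (Set.singleton_subset_iff.mpr hXs)))
          (hU3C2 u hu)
      · exact hpX
      · rw [ht2]; exact Submodule.smul_mem _ _ hXt
  · exact hXinv3 i hge h2 x hx
end

section
/- Let n ≥ 10 and let C_1, …, C_{n−1} ∈ GL_r(ℂ) be an irreducible representation of B_n of dimension r with n+1 ≤ r ≤ 2n−9. Then there exists an eigenvalue λ of C_{n−1} whose largest Jordan block occurs with multiplicity d ≤ n−5; that is, there exist λ ∈ ℂ and a positive integer m such that ker((C_{n−1} − λI)^m) ≠ ker((C_{n−1} − λI)^{m−1}), ker((C_{n−1} − λI)^{m+1}) = ker((C_{n−1} − λI)^m), and dim ker((C_{n−1} − λI)^m) − dim ker((C_{n−1} − λI)^{m−1}) ≤ n−5. -/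
open Module LinearMap

private lemma aux_ker_pow_le {K V : Type*} [Field K] [AddCommGroup V] [Module K V]
    (g : Module.End K V) (a b : ℕ) :
    LinearMap.ker (g ^ a) ≤ LinearMap.ker (g ^ (a + b)) := by
  intro x hx
  rw [LinearMap.mem_ker] at hx ⊢
  rw [add_comm, pow_add, Module.End.mul_apply, hx, map_zero]

private lemma aux_finrank_ker_pow_succ {K V : Type*} [Field K] [AddCommGroup V] [Module K V]
    [FiniteDimensional K V] (g : Module.End K V) (m : ℕ) :
    finrank K (LinearMap.ker (g ^ (m + 1))) ≤
      finrank K (LinearMap.ker (g ^ m)) + finrank K (LinearMap.ker g) := by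
  set W := LinearMap.ker (g ^ (m + 1)) with hW
  let φ : W →ₗ[K] V := (g ^ m).comp W.subtype
  have hle : LinearMap.ker (g ^ m) ≤ W := by
    simpa using aux_ker_pow_le g m 1
  have hkerφ : LinearMap.ker φ = Submodule.comap W.subtype (LinearMap.ker (g ^ m)) :=
    LinearMap.ker_comp _ _
  have e1 : finrank K (LinearMap.ker φ) = finrank K (LinearMap.ker (g ^ m)) := by
    rw [hkerφ]
    exact (Submodule.comapSubtypeEquivOfLe hle).finrank_eq
  have hrange : LinearMap.range φ ≤ LinearMap.ker g := by
    rintro y ⟨x, rfl⟩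
    rw [LinearMap.mem_ker]
    have hx : (g ^ (m + 1)) (x : V) = 0 := x.2
    have : g (φ x) = (g ^ (m + 1)) (x : V) := by
      rw [pow_succ', Module.End.mul_apply]; rfl
    rw [this, hx]
  have e2 : finrank K (LinearMap.range φ) ≤ finrank K (LinearMap.ker g) :=
    Submodule.finrank_mono hrange
  have e3 : finrank K (LinearMap.range φ) + finrank K (LinearMap.ker φ) = finrank K W :=
    LinearMap.finrank_range_add_finrank_ker φ
  omega

private lemma aux_min_stab {K V : Type*} [Field K] [AddCommGroup V] [Module K V]
    [FiniteDimensional K V] (g : Module.End K V) (hg : LinearMap.ker g ≠ ⊥) :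
    ∃ m : ℕ, 1 ≤ m ∧ m ≤ finrank K V ∧
      LinearMap.ker (g ^ m) ≠ LinearMap.ker (g ^ (m - 1)) ∧
      LinearMap.ker (g ^ (m + 1)) = LinearMap.ker (g ^ m) ∧
      ∀ k, m ≤ k → LinearMap.ker (g ^ k) = LinearMap.ker (g ^ m) := by
  classical
  have hwit : LinearMap.ker (g ^ (finrank K V + 1)) = LinearMap.ker (g ^ finrank K V) :=
    Module.End.ker_pow_eq_ker_pow_finrank_of_le (Nat.le_succ _)
  have hexists : ∃ m, LinearMap.ker (g ^ (m + 1)) = LinearMap.ker (g ^ m) :=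
    ⟨finrank K V, hwit⟩
  set m := Nat.find hexists with hm
  have hspec : LinearMap.ker (g ^ (m + 1)) = LinearMap.ker (g ^ m) := Nat.find_spec hexists
  have hm1 : 1 ≤ m := by
    by_contra h
    have hm0 : m = 0 := by omega
    rw [hm0, pow_one, pow_zero] at hspec
    apply hg
    rw [hspec]
    exact LinearMap.ker_id
  have hmle : m ≤ finrank K V := Nat.find_le hwit
  have hne : LinearMap.ker (g ^ m) ≠ LinearMap.ker (g ^ (m - 1)) := by
    have hmin := Nat.find_min hexists (show m - 1 < m by omega)
    rw [Nat.sub_add_cancel hm1] at hmin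
    exact hmin
  have hconst : ∀ k, m ≤ k → LinearMap.ker (g ^ k) = LinearMap.ker (g ^ m) := by
    intro k hk
    have h := Module.End.ker_pow_constant hspec.symm (k - m)
    rw [Nat.add_sub_cancel' hk] at h
    exact h.symm
  exact ⟨m, hm1, hmle, hne, hspec, hconst⟩

/-- For `n ≥ 10` and an irreducible representation of `B_n` of dimension `r` with
`n+1 ≤ r ≤ 2n-9`, there is an eigenvalue `λ` of `C (n-1)` whose largest Jordan block
occurs with multiplicity at most `n - 5`. -/
theorem stmt_8 (n r : ℕ) (hn : 10 ≤ n) (hr₁ : n + 1 ≤ r) (hr₂ : r ≤ 2 * n - 9)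
    (C : ℕ → Matrix (Fin r) (Fin r) ℂ)
    (hinv : ∀ i, 1 ≤ i → i ≤ n - 1 → IsUnit (C i))
    (hcomm : ∀ i j, 1 ≤ i → i ≤ n - 1 → 1 ≤ j → j ≤ n - 1 → i + 2 ≤ j →
      C i * C j = C j * C i)
    (hbraid : ∀ i, 1 ≤ i → i ≤ n - 2 →
      C i * C (i + 1) * C i = C (i + 1) * C i * C (i + 1))
    (hirr : ∀ p : Submodule ℂ (Fin r → ℂ),
      (∀ i, 1 ≤ i → i ≤ n - 1 → ∀ v ∈ p, (C i).mulVec v ∈ p) → p = ⊥ ∨ p = ⊤) :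
    ∃ (l : ℂ) (m : ℕ), 1 ≤ m ∧
      LinearMap.ker (((C (n - 1) - l • (1 : Matrix (Fin r) (Fin r) ℂ)) ^ m).mulVecLin) ≠
        LinearMap.ker (((C (n - 1) - l • (1 : Matrix (Fin r) (Fin r) ℂ)) ^ (m - 1)).mulVecLin) ∧
      LinearMap.ker (((C (n - 1) - l • (1 : Matrix (Fin r) (Fin r) ℂ)) ^ (m + 1)).mulVecLin) =
        LinearMap.ker (((C (n - 1) - l • (1 : Matrix (Fin r) (Fin r) ℂ)) ^ m).mulVecLin) ∧
      Module.finrank ℂ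
          (LinearMap.ker (((C (n - 1) - l • (1 : Matrix (Fin r) (Fin r) ℂ)) ^ m).mulVecLin)) -
        Module.finrank ℂ
          (LinearMap.ker (((C (n - 1) - l • (1 : Matrix (Fin r) (Fin r) ℂ)) ^ (m - 1)).mulVecLin))
        ≤ n - 5 := by
  classical
  by_contra hcon
  push_neg at hcon
  have hr0 : 0 < r := by omega
  haveI : Nonempty (Fin r) := Fin.pos_iff_nonempty.mp hr0
  have hfr : finrank ℂ (Fin r → ℂ) = r := by simp
  set A := C (n - 1) with hA
  set f : Module.End ℂ (Fin r → ℂ) := Matrix.toLinAlgEquiv' A with hf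
  -- translation between matrix kernels and endomorphism kernels
  have hker : ∀ (l : ℂ) (m : ℕ),
      LinearMap.ker (((A - l • (1 : Matrix (Fin r) (Fin r) ℂ)) ^ m).mulVecLin) =
        LinearMap.ker ((f - l • 1) ^ m) := by
    intro l m
    have h1 : ((A - l • (1 : Matrix (Fin r) (Fin r) ℂ)) ^ m).mulVecLin
        = Matrix.toLinAlgEquiv' ((A - l • (1 : Matrix (Fin r) (Fin r) ℂ)) ^ m) := rfl
    rw [h1, map_pow, map_sub, map_smul, map_one]
  -- scalar case is impossible
  have hscalar : ∀ l : ℂ, A ≠ l • (1 : Matrix (Fin r) (Fin r) ℂ) := by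
    intro l hAl
    have hl0 : l ≠ 0 := by
      intro h0
      have hu := hinv (n - 1) (by omega) le_rfl
      rw [← hA, hAl, h0, zero_smul] at hu
      exact not_isUnit_zero hu
    have key : ∀ j i, 1 ≤ i → i + j = n - 1 → C i = l • (1 : Matrix (Fin r) (Fin r) ℂ) := by
      intro j
      induction j with
      | zero =>
        intro i hi1 hi2
        have : i = n - 1 := by omega
        rw [this, ← hA, hAl]
      | succ j ih =>
        intro i hi1 hi2
        have hih : C (i + 1) = l • (1 : Matrix (Fin r) (Fin r) ℂ) := by
          apply ih (i + 1) (by omega) (by omega)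
        have hile : i ≤ n - 2 := by omega
        have hb := hbraid i hi1 hile
        rw [hih] at hb
        have hb' : l • (C i * C i) = (l * l) • C i := by
          calc l • (C i * C i) = C i * (l • (1 : Matrix (Fin r) (Fin r) ℂ)) * C i := by
                rw [mul_smul_comm, mul_one, smul_mul_assoc]
            _ = l • (1 : Matrix (Fin r) (Fin r) ℂ) * C i * (l • (1 : Matrix (Fin r) (Fin r) ℂ)) :=
                hb
            _ = (l * l) • C i := by
                simp [smul_mul_assoc, mul_smul_comm, smul_smul]
        have hb'' : C i * C i = l • C i := by
          rw [mul_smul] at hb'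
          exact smul_right_injective _ hl0 hb'
        have hu := hinv i hi1 (by omega)
        have heq : C i * C i = (l • (1 : Matrix (Fin r) (Fin r) ℂ)) * C i := by
          rw [smul_mul_assoc, one_mul]; exact hb''
        exact hu.mul_right_cancel heq
    -- every C i (1 ≤ i ≤ n-1) is the scalar l, so every submodule is invariant
    have hCall : ∀ i, 1 ≤ i → i ≤ n - 1 → C i = l • (1 : Matrix (Fin r) (Fin r) ℂ) := by
      intro i hi1 hi2
      exact key (n - 1 - i) i hi1 (by omega)
    set i0 : Fin r := ⟨0, by omega⟩ with hi0
    set i1 : Fin r := ⟨1, by omega⟩ with hi1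
    have hi01 : i1 ≠ i0 := by
      intro h
      have := congrArg Fin.val h
      simp [hi0, hi1] at this
    set e0 : Fin r → ℂ := Pi.single i0 1 with he0
    set p : Submodule ℂ (Fin r → ℂ) := Submodule.span ℂ {e0} with hp
    have hpinv : ∀ i, 1 ≤ i → i ≤ n - 1 → ∀ v ∈ p, (C i).mulVec v ∈ p := by
      intro i hi1' hi2 v hv
      rw [hCall i hi1' hi2]
      have : (l • (1 : Matrix (Fin r) (Fin r) ℂ)).mulVec v = l • v := by
        rw [Matrix.smul_mulVec, Matrix.one_mulVec]
      rw [this]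
      exact p.smul_mem l hv
    rcases hirr p hpinv with hbot | htop
    · have hmem : e0 ∈ p := Submodule.mem_span_singleton_self e0
      rw [hbot] at hmem
      have he00 : e0 ≠ 0 := by
        intro h
        have h2 := congrFun h i0
        rw [he0, Pi.single_eq_same] at h2
        exact one_ne_zero (h2.trans rfl)
      exact he00 ((Submodule.mem_bot ℂ).mp hmem)
    · have hmem : Pi.single i1 (1 : ℂ) ∈ p := by rw [htop]; exact Submodule.mem_top
      obtain ⟨c, hc⟩ := Submodule.mem_span_singleton.mp hmem
      have := congrFun hc i1
      simp only [he0, Pi.smul_apply, Pi.single_eq_of_ne hi01, Pi.single_eq_same,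
        smul_eq_mul, mul_zero] at this
      exact one_ne_zero this.symm
  -- main spectral analysis
  haveI : Nontrivial (Fin r → ℂ) := Function.nontrivial
  -- every eigenvalue has large multiplicity data
  have hbig : ∀ l : ℂ, LinearMap.ker (f - l • 1) ≠ ⊥ →
      n - 4 ≤ finrank ℂ (f.maxGenEigenspace l) := by
    intro l hl
    obtain ⟨m, hm1, hmle, hne, hstab, hconst⟩ := aux_min_stab (f - l • 1) hl
    have hd := hcon l m hm1 (by rw [hker, hker]; exact hne) (by rw [hker, hker]; exact hstab)
    rw [hker, hker] at hd
    have hle1 : LinearMap.ker ((f - l • 1) ^ (m - 1)) ≤ LinearMap.ker ((f - l • 1) ^ m) := by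
      have h := aux_ker_pow_le (f - l • 1) (m - 1) 1
      rwa [Nat.sub_add_cancel hm1] at h
    have hle2 : LinearMap.ker ((f - l • 1) ^ m) ≤ f.maxGenEigenspace l := by
      intro x hx
      rw [Module.End.mem_maxGenEigenspace]
      exact ⟨m, hx⟩
    have h1 : finrank ℂ (LinearMap.ker ((f - l • 1) ^ m)) ≤ finrank ℂ (f.maxGenEigenspace l) :=
      Submodule.finrank_mono hle2
    omega
  -- existence of an eigenvalue
  obtain ⟨l₀, hl₀⟩ := Module.End.exists_eigenvalue f
  have heigker : ∀ μ : ℂ, f.eigenspace μ = LinearMap.ker (f - μ • 1) := by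
    intro μ
    ext x
    rw [Module.End.mem_eigenspace_iff, LinearMap.mem_ker, LinearMap.sub_apply,
      LinearMap.smul_apply, Module.End.one_apply, sub_eq_zero]
  have hl₀ker : LinearMap.ker (f - l₀ • 1) ≠ ⊥ := by
    rw [← heigker]; exact hl₀
  -- uniqueness of the eigenvalue
  have huniq : ∀ μ : ℂ, LinearMap.ker (f - μ • 1) ≠ ⊥ → μ = l₀ := by
    intro μ hμ
    by_contra hne
    have hdisj : Disjoint (f.maxGenEigenspace μ) (f.maxGenEigenspace l₀) :=
      (Module.End.independent_maxGenEigenspace f).pairwiseDisjoint hne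
    have hsum := Submodule.finrank_sup_add_finrank_inf_eq
      (f.maxGenEigenspace μ) (f.maxGenEigenspace l₀)
    rw [disjoint_iff.mp hdisj, finrank_bot, add_zero] at hsum
    have hle := Submodule.finrank_le (f.maxGenEigenspace μ ⊔ f.maxGenEigenspace l₀)
    have h1 := hbig μ hμ
    have h2 := hbig l₀ hl₀ker
    rw [hfr] at hle
    omega
  -- the single generalized eigenspace is everything
  have htop : f.maxGenEigenspace l₀ = ⊤ := by
    refine le_antisymm le_top ?_
    rw [← Module.End.iSup_maxGenEigenspace_eq_top f]
    apply iSup_le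
    intro μ
    by_cases hμ : μ = l₀
    · rw [hμ]
    · suffices h : f.maxGenEigenspace μ = ⊥ by rw [h]; exact bot_le
      by_contra hb
      rw [Module.End.maxGenEigenspace_eq_genEigenspace_finrank] at hb
      have hev : f.HasEigenvalue μ :=
        Module.End.hasEigenvalue_of_hasGenEigenvalue
          (Module.End.hasGenEigenvalue_iff.mpr hb)
      have hkerne : LinearMap.ker (f - μ • 1) ≠ ⊥ := by rw [← heigker]; exact hev
      exact hμ (huniq μ hkerne)
  have hkertop : LinearMap.ker ((f - l₀ • 1) ^ finrank ℂ (Fin r → ℂ)) = ⊤ := by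
    have h := htop
    rw [Module.End.maxGenEigenspace_eq_genEigenspace_finrank,
      Module.End.genEigenspace_nat] at h
    exact h
  obtain ⟨m, hm1, hmle, hne, hstab, hconst⟩ := aux_min_stab (f - l₀ • 1) hl₀ker
  have hkm : LinearMap.ker ((f - l₀ • 1) ^ m) = ⊤ := by
    rw [← hconst (finrank ℂ (Fin r → ℂ)) hmle]
    exact hkertop
  rcases eq_or_lt_of_le hm1 with hm1' | hm2
  · -- m = 1 : f is scalar, contradiction
    have hker1 : LinearMap.ker (f - l₀ • 1) = ⊤ := by
      have h := hkm
      rw [← hm1', pow_one] at h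
      exact h
    have hf0 : f - l₀ • 1 = 0 := LinearMap.ker_eq_top.mp hker1
    have hfl : f = l₀ • 1 := by rwa [sub_eq_zero] at hf0
    apply hscalar l₀
    apply Matrix.toLinAlgEquiv'.injective
    rw [← hf, hfl, map_smul, map_one]
  · -- m ≥ 2 : dimension count contradiction
    have hd := hcon l₀ m hm1 (by rw [hker, hker]; exact hne) (by rw [hker, hker]; exact hstab)
    rw [hker, hker] at hd
    have hfrm : finrank ℂ (LinearMap.ker ((f - l₀ • 1) ^ m)) = r := by
      rw [hkm, finrank_top, hfr]
    have hkey : finrank ℂ (LinearMap.ker ((f - l₀ • 1) ^ m)) ≤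
        finrank ℂ (LinearMap.ker ((f - l₀ • 1) ^ (m - 1))) +
          finrank ℂ (LinearMap.ker (f - l₀ • 1)) := by
      have h := aux_finrank_ker_pow_succ (f - l₀ • 1) (m - 1)
      rwa [Nat.sub_add_cancel hm1] at h
    have hker1le : LinearMap.ker (f - l₀ • 1) ≤ LinearMap.ker ((f - l₀ • 1) ^ (m - 1)) := by
      have h := aux_ker_pow_le (f - l₀ • 1) 1 (m - 2)
      rw [pow_one] at h
      have heq : 1 + (m - 2) = m - 1 := by omega
      rwa [heq] at h
    have h2 : finrank ℂ (LinearMap.ker (f - l₀ • 1)) ≤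
        finrank ℂ (LinearMap.ker ((f - l₀ • 1) ^ (m - 1))) :=
      Submodule.finrank_mono hker1le
    omega
end

section
/- Let n ≥ 3 and let C_1, …, C_{n−1} ∈ GL_r(ℂ) be an irreducible representation of B_n of dimension r ≥ n+1, and set T = C_1 C_2 ⋯ C_{n−1}. Suppose v ∈ ℂ^r is a nonzero vector such that C_i v ∈ span{v} for every i ∈ {1, …, n−3} ∪ {n−1}. Then the n−2 vectors v, Tv, T²v, …, T^{n−3}v are linearly independent. -/
/-- For `n ≥ 3` and an irreducible representation of `B_n` of dimension `r ≥ n+1`,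
with `T = C 1 * C 2 * ⋯ * C (n-1)`: if the line spanned by a nonzero vector `v` is
invariant under `C 1, …, C (n-3)` and `C (n-1)`, then the `n-2` vectors
`v, Tv, T²v, …, T^{n-3} v` are linearly independent. -/
theorem stmt_9 (n r : ℕ) (hn : 3 ≤ n) (hr : n + 1 ≤ r)
    (C : ℕ → Matrix (Fin r) (Fin r) ℂ)
    (hinv : ∀ i, 1 ≤ i → i ≤ n - 1 → IsUnit (C i))
    (hcomm : ∀ i j, 1 ≤ i → i ≤ n - 1 → 1 ≤ j → j ≤ n - 1 → i + 2 ≤ j →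
      C i * C j = C j * C i)
    (hbraid : ∀ i, 1 ≤ i → i ≤ n - 2 →
      C i * C (i + 1) * C i = C (i + 1) * C i * C (i + 1))
    (hirr : ∀ p : Submodule ℂ (Fin r → ℂ),
      (∀ i, 1 ≤ i → i ≤ n - 1 → ∀ v ∈ p, (C i).mulVec v ∈ p) → p = ⊥ ∨ p = ⊤)
    (T : Matrix (Fin r) (Fin r) ℂ)
    (hT : T = (List.map (fun i => C (i + 1)) (List.range (n - 1))).prod)
    (v : Fin r → ℂ) (hv : v ≠ 0)
    (hline : ∀ i, (1 ≤ i ∧ i ≤ n - 3) ∨ i = n - 1 →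
      (C i).mulVec v ∈ Submodule.span ℂ {v}) :
    LinearIndependent ℂ (fun i : Fin (n - 2) => (T ^ (i : ℕ)).mulVec v) := by
  classical
  -- T is a unit, hence all its powers act injectively
  have hTunit : IsUnit T := by
    rw [hT]
    apply List.prod_isUnit
    intro x hx
    simp only [List.mem_map, List.mem_range] at hx
    obtain ⟨i, hi, rfl⟩ := hx
    exact hinv (i + 1) (by omega) (by omega)
  have hTinj : ∀ e : ℕ, Function.Injective (T ^ e).mulVec :=
    fun e => Matrix.mulVec_injective_iff_isUnit.mpr (hTunit.pow e)
  -- key conjugation relation: C (i+1) * T = T * C i for 1 ≤ i ≤ n-2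
  have key : ∀ i, 1 ≤ i → i ≤ n - 2 → C (i + 1) * T = T * C i := by
    intro i hi1 hi2
    obtain ⟨p, rfl⟩ : ∃ p, i = p + 1 := ⟨i - 1, by omega⟩
    obtain ⟨q, hpq⟩ : ∃ q, n - 1 = p + 2 + q := ⟨n - 1 - (p + 2), by omega⟩
    set A := (List.map (fun t => C (t + 1)) (List.range p)).prod with hA_def
    set B := (List.map (fun t => C (p + 2 + t + 1)) (List.range q)).prod with hB_def
    have hTsplit : T = A * (C (p + 1) * (C (p + 2) * B)) := by
      rw [hT, hpq, List.range_add, List.range_add, List.map_append, List.prod_append,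
        List.map_append, List.prod_append, List.map_map, List.map_map]
      simp [List.range_succ, mul_assoc, Function.comp_def, hA_def, hB_def]
    have hA : Commute (C (p + 2)) A := by
      apply Commute.list_prod_right
      intro x hx
      simp only [List.mem_map, List.mem_range] at hx
      obtain ⟨t, ht, rfl⟩ := hx
      exact (hcomm (t + 1) (p + 2) (by omega) (by omega) (by omega) (by omega) (by omega)).symm
    have hB : Commute (C (p + 1)) B := by
      apply Commute.list_prod_right
      intro x hx
      simp only [List.mem_map, List.mem_range] at hx
      obtain ⟨t, ht, rfl⟩ := hx
      exact hcomm (p + 1) (p + 2 + t + 1) (by omega) (by omega) (by omega) (by omega) (by omega)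
    have hbr : C (p + 1) * C (p + 2) * C (p + 1) = C (p + 2) * C (p + 1) * C (p + 2) :=
      hbraid (p + 1) (by omega) (by omega)
    calc C (p + 1 + 1) * T = C (p + 2) * (A * (C (p + 1) * (C (p + 2) * B))) := by
          rw [hTsplit]
      _ = A * (C (p + 2) * C (p + 1) * C (p + 2)) * B := by
          rw [← mul_assoc, hA.eq]; simp [mul_assoc]
      _ = A * (C (p + 1) * C (p + 2) * C (p + 1)) * B := by rw [← hbr]
      _ = A * (C (p + 1) * (C (p + 2) * (C (p + 1) * B))) := by simp [mul_assoc]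
      _ = A * (C (p + 1) * (C (p + 2) * (B * C (p + 1)))) := by rw [hB.eq]
      _ = A * (C (p + 1) * (C (p + 2) * B)) * C (p + 1) := by simp [mul_assoc]
      _ = T * C (p + 1) := by rw [hTsplit]
  -- iterated conjugation: C (i+e) * T^e = T^e * C i
  have key2 : ∀ e i, 1 ≤ i → i + e ≤ n - 1 → C (i + e) * T ^ e = T ^ e * C i := by
    intro e
    induction e with
    | zero => intro i _ _; simp
    | succ e ih =>
      intro i h1 h2
      calc C (i + (e + 1)) * T ^ (e + 1) = C (i + 1 + e) * T ^ e * T := by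
            rw [show i + (e + 1) = i + 1 + e by omega, pow_succ, ← mul_assoc]
        _ = T ^ e * C (i + 1) * T := by rw [ih (i + 1) (by omega) (by omega)]
        _ = T ^ e * (C (i + 1) * T) := by rw [mul_assoc]
        _ = T ^ e * (T * C i) := by rw [key i h1 (by omega)]
        _ = T ^ (e + 1) * C i := by rw [pow_succ, mul_assoc]
  -- suppose the vectors are dependent
  by_contra hLI
  obtain ⟨g, hg, i0, hi0⟩ := Fintype.not_linearIndependent_iff.mp hLI
  set w : ℕ → (Fin r → ℂ) := fun k => (T ^ k).mulVec v with hw_def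
  have hn2 : 1 ≤ n - 2 := by omega
  -- the maximal index with nonzero coefficient
  set s : Finset (Fin (n - 2)) := Finset.univ.filter (fun i => g i ≠ 0) with hs_def
  have hs_ne : s.Nonempty := ⟨i0, by simp [hs_def, hi0]⟩
  set M : Fin (n - 2) := s.max' hs_ne with hM_def
  have hgM : g M ≠ 0 := by
    have := s.max'_mem hs_ne
    simpa [hs_def] using this
  set m : ℕ := (M : ℕ) with hm_def
  have hm_lt : m < n - 2 := M.isLt
  -- the span W
  set W : Submodule ℂ (Fin r → ℂ) := Submodule.span ℂ (w '' Set.Iio m) with hW_def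
  -- dependency: w m ∈ W
  have hmem : w m ∈ W := by
    have h0 : (∑ i : Fin (n - 2), g i • w (i : ℕ)) = 0 := by simpa [hw_def] using hg
    have hsum : g M • w m + ∑ i ∈ Finset.univ.erase M, g i • w (i : ℕ) = 0 :=
      (Finset.add_sum_erase _ _ (Finset.mem_univ M)).trans h0
    have hrest : ∑ i ∈ Finset.univ.erase M, g i • w i ∈ W := by
      apply Submodule.sum_mem
      intro i hi
      have hiM : i ≠ M := Finset.ne_of_mem_erase hi
      by_cases hgi : g i = 0
      · simp [hgi]
      · have : i ∈ s := by simp [hs_def, hgi]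
        have hle : i ≤ M := s.le_max' i this
        have hlt : (i : ℕ) < m := by
          have : (i : ℕ) ≤ m := hle
          have hne : (i : ℕ) ≠ m := fun h => hiM (Fin.ext h)
          omega
        exact Submodule.smul_mem _ _ (Submodule.subset_span ⟨i, hlt, rfl⟩)
    have : g M • w m = -∑ i ∈ Finset.univ.erase M, g i • w (i : ℕ) := by
      rw [eq_neg_iff_add_eq_zero]; exact hsum
    have hgm : g M • w m ∈ W := this ▸ Submodule.neg_mem _ hrest
    have := Submodule.smul_mem W (g M)⁻¹ hgm
    rwa [inv_smul_smul₀ hgM] at this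
  have hm_pos : 1 ≤ m := by
    by_contra h
    have hm0 : m = 0 := by omega
    have hio : (Set.Iio 0 : Set ℕ) = ∅ := by ext x; simp
    rw [hW_def, hm0, hio, Set.image_empty, Submodule.span_empty, Submodule.mem_bot] at hmem
    exact hv (by simpa [hw_def] using hmem)
  -- W is T-invariant
  have hmapT : Submodule.map T.mulVecLin W ≤ W := by
    rw [hW_def, Submodule.map_span, Submodule.span_le]
    rintro x ⟨y, ⟨k, hk, rfl⟩, rfl⟩
    simp only [Set.mem_Iio] at hk
    have hstep : T.mulVecLin (w k) = w (k + 1) := by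
      simp [hw_def, Matrix.mulVecLin_apply, Matrix.mulVec_mulVec, pow_succ']
    rw [SetLike.mem_coe, hstep]
    rcases Nat.lt_or_ge (k + 1) m with h | h
    · exact Submodule.subset_span ⟨k + 1, h, rfl⟩
    · have : k + 1 = m := by omega
      rw [this]; exact hmem
  have hmapT_eq : Submodule.map T.mulVecLin W = W := by
    have hinj : Function.Injective T.mulVecLin := by
      have := hTinj 1
      rw [pow_one] at this; exact this
    apply Submodule.eq_of_le_of_finrank_le hmapT
    rw [(Submodule.equivMapOfInjective _ hinj W).finrank_eq]
  have hmapPow : ∀ e : ℕ, Submodule.map (T ^ e).mulVecLin W = W := by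
    intro e
    induction e with
    | zero => simp [pow_zero, Matrix.mulVecLin_one, Submodule.map_id]
    | succ e ih =>
      rw [pow_succ', Matrix.mulVecLin_mul, Submodule.map_comp, ih, hmapT_eq]
  have hwW : ∀ k, w k ∈ W := by
    intro k
    have hvW : v ∈ W := Submodule.subset_span ⟨0, hm_pos, by simp [hw_def]⟩
    have := Submodule.mem_map_of_mem (f := (T ^ k).mulVecLin) hvW
    rw [hmapPow k] at this
    simpa [hw_def, Matrix.mulVecLin_apply] using this
  -- shifted spanning sets
  have hshift : ∀ a : ℕ, W = Submodule.span ℂ ((fun k => w (a + k)) '' Set.Iio m) := by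
    intro a
    conv_lhs => rw [← hmapPow a]
    rw [hW_def, Submodule.map_span, ← Set.image_comp]
    congr 2
    funext k
    simp [hw_def, Matrix.mulVecLin_apply, Matrix.mulVec_mulVec, ← pow_add]
  -- C j preserves W for j ≥ m
  have step1 : ∀ j, m ≤ j → j ≤ n - 1 → ∀ x ∈ W, (C j).mulVec x ∈ W := by
    intro j hjm hjn x hx
    rw [hshift (j - m)] at hx
    have hle : Submodule.map (C j).mulVecLin
        (Submodule.span ℂ ((fun k => w (j - m + k)) '' Set.Iio m)) ≤ W := by
      rw [Submodule.map_span, Submodule.span_le]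
      rintro y ⟨z, ⟨k, hk, rfl⟩, rfl⟩
      simp only [Set.mem_Iio] at hk
      have hconj : C j * T ^ (j - m + k) = T ^ (j - m + k) * C (m - k) := by
        have := key2 (j - m + k) (m - k) (by omega) (by omega)
        rwa [show m - k + (j - m + k) = j by omega] at this
      obtain ⟨c, hc⟩ := Submodule.mem_span_singleton.mp
        (hline (m - k) (Or.inl ⟨by omega, by omega⟩))
      have : (C j).mulVecLin (w (j - m + k)) = c • w (j - m + k) := by
        simp only [hw_def, Matrix.mulVecLin_apply, Matrix.mulVec_mulVec, hconj]
        rw [← Matrix.mulVec_mulVec, ← hc, Matrix.mulVec_smul]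
      rw [SetLike.mem_coe, this]
      exact Submodule.smul_mem _ _ (hwW _)
    have := hle (Submodule.mem_map_of_mem hx)
    simpa [Matrix.mulVecLin_apply] using this
  -- C j preserves W for all 1 ≤ j ≤ n-1
  have step2 : ∀ j, 1 ≤ j → j ≤ n - 1 → ∀ x ∈ W, (C j).mulVec x ∈ W := by
    intro j hj1 hjn x hx
    rcases le_or_gt m j with hjm | hjm
    · exact step1 j hjm hjn x hx
    · set d : ℕ := n - 1 - j with hd_def
      have hlift : C (n - 1) * T ^ d = T ^ d * C j := by
        have := key2 d j hj1 (by omega)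
        rwa [show j + d = n - 1 by omega] at this
      have h2 : (T ^ d).mulVec x ∈ W := by
        have := Submodule.mem_map_of_mem (f := (T ^ d).mulVecLin) hx
        rw [hmapPow d] at this
        simpa [Matrix.mulVecLin_apply] using this
      have h3 : (T ^ d).mulVec ((C j).mulVec x) ∈ W := by
        have h1 : (T ^ d).mulVec ((C j).mulVec x)
            = (C (n - 1)).mulVec ((T ^ d).mulVec x) := by
          rw [Matrix.mulVec_mulVec, Matrix.mulVec_mulVec, hlift]
        rw [h1]
        exact step1 (n - 1) (by omega) le_rfl _ h2
      rw [← hmapPow d] at h3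
      obtain ⟨y, hyW, hy⟩ := h3
      have : y = (C j).mulVec x := hTinj d (by simpa [Matrix.mulVecLin_apply] using hy)
      rwa [← this]
  -- irreducibility gives a contradiction
  rcases hirr W step2 with h | h
  · have hvW : v ∈ W := Submodule.subset_span ⟨0, hm_pos, by simp [hw_def]⟩
    rw [h, Submodule.mem_bot] at hvW
    exact hv hvW
  · have h1 : Module.finrank ℂ W ≤ m := by
      have him : w '' Set.Iio m = ↑((Finset.range m).image w) := by
        simp [Finset.coe_image, Finset.coe_range]
      calc Module.finrank ℂ W ≤ ((Finset.range m).image w).card := by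
            rw [hW_def, him]; exact finrank_span_finset_le_card _
        _ ≤ m := (Finset.card_image_le).trans (by simp)
    have h2 : Module.finrank ℂ W = r := by
      rw [h, finrank_top, Module.finrank_pi]
      simp
    omega
end

section
/- Let n ≥ 3 and let C_1, …, C_{n−1} ∈ GL_r(ℂ) be an irreducible representation of B_n of dimension r ≥ n+1, and set T = C_1 C_2 ⋯ C_{n−1}. Suppose v ∈ ℂ^r is a nonzero vector such that C_i v ∈ span{v} for every i ∈ {1, …, n−3} ∪ {n−1}. Then for every integer i, the n−2 consecutive vectors T^i v, T^{i+1} v, …, T^{i+n−3} v are linearly independent. -/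
/-- For `n ≥ 3` and an irreducible representation of `B_n` of dimension `r ≥ n+1`,
with `T = C 1 * C 2 * ⋯ * C (n-1)` (invertible, so integer powers make sense): if the
line spanned by a nonzero vector `v` is invariant under `C 1, …, C (n-3)` and
`C (n-1)`, then for every integer `i` the `n-2` consecutive vectors
`T^i v, T^{i+1} v, …, T^{i+n-3} v` are linearly independent. -/
theorem stmt_10 (n r : ℕ) (hn : 3 ≤ n) (hr : n + 1 ≤ r)
    (C : ℕ → Matrix (Fin r) (Fin r) ℂ)
    (hinv : ∀ i, 1 ≤ i → i ≤ n - 1 → IsUnit (C i))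
    (hcomm : ∀ i j, 1 ≤ i → i ≤ n - 1 → 1 ≤ j → j ≤ n - 1 → i + 2 ≤ j →
      C i * C j = C j * C i)
    (hbraid : ∀ i, 1 ≤ i → i ≤ n - 2 →
      C i * C (i + 1) * C i = C (i + 1) * C i * C (i + 1))
    (hirr : ∀ p : Submodule ℂ (Fin r → ℂ),
      (∀ i, 1 ≤ i → i ≤ n - 1 → ∀ v ∈ p, (C i).mulVec v ∈ p) → p = ⊥ ∨ p = ⊤)
    (T : Matrix (Fin r) (Fin r) ℂ)
    (hT : T = (List.map (fun i => C (i + 1)) (List.range (n - 1))).prod)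
    (v : Fin r → ℂ) (hv : v ≠ 0)
    (hline : ∀ i, (1 ≤ i ∧ i ≤ n - 3) ∨ i = n - 1 →
      (C i).mulVec v ∈ Submodule.span ℂ {v}) :
    ∀ i : ℤ, LinearIndependent ℂ
      (fun k : Fin (n - 2) => (T ^ (i + (k : ℕ))).mulVec v) := by
  classical
  obtain ⟨m, rfl⟩ : ∃ m, n = m + 3 := ⟨n - 3, by omega⟩
  -- products of consecutive generators
  set g : ℕ → ℕ → Matrix (Fin r) (Fin r) ℂ :=
    fun a l => ((List.range' a l).map C).prod with hg
  have hT' : T = g 1 (m + 2) := by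
    rw [hT, hg]
    congr 1
    show List.map (fun i => C (i + 1)) (List.range (m + 3 - 1)) = _
    rw [List.range'_eq_map_range, List.map_map]
    congr 1
    funext x
    simp [Nat.add_comm]
  have g_append : ∀ a l1 l2, g a (l1 + l2) = g a l1 * g (a + l1) l2 := by
    intro a l1 l2
    show ((List.range' a (l1 + l2)).map C).prod = _
    rw [← List.range'_append_1,
      List.map_append, List.prod_append]
  have g_cons : ∀ a l, g a (l + 1) = C a * g (a + 1) l := by
    intro a l
    show ((List.range' a (l + 1)).map C).prod = _
    rw [List.range'_succ, List.map_cons, List.prod_cons]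
  have hcommL : ∀ (j : ℕ) (l : List ℕ), (∀ x ∈ l, C j * C x = C x * C j) →
      C j * (l.map C).prod = (l.map C).prod * C j := by
    intro j l
    induction l with
    | nil => simp
    | cons a t ih =>
      intro h
      simp only [List.map_cons, List.prod_cons]
      rw [← mul_assoc, h a (by simp), mul_assoc,
        ih (fun x hx => h x (by simp [hx])), ← mul_assoc]
  -- the key conjugation relation  T C_k T⁻¹ = C_{k+1}
  have hconj : ∀ k, 1 ≤ k → k ≤ m + 1 → T * C k = C (k + 1) * T := by
    intro k hk1 hk2
    obtain ⟨a, rfl⟩ : ∃ a, k = a + 1 := ⟨k - 1, by omega⟩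
    obtain ⟨b, hb⟩ : ∃ b, m = a + b := ⟨m - a, by omega⟩
    have hsplit : T = g 1 a * (C (a + 1) * (C (a + 2) * g (a + 3) b)) := by
      rw [hT', hb, show a + b + 2 = a + (2 + b) from by ring, g_append,
        show 2 + b = (1 + b) + 1 from by ring, g_cons,
        show 1 + b = b + 1 from by ring, g_cons]
      rw [show 1 + a = a + 1 from by ring, show a + 1 + 1 = a + 2 from by ring,
        show a + 2 + 1 = a + 3 from by ring]
    have hcomm1 : C (a + 1) * g (a + 3) b = g (a + 3) b * C (a + 1) := by
      apply hcommL
      intro x hx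
      have hx' := List.mem_range'_1.mp hx
      exact hcomm (a + 1) x (by omega) (by omega) (by omega) (by omega) (by omega)
    have hcomm2 : C (a + 2) * g 1 a = g 1 a * C (a + 2) := by
      apply hcommL
      intro x hx
      have hx' := List.mem_range'_1.mp hx
      exact (hcomm x (a + 2) (by omega) (by omega) (by omega) (by omega) (by omega)).symm
    have braid' := hbraid (a + 1) (by omega) (by omega)
    have braid2 : ∀ X : Matrix (Fin r) (Fin r) ℂ,
        C (a + 1) * (C (a + 2) * (C (a + 1) * X)) =
          C (a + 2) * (C (a + 1) * (C (a + 2) * X)) := by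
      intro X
      have h2 := congrArg (· * X) braid'
      simp only [mul_assoc] at h2
      exact h2
    rw [hsplit]
    simp only [mul_assoc]
    rw [← hcomm1, braid2, ← mul_assoc, ← hcomm2, mul_assoc]
  -- invertibility of T
  have hTu : IsUnit T := by
    rw [hT]
    apply List.prod_isUnit
    intro x hx
    simp only [List.mem_map, List.mem_range] at hx
    obtain ⟨i, hi, rfl⟩ := hx
    exact hinv (i + 1) (by omega) (by omega)
  have hdet : IsUnit T.det := (Matrix.isUnit_iff_isUnit_det T).mp hTu
  -- iterated conjugation
  have hconj1 : ∀ p a, 1 ≤ a → a + p ≤ m + 2 → T ^ p * C a = C (a + p) * T ^ p := by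
    intro p
    induction p with
    | zero => intro a _ _; simp
    | succ p ih =>
      intro a h1 h2
      rw [pow_succ, mul_assoc, hconj a h1 (by omega), ← mul_assoc,
        ih (a + 1) (by omega) (by omega), mul_assoc, ← pow_succ,
        show a + 1 + p = a + (p + 1) from by ring]
  have hkey : ∀ (b s : ℕ), 1 ≤ s → s ≤ m + 2 → 1 ≤ b → b ≤ m + 2 →
      C b * T ^ ((b : ℤ) - (s : ℤ)) = T ^ ((b : ℤ) - (s : ℤ)) * C s := by
    intro b s hs1 hs2 hb1 hb2
    rcases le_or_gt s b with h | h
    · obtain ⟨p, rfl⟩ : ∃ p, b = s + p := ⟨b - s, by omega⟩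
      rw [show ((s + p : ℕ) : ℤ) - (s : ℤ) = ((p : ℕ) : ℤ) from by push_cast; ring,
        zpow_natCast]
      exact (hconj1 p s hs1 (by omega)).symm
    · obtain ⟨p, rfl⟩ : ∃ p, s = b + p := ⟨s - b, by omega⟩
      rw [show ((b : ℕ) : ℤ) - ((b + p : ℕ) : ℤ) = -((p : ℕ) : ℤ) from by push_cast; ring,
        Matrix.zpow_neg_natCast]
      have hp : IsUnit (T ^ p).det := by rw [Matrix.det_pow]; exact hdet.pow p
      have h1 := hconj1 p b hb1 hs2
      calc C b * (T ^ p)⁻¹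
          = (T ^ p)⁻¹ * (T ^ p * C b) * (T ^ p)⁻¹ := by
            rw [← mul_assoc, Matrix.nonsing_inv_mul _ hp, one_mul]
        _ = (T ^ p)⁻¹ * (C (b + p) * T ^ p) * (T ^ p)⁻¹ := by rw [h1]
        _ = (T ^ p)⁻¹ * C (b + p) := by
            rw [mul_assoc, mul_assoc, Matrix.mul_nonsing_inv _ hp, mul_one]
  -- injectivity of multiplication by integer powers of T
  have hzinj : ∀ j : ℤ, Function.Injective fun x : Fin r → ℂ => (T ^ j).mulVec x := by
    intro j x y hxy
    have h2 := congrArg (fun z => (T ^ (-j)).mulVec z) hxy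
    simp only [Matrix.mulVec_mulVec] at h2
    rwa [← Matrix.zpow_add hdet, show -j + j = 0 from by ring, zpow_zero,
      Matrix.one_mulVec, Matrix.one_mulVec] at h2
  -- main claim: v, Tv, ..., T^m v are linearly independent
  have main : LinearIndependent ℂ (fun k : Fin (m + 1) => (T ^ (k : ℕ)).mulVec v) := by
    by_contra hdep
    have hex : ∃ d, ¬ LinearIndependent ℂ (fun k : Fin (d + 1) => (T ^ (k : ℕ)).mulVec v) :=
      ⟨m, hdep⟩
    obtain ⟨d, hdP, hdmin⟩ : ∃ d,
        (¬ LinearIndependent ℂ (fun k : Fin (d + 1) => (T ^ (k : ℕ)).mulVec v)) ∧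
        ∀ c < d, LinearIndependent ℂ (fun k : Fin (c + 1) => (T ^ (k : ℕ)).mulVec v) :=
      ⟨Nat.find hex, Nat.find_spec hex, fun c hc => not_not.mp (Nat.find_min hex hc)⟩
    have hdm : d ≤ m := by
      by_contra h
      exact hdep (hdmin m (by omega))
    have hd1 : 1 ≤ d := by
      rcases Nat.eq_zero_or_pos d with h0 | h; swap; · exact h
      exfalso
      apply hdP
      rw [h0]
      show LinearIndependent ℂ (fun k : Fin 1 => (T ^ (k : ℕ)).mulVec v)
      apply linearIndependent_unique_iff.mpr
      have : ((default : Fin 1) : ℕ) = 0 := rfl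
      rw [this, pow_zero, Matrix.one_mulVec]
      exact hv
    obtain ⟨e, rfl⟩ : ∃ e, d = e + 1 := ⟨d - 1, by omega⟩
    have hLI : LinearIndependent ℂ (fun k : Fin (e + 1) => (T ^ (k : ℕ)).mulVec v) :=
      hdmin e (by omega)
    set W : Submodule ℂ (Fin r → ℂ) :=
      Submodule.span ℂ (Set.range fun k : Fin (e + 1) => (T ^ (k : ℕ)).mulVec v) with hW
    have hsnoc : (fun k : Fin (e + 2) => (T ^ (k : ℕ)).mulVec v) =
        Fin.snoc (fun k : Fin (e + 1) => (T ^ (k : ℕ)).mulVec v)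
          ((T ^ (e + 1)).mulVec v) := by
      funext k
      refine Fin.lastCases ?_ ?_ k
      · rw [Fin.snoc_last, Fin.val_last]
      · intro j
        rw [Fin.snoc_castSucc, Fin.coe_castSucc]
    have hmem : (T ^ (e + 1)).mulVec v ∈ W := by
      have h2 := hdP
      rw [hsnoc, linearIndependent_fin_snoc] at h2
      by_contra h3
      exact h2 ⟨hLI, h3⟩
    have hvW : v ∈ W := by
      apply Submodule.subset_span
      refine ⟨0, ?_⟩
      show (T ^ ((0 : Fin (e + 1)) : ℕ)).mulVec v = v
      rw [show ((0 : Fin (e + 1)) : ℕ) = 0 from rfl, pow_zero, Matrix.one_mulVec]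
    -- W is invariant under T
    have hTW : ∀ x ∈ W, T.mulVec x ∈ W := by
      have hle : W ≤ Submodule.comap (Matrix.mulVecLin T) W := by
        rw [hW, Submodule.span_le]
        rintro y ⟨k, rfl⟩
        simp only [SetLike.mem_coe, Submodule.mem_comap, Matrix.mulVecLin_apply,
          Matrix.mulVec_mulVec]
        rw [← pow_succ']
        rcases Nat.lt_or_ge ((k : ℕ) + 1) (e + 1) with h | h
        · exact Submodule.subset_span ⟨⟨(k : ℕ) + 1, h⟩, rfl⟩
        · have h' : (k : ℕ) + 1 = e + 1 := by omega
          rw [h']; exact hmem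
      exact fun x hx => hle hx
    -- W is invariant under T⁻¹
    have hTW' : ∀ x ∈ W, T⁻¹.mulVec x ∈ W := by
      have hres : Function.Surjective
          ((Matrix.mulVecLin T).restrict (p := W) (q := W) (fun x hx => hTW x hx)) := by
        rw [← LinearMap.injective_iff_surjective]
        intro a b hab
        have h2 : T.mulVec a.1 = T.mulVec b.1 := congrArg Subtype.val hab
        have h3 : Function.Injective T.mulVec := by
          intro x y hxy
          have h4 := congrArg (fun z => T⁻¹.mulVec z) hxy
          simpa only [Matrix.mulVec_mulVec, Matrix.nonsing_inv_mul _ hdet,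
            Matrix.one_mulVec] using h4
        exact Subtype.ext (h3 h2)
      intro x hx
      obtain ⟨y, hy⟩ := hres ⟨x, hx⟩
      have hyx : T.mulVec y.1 = x := congrArg Subtype.val hy
      have h5 : T⁻¹.mulVec x = y.1 := by
        rw [← hyx, Matrix.mulVec_mulVec, Matrix.nonsing_inv_mul _ hdet, Matrix.one_mulVec]
      rw [h5]; exact y.2
    -- W is invariant under all integer powers of T
    have hZ : ∀ (j : ℤ), ∀ x ∈ W, (T ^ j).mulVec x ∈ W := by
      intro j
      induction j using Int.induction_on with
      | zero => intro x hx; rwa [zpow_zero, Matrix.one_mulVec]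
      | succ p ih =>
        intro x hx
        rw [Matrix.zpow_add_one hdet, ← Matrix.mulVec_mulVec]
        exact ih _ (hTW x hx)
      | pred p ih =>
        intro x hx
        rw [show (-(p : ℤ) - 1) = (-(p : ℤ)) - 1 from rfl, Matrix.zpow_sub_one hdet,
          ← Matrix.mulVec_mulVec]
        exact ih _ (hTW' x hx)
    -- shifted images of W coincide with W
    have hWmap : ∀ j : ℤ, Submodule.map (Matrix.mulVecLin (T ^ j)) W = W := by
      intro j
      have hle : Submodule.map (Matrix.mulVecLin (T ^ j)) W ≤ W := by
        rintro _ ⟨x, hx, rfl⟩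
        exact hZ j x hx
      have hinj : Function.Injective (Matrix.mulVecLin (T ^ j)) := hzinj j
      have hfr : Module.finrank ℂ (Submodule.map (Matrix.mulVecLin (T ^ j)) W) =
          Module.finrank ℂ W :=
        (Submodule.equivMapOfInjective _ hinj W).finrank_eq.symm
      exact Submodule.eq_of_le_of_finrank_le hle (le_of_eq hfr.symm)
    -- W is invariant under every generator
    have hCW : ∀ b, 1 ≤ b → b ≤ m + 2 → ∀ x ∈ W, (C b).mulVec x ∈ W := by
      intro b hb1 hb2 x hx
      have hW2 : W = Submodule.span ℂ
          (Set.range fun k : Fin (e + 1) =>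
            (T ^ (((b : ℤ) - ((e : ℤ) + 1)) + (k : ℕ))).mulVec v) := by
        have hfun : (⇑(Matrix.mulVecLin (T ^ ((b : ℤ) - ((e : ℤ) + 1)))) ∘
            fun k : Fin (e + 1) => (T ^ (k : ℕ)).mulVec v) =
            (fun k : Fin (e + 1) =>
              (T ^ (((b : ℤ) - ((e : ℤ) + 1)) + (k : ℕ))).mulVec v) := by
          funext k
          show (T ^ ((b : ℤ) - ((e : ℤ) + 1))).mulVec ((T ^ (k : ℕ)).mulVec v) = _
          rw [Matrix.mulVec_mulVec, ← zpow_natCast T (k : ℕ), ← Matrix.zpow_add hdet]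
        conv_lhs => rw [← hWmap ((b : ℤ) - ((e : ℤ) + 1))]
        rw [hW, Submodule.map_span, ← Set.range_comp, hfun]
      have hle : Submodule.span ℂ
          (Set.range fun k : Fin (e + 1) =>
            (T ^ (((b : ℤ) - ((e : ℤ) + 1)) + (k : ℕ))).mulVec v) ≤
          Submodule.comap (Matrix.mulVecLin (C b)) W := by
        rw [Submodule.span_le]
        rintro y ⟨k, rfl⟩
        simp only [SetLike.mem_coe, Submodule.mem_comap, Matrix.mulVecLin_apply,
          Matrix.mulVec_mulVec]
        have hkle : (k : ℕ) ≤ e := by omega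
        have hj : ((b : ℤ) - ((e : ℤ) + 1)) + (k : ℕ) =
            (b : ℤ) - ((e + 1 - (k : ℕ) : ℕ) : ℤ) := by omega
        have hs := hkey b (e + 1 - (k : ℕ)) (by omega) (by omega) hb1 hb2
        rw [hj, hs, ← Matrix.mulVec_mulVec]
        obtain ⟨c, hc⟩ := Submodule.mem_span_singleton.mp
          (hline (e + 1 - (k : ℕ)) (Or.inl ⟨by omega, by omega⟩))
        rw [← hc, Matrix.mulVec_smul]
        exact Submodule.smul_mem _ c (hZ _ v hvW)
      have hx2 : x ∈ Submodule.span ℂ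
          (Set.range fun k : Fin (e + 1) =>
            (T ^ (((b : ℤ) - ((e : ℤ) + 1)) + (k : ℕ))).mulVec v) := by
        rw [← hW2]; exact hx
      have := hle hx2
      simpa only [Submodule.mem_comap, Matrix.mulVecLin_apply] using this
    -- conclude by irreducibility
    rcases hirr W (fun b hb1 hb2 x hx => hCW b hb1 hb2 x hx) with hbot | htop
    · rw [hbot] at hvW
      exact hv (Submodule.mem_bot ℂ |>.mp hvW)
    · have h1 : Module.finrank ℂ W ≤ e + 1 := by
        have h2 := finrank_range_le_card (R := ℂ)
          (fun k : Fin (e + 1) => (T ^ (k : ℕ)).mulVec v)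
        simpa [Set.finrank, hW] using h2
      rw [htop, finrank_top] at h1
      have h3 : Module.finrank ℂ (Fin r → ℂ) = r := by
        simp [Module.finrank_pi]
      omega
  -- transport by powers of T
  intro i
  show LinearIndependent ℂ (fun k : Fin (m + 1) => (T ^ (i + (k : ℕ))).mulVec v)
  have hcomp : (fun k : Fin (m + 1) => (T ^ (i + (k : ℕ))).mulVec v) =
      (Matrix.mulVecLin (T ^ i)) ∘ (fun k : Fin (m + 1) => (T ^ (k : ℕ)).mulVec v) := by
    funext k
    simp only [Function.comp_apply, Matrix.mulVecLin_apply, Matrix.mulVec_mulVec]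
    rw [← zpow_natCast T (k : ℕ), ← Matrix.zpow_add hdet]
  rw [hcomp]
  exact main.map' (Matrix.mulVecLin (T ^ i)) (LinearMap.ker_eq_bot.mpr (hzinj i))
end

section
/- Let n ≥ 3 and let C_1, …, C_{n−1} ∈ GL_r(ℂ) be a representation of B_n of dimension r; set A_i = C_i − I, T = C_1 ⋯ C_{n−1}, and A_0 = T C_{n−1} T^{−1} − I, indices in ℤ_n. Then for any two distinct indices i, j ∈ ℤ_n: if ||i−j|| = 1 then dim(Im A_i ∩ Im A_j) ≥ dim Im(A_i + A_i² + A_i A_j A_i), and if ||i−j|| ≥ 2 then dim(Im A_i ∩ Im A_j) ≥ dim Im(A_i A_j). -/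
namespace Stmt11Aux

variable {G : Type*} [Group G]

/-- prefix product `c 1 * c 2 * ⋯ * c m` -/
def tp (c : ℕ → G) : ℕ → G
  | 0 => 1
  | m + 1 => tp c m * c (m + 1)

/-- suffix product `c (n-j) * ⋯ * c (n-1)` (j factors) -/
def sp (n : ℕ) (c : ℕ → G) : ℕ → G
  | 0 => 1
  | j + 1 => c (n - 1 - j) * sp n c j

variable {n : ℕ} {c : ℕ → G}

theorem comm_tp (hc : ∀ i j, 1 ≤ i → i + 2 ≤ j → j ≤ n - 1 → c i * c j = c j * c i)
    (m : ℕ) : ∀ j, m + 2 ≤ j → j ≤ n - 1 → Commute (c j) (tp c m) := by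
  induction m with
  | zero => intro j _ _; exact Commute.one_right _
  | succ m ih =>
    intro j h1 h2
    rw [show tp c (m + 1) = tp c m * c (m + 1) from rfl]
    exact (ih j (by omega) h2).mul_right ((hc (m + 1) j (by omega) (by omega) h2).symm)

theorem conj_tp
    (hb : ∀ k, 1 ≤ k → k ≤ n - 2 → c k * c (k + 1) * c k = c (k + 1) * c k * c (k + 1))
    (hc : ∀ i j, 1 ≤ i → i + 2 ≤ j → j ≤ n - 1 → c i * c j = c j * c i)
    (i : ℕ) (hi : 1 ≤ i) :
    ∀ m, i + 1 ≤ m → m ≤ n - 1 → tp c m * c i = c (i + 1) * tp c m := by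
  intro m hm
  induction m, hm using Nat.le_induction with
  | base =>
    intro hle
    obtain ⟨p, rfl⟩ : ∃ p, i = p + 1 := ⟨i - 1, by omega⟩
    have hb1 := hb (p + 1) (by omega) (by omega)
    have hcm : Commute (c (p + 2)) (tp c p) := comm_tp hc p (p + 2) (by omega) (by omega)
    show tp c p * c (p + 1) * c (p + 2) * c (p + 1) = c (p + 2) * (tp c p * c (p + 1) * c (p + 2))
    calc tp c p * c (p + 1) * c (p + 2) * c (p + 1)
        = tp c p * (c (p + 1) * c (p + 2) * c (p + 1)) := by group
      _ = tp c p * (c (p + 2) * c (p + 1) * c (p + 2)) := by rw [hb1]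
      _ = (tp c p * c (p + 2)) * (c (p + 1) * c (p + 2)) := by group
      _ = (c (p + 2) * tp c p) * (c (p + 1) * c (p + 2)) := by rw [← hcm.eq]
      _ = c (p + 2) * (tp c p * c (p + 1) * c (p + 2)) := by group
  | succ m hm ih =>
    intro hle
    have e2 := hc i (m + 1) hi (by omega) (by omega)
    show tp c m * c (m + 1) * c i = c (i + 1) * (tp c m * c (m + 1))
    calc tp c m * c (m + 1) * c i
        = tp c m * (c (m + 1) * c i) := by group
      _ = tp c m * (c i * c (m + 1)) := by rw [← e2]
      _ = (tp c m * c i) * c (m + 1) := by group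
      _ = (c (i + 1) * tp c m) * c (m + 1) := by rw [ih (by omega)]
      _ = c (i + 1) * (tp c m * c (m + 1)) := by group

theorem comm_sp (hc : ∀ i j, 1 ≤ i → i + 2 ≤ j → j ≤ n - 1 → c i * c j = c j * c i)
    (j : ℕ) : ∀ m, 1 ≤ m → m + 2 + j ≤ n → Commute (c m) (sp n c j) := by
  induction j with
  | zero => intro m _ _; exact Commute.one_right _
  | succ j ih =>
    intro m h1 h2
    rw [show sp n c (j + 1) = c (n - 1 - j) * sp n c j from rfl]
    have h3 : Commute (c m) (c (n - 1 - j)) := hc m (n - 1 - j) h1 (by omega) (by omega)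
    exact h3.mul_right (ih m h1 (by omega))

theorem conj_sp
    (hb : ∀ k, 1 ≤ k → k ≤ n - 2 → c k * c (k + 1) * c k = c (k + 1) * c k * c (k + 1))
    (hc : ∀ i j, 1 ≤ i → i + 2 ≤ j → j ≤ n - 1 → c i * c j = c j * c i) :
    ∀ j, j + 1 ≤ n - 1 →
      sp n c (j + 1) * c (n - 1) * (sp n c (j + 1))⁻¹
        = (sp n c j)⁻¹ * c (n - 1 - j) * sp n c j := by
  intro j
  induction j with
  | zero =>
    intro _
    show (c (n - 1 - 0) * sp n c 0) * c (n - 1) * ((c (n - 1 - 0) * sp n c 0))⁻¹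
        = (sp n c 0)⁻¹ * c (n - 1 - 0) * sp n c 0
    simp [sp]
  | succ j ih =>
    intro h
    have ihe := ih (by omega)
    set a := n - 2 - j with ha
    have hcm : Commute (c a) (sp n c j) := comm_sp hc j a (by omega) (by omega)
    have hb1 := hb a (by omega) (by omega)
    have ea1 : n - 1 - j = a + 1 := by omega
    have ea0 : n - 1 - (j + 1) = a := by omega
    have h2 : c a * (sp n c j)⁻¹ = (sp n c j)⁻¹ * c a := hcm.inv_right.eq
    have h3 : sp n c j * (c a)⁻¹ = (c a)⁻¹ * sp n c j := hcm.symm.inv_right.eq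
    have mid : c a * c (a + 1) * (c a)⁻¹ = (c (a + 1))⁻¹ * c a * c (a + 1) := by
      apply mul_left_cancel (a := c (a + 1))
      calc c (a + 1) * (c a * c (a + 1) * (c a)⁻¹)
          = (c (a + 1) * c a * c (a + 1)) * (c a)⁻¹ := by group
        _ = (c a * c (a + 1) * c a) * (c a)⁻¹ := by rw [hb1]
        _ = c a * c (a + 1) := by group
        _ = c (a + 1) * ((c (a + 1))⁻¹ * c a * c (a + 1)) := by group
    have hsp2 : sp n c (j + 1 + 1) = c a * sp n c (j + 1) := by
      rw [show sp n c (j + 1 + 1) = c (n - 1 - (j + 1)) * sp n c (j + 1) from rfl, ea0]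
    have hsp1 : sp n c (j + 1) = c (a + 1) * sp n c j := by
      rw [show sp n c (j + 1) = c (n - 1 - j) * sp n c j from rfl, ea1]
    calc sp n c (j + 1 + 1) * c (n - 1) * (sp n c (j + 1 + 1))⁻¹
        = c a * (sp n c (j + 1) * c (n - 1) * (sp n c (j + 1))⁻¹) * (c a)⁻¹ := by
          rw [hsp2]; group
      _ = c a * ((sp n c j)⁻¹ * c (a + 1) * sp n c j) * (c a)⁻¹ := by rw [ihe, ea1]
      _ = (c a * (sp n c j)⁻¹) * c (a + 1) * (sp n c j * (c a)⁻¹) := by group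
      _ = ((sp n c j)⁻¹ * c a) * c (a + 1) * ((c a)⁻¹ * sp n c j) := by rw [h2, h3]
      _ = (sp n c j)⁻¹ * (c a * c (a + 1) * (c a)⁻¹) * sp n c j := by group
      _ = (sp n c j)⁻¹ * ((c (a + 1))⁻¹ * c a * c (a + 1)) * sp n c j := by rw [mid]
      _ = (c (a + 1) * sp n c j)⁻¹ * c a * (c (a + 1) * sp n c j) := by group
      _ = (sp n c (j + 1))⁻¹ * c (n - 1 - (j + 1)) * sp n c (j + 1) := by rw [hsp1, ea0]

theorem tp_eq_sp : ∀ j, j ≤ n - 1 → tp c (n - 1) = tp c (n - 1 - j) * sp n c j := by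
  intro j
  induction j with
  | zero => intro _; simp [sp]
  | succ j ih =>
    intro h
    have e : n - 1 - j = (n - 1 - (j + 1)) + 1 := by omega
    rw [ih (by omega)]
    conv_lhs => rw [e]
    rw [show tp c ((n - 1 - (j + 1)) + 1)
          = tp c (n - 1 - (j + 1)) * c ((n - 1 - (j + 1)) + 1) from rfl,
        show (n - 1 - (j + 1)) + 1 = n - 1 - j from by omega, mul_assoc,
        show sp n c (j + 1) = c (n - 1 - j) * sp n c j from rfl]

theorem conj_braid (g a b : G) (h : a * b * a = b * a * b) :
    (g * a * g⁻¹) * (g * b * g⁻¹) * (g * a * g⁻¹)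
      = (g * b * g⁻¹) * (g * a * g⁻¹) * (g * b * g⁻¹) := by
  calc (g * a * g⁻¹) * (g * b * g⁻¹) * (g * a * g⁻¹) = g * (a * b * a) * g⁻¹ := by group
    _ = g * (b * a * b) * g⁻¹ := by rw [h]
    _ = (g * b * g⁻¹) * (g * a * g⁻¹) * (g * b * g⁻¹) := by group

section Rel

variable (hb : ∀ k, 1 ≤ k → k ≤ n - 2 → c k * c (k + 1) * c k = c (k + 1) * c k * c (k + 1))
  (hc : ∀ i j, 1 ≤ i → i + 2 ≤ j → j ≤ n - 1 → c i * c j = c j * c i)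
  (hn : 3 ≤ n)

include hb hc hn

theorem R1 (k : ℕ) (h2 : 2 ≤ k) (hk : k ≤ n - 2) :
    c k * (tp c (n - 1) * c (n - 1) * (tp c (n - 1))⁻¹)
      = (tp c (n - 1) * c (n - 1) * (tp c (n - 1))⁻¹) * c k := by
  set Tg := tp c (n - 1) with hTg
  have hck : Tg * c (k - 1) = c k * Tg := by
    have := conj_tp hb hc (k - 1) (by omega) (n - 1) (by omega) le_rfl
    rwa [show k - 1 + 1 = k from by omega] at this
  have hk1 : c k = Tg * c (k - 1) * Tg⁻¹ := by rw [hck]; group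
  have e := hc (k - 1) (n - 1) (by omega) (by omega) le_rfl
  rw [hk1]
  calc (Tg * c (k - 1) * Tg⁻¹) * (Tg * c (n - 1) * Tg⁻¹)
      = Tg * (c (k - 1) * c (n - 1)) * Tg⁻¹ := by group
    _ = Tg * (c (n - 1) * c (k - 1)) * Tg⁻¹ := by rw [e]
    _ = (Tg * c (n - 1) * Tg⁻¹) * (Tg * c (k - 1) * Tg⁻¹) := by group

theorem R2 :
    c (n - 1) * (tp c (n - 1) * c (n - 1) * (tp c (n - 1))⁻¹) * c (n - 1)
      = (tp c (n - 1) * c (n - 1) * (tp c (n - 1))⁻¹) * c (n - 1)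
        * (tp c (n - 1) * c (n - 1) * (tp c (n - 1))⁻¹) := by
  set Tg := tp c (n - 1) with hTg
  have h1 : c (n - 1) = Tg * c (n - 2) * Tg⁻¹ := by
    have := conj_tp hb hc (n - 2) (by omega) (n - 1) (by omega) le_rfl
    rw [show n - 2 + 1 = n - 1 from by omega] at this
    rw [this, ← hTg]; group
  have hb1 := hb (n - 2) (by omega) le_rfl
  rw [show n - 2 + 1 = n - 1 from by omega] at hb1
  have := conj_braid Tg (c (n - 2)) (c (n - 1)) hb1
  rw [← h1] at this
  exact this

theorem R3 :
    c 1 * (tp c (n - 1) * c (n - 1) * (tp c (n - 1))⁻¹) * c 1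
      = (tp c (n - 1) * c (n - 1) * (tp c (n - 1))⁻¹) * c 1
        * (tp c (n - 1) * c (n - 1) * (tp c (n - 1))⁻¹) := by
  set W := sp n c (n - 2) with hW
  have hfull : tp c (n - 1) = sp n c (n - 1) := by
    have := tp_eq_sp (c := c) (n - 1) le_rfl
    rw [show n - 1 - (n - 1) = 0 from by omega] at this
    simpa [tp] using this
  have hD : tp c (n - 1) * c (n - 1) * (tp c (n - 1))⁻¹ = W⁻¹ * c 1 * W := by
    have := conj_sp hb hc (n - 2) (by omega)
    rw [show n - 2 + 1 = n - 1 from by omega, show n - 1 - (n - 2) = 1 from by omega] at this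
    rw [hfull]; exact this
  have hE : W * c 1 * W⁻¹ = c 2 * c 1 * (c 2)⁻¹ := by
    have hWs : W = c 2 * sp n c (n - 3) := by
      rw [hW, show n - 2 = (n - 3) + 1 from by omega,
        show sp n c ((n - 3) + 1) = c (n - 1 - (n - 3)) * sp n c (n - 3) from rfl,
        show n - 1 - (n - 3) = 2 from by omega]
    have hcm : Commute (c 1) (sp n c (n - 3)) := comm_sp hc (n - 3) 1 le_rfl (by omega)
    have h2 : sp n c (n - 3) * c 1 = c 1 * sp n c (n - 3) := hcm.symm.eq
    calc W * c 1 * W⁻¹ = c 2 * (sp n c (n - 3) * c 1) * (sp n c (n - 3))⁻¹ * (c 2)⁻¹ := by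
          rw [hWs]; group
      _ = c 2 * (c 1 * sp n c (n - 3)) * (sp n c (n - 3))⁻¹ * (c 2)⁻¹ := by rw [h2]
      _ = c 2 * c 1 * (c 2)⁻¹ := by group
  rw [hD]
  have hb1 := hb 1 le_rfl (by omega)
  have key : W * (c 1 * (W⁻¹ * c 1 * W) * c 1) * W⁻¹
      = W * ((W⁻¹ * c 1 * W) * c 1 * (W⁻¹ * c 1 * W)) * W⁻¹ := by
    have h2 : (c 2)⁻¹ * c 1 * c 2 = c 1 * c 2 * (c 1)⁻¹ := by
      apply mul_left_cancel (a := c 2)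
      calc c 2 * ((c 2)⁻¹ * c 1 * c 2) = c 1 * c 2 := by group
        _ = (c 1 * c 2 * c 1) * (c 1)⁻¹ := by group
        _ = (c 2 * c 1 * c 2) * (c 1)⁻¹ := by rw [hb1]
        _ = c 2 * (c 1 * c 2 * (c 1)⁻¹) := by group
    have lhs : W * (c 1 * (W⁻¹ * c 1 * W) * c 1) * W⁻¹ = c 2 * c 1 * c 1 := by
      calc W * (c 1 * (W⁻¹ * c 1 * W) * c 1) * W⁻¹
          = (W * c 1 * W⁻¹) * c 1 * (W * c 1 * W⁻¹) := by group
        _ = (c 2 * c 1 * (c 2)⁻¹) * c 1 * (c 2 * c 1 * (c 2)⁻¹) := by rw [hE]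
        _ = c 2 * c 1 * ((c 2)⁻¹ * c 1 * c 2) * c 1 * (c 2)⁻¹ := by group
        _ = c 2 * c 1 * (c 1 * c 2 * (c 1)⁻¹) * c 1 * (c 2)⁻¹ := by rw [h2]
        _ = c 2 * c 1 * c 1 := by group
    have rhs : W * ((W⁻¹ * c 1 * W) * c 1 * (W⁻¹ * c 1 * W)) * W⁻¹ = c 2 * c 1 * c 1 := by
      calc W * ((W⁻¹ * c 1 * W) * c 1 * (W⁻¹ * c 1 * W)) * W⁻¹
          = c 1 * (W * c 1 * W⁻¹) * c 1 := by group
        _ = c 1 * (c 2 * c 1 * (c 2)⁻¹) * c 1 := by rw [hE]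
        _ = (c 1 * c 2 * c 1) * ((c 2)⁻¹ * c 1) := by group
        _ = (c 2 * c 1 * c 2) * ((c 2)⁻¹ * c 1) := by rw [hb1]
        _ = c 2 * c 1 * c 1 := by group
    rw [lhs, rhs]
  exact mul_left_cancel (mul_right_cancel key)

end Rel

end Stmt11Aux

/-- For a representation of `B_n` (`n ≥ 3`) with `A i = C i - 1` (`i ∈ ℤ_n`,
`A 0 = T C_{n-1} T⁻¹ - 1`): for distinct `i j : ZMod n`, if `‖i - j‖ = 1` then
`f(A_i, A_j) ≥ tf(A_i, A_j) = dim Im (A_i + A_i² + A_i A_j A_i)`, and if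
`‖i - j‖ ≥ 2` then `f(A_i, A_j) ≥ dim Im (A_i A_j)`. -/
theorem stmt_11 (n r : ℕ) (hn : 3 ≤ n) (hr : 1 ≤ r)
    (C : ℕ → Matrix (Fin r) (Fin r) ℂ)
    (hinv : ∀ i, 1 ≤ i → i ≤ n - 1 → IsUnit (C i))
    (hcomm : ∀ i j, 1 ≤ i → i ≤ n - 1 → 1 ≤ j → j ≤ n - 1 → i + 2 ≤ j →
      C i * C j = C j * C i)
    (hbraid : ∀ i, 1 ≤ i → i ≤ n - 2 →
      C i * C (i + 1) * C i = C (i + 1) * C i * C (i + 1))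
    (T : Matrix (Fin r) (Fin r) ℂ)
    (hT : T = (List.map (fun i => C (i + 1)) (List.range (n - 1))).prod)
    (A : ZMod n → Matrix (Fin r) (Fin r) ℂ)
    (hA : ∀ i : ℕ, 1 ≤ i → i ≤ n - 1 → A (i : ZMod n) = C i - 1)
    (hA0 : A 0 = T * C (n - 1) * T⁻¹ - 1) :
    ∀ i j : ZMod n, i ≠ j →
      (min ((i - j).val) (n - (i - j).val) = 1 →
        Module.finrank ℂ
            ↥(LinearMap.range (A i).mulVecLin ⊓ LinearMap.range (A j).mulVecLin) ≥
          Module.finrank ℂ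
            ↥(LinearMap.range (A i + A i ^ 2 + A i * A j * A i).mulVecLin)) ∧
      (2 ≤ min ((i - j).val) (n - (i - j).val) →
        Module.finrank ℂ
            ↥(LinearMap.range (A i).mulVecLin ⊓ LinearMap.range (A j).mulVecLin) ≥
          Module.finrank ℂ ↥(LinearMap.range (A i * A j).mulVecLin)) := by
  haveI : NeZero n := ⟨by omega⟩
  -- lift the generators to units
  obtain ⟨c, hcval⟩ : ∃ c : ℕ → (Matrix (Fin r) (Fin r) ℂ)ˣ,
      ∀ i, 1 ≤ i → i ≤ n - 1 → (c i : Matrix (Fin r) (Fin r) ℂ) = C i :=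
    ⟨fun i => if h : 1 ≤ i ∧ i ≤ n - 1 then (hinv i h.1 h.2).unit else 1,
     fun i h1 h2 => by simp [h1, h2]⟩
  have hb' : ∀ k, 1 ≤ k → k ≤ n - 2 →
      c k * c (k + 1) * c k = c (k + 1) * c k * c (k + 1) := by
    intro k h1 h2
    apply Units.ext
    simp only [Units.val_mul, hcval k h1 (by omega), hcval (k + 1) (by omega) (by omega)]
    exact hbraid k h1 h2
  have hc' : ∀ i j, 1 ≤ i → i + 2 ≤ j → j ≤ n - 1 → c i * c j = c j * c i := by
    intro i j h1 h2 h3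
    apply Units.ext
    simp only [Units.val_mul, hcval i h1 (by omega), hcval j (by omega) h3]
    exact hcomm i j h1 (by omega) (by omega) h3 h2
  have htp : ∀ m, m ≤ n - 1 →
      ((Stmt11Aux.tp c m : (Matrix (Fin r) (Fin r) ℂ)ˣ) : Matrix (Fin r) (Fin r) ℂ)
        = (List.map (fun i => C (i + 1)) (List.range m)).prod := by
    intro m
    induction m with
    | zero => intro _; simp [Stmt11Aux.tp]
    | succ m ih =>
      intro h
      rw [show Stmt11Aux.tp c (m + 1) = Stmt11Aux.tp c m * c (m + 1) from rfl,
        Units.val_mul, ih (by omega), hcval (m + 1) (by omega) h, List.range_succ]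
      simp
  have hTval : ((Stmt11Aux.tp c (n - 1) : (Matrix (Fin r) (Fin r) ℂ)ˣ) :
      Matrix (Fin r) (Fin r) ℂ) = T := by rw [htp (n - 1) le_rfl, hT]
  obtain ⟨D, hDdef⟩ : ∃ D : (Matrix (Fin r) (Fin r) ℂ)ˣ,
      D = Stmt11Aux.tp c (n - 1) * c (n - 1) * (Stmt11Aux.tp c (n - 1))⁻¹ := ⟨_, rfl⟩
  have hDval : (D : Matrix (Fin r) (Fin r) ℂ) = A 0 + 1 := by
    rw [hDdef]
    simp only [Units.val_mul, hTval, Matrix.coe_units_inv,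
      hcval (n - 1) (by omega) le_rfl, hA0, hTval]
    abel
  obtain ⟨Du, hDu0, hDuc⟩ : ∃ Du : ZMod n → (Matrix (Fin r) (Fin r) ℂ)ˣ,
      Du 0 = D ∧ ∀ i : ZMod n, i ≠ 0 → Du i = c i.val :=
    ⟨fun i => if i = 0 then D else c i.val, by simp, fun i hi => by simp [hi]⟩
  have hDuval : ∀ i : ZMod n, ((Du i : (Matrix (Fin r) (Fin r) ℂ)ˣ) :
      Matrix (Fin r) (Fin r) ℂ) = A i + 1 := by
    intro i
    by_cases hi : i = 0
    · rw [hi, hDu0, hDval]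
    · rw [hDuc i hi]
      have h1 : 1 ≤ i.val := ZMod.val_pos.mpr hi
      have h2 : i.val ≤ n - 1 := by have := ZMod.val_lt i; omega
      rw [hcval i.val h1 h2]
      have hAi := hA i.val h1 h2
      rw [ZMod.natCast_rightInverse i] at hAi
      rw [hAi]; abel
  have hR1 := Stmt11Aux.R1 hb' hc' hn
  have hR2 := Stmt11Aux.R2 hb' hc' hn
  have hR3 := Stmt11Aux.R3 hb' hc' hn
  rw [← hDdef] at hR1 hR2 hR3
  have hrel : ∀ i j : ZMod n, i ≠ j →
      ((min ((i - j).val) (n - (i - j).val) = 1 →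
          Du i * Du j * Du i = Du j * Du i * Du j) ∧
       (2 ≤ min ((i - j).val) (n - (i - j).val) → Du i * Du j = Du j * Du i)) := by
    intro i j hij
    by_cases hi : i = 0
    · subst hi
      have hj : j ≠ 0 := fun h => hij h.symm
      have hb1 : 1 ≤ j.val := ZMod.val_pos.mpr hj
      have hb2 : j.val < n := ZMod.val_lt j
      haveI : NeZero j := ⟨hj⟩
      have hneg : (0 - j).val = n - j.val := by
        rw [zero_sub]; exact ZMod.val_neg_of_ne_zero j
      rw [hDu0, hDuc j hj]
      constructor
      · intro h1
        rw [hneg] at h1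
        have : j.val = 1 ∨ j.val = n - 1 := by omega
        rcases this with h | h
        · rw [h]; exact hR3.symm
        · rw [h]; exact hR2.symm
      · intro h2
        rw [hneg] at h2
        exact (hR1 j.val (by omega) (by omega)).symm
    · by_cases hj : j = 0
      · subst hj
        have ha1 : 1 ≤ i.val := ZMod.val_pos.mpr hi
        have ha2 : i.val < n := ZMod.val_lt i
        rw [hDu0, hDuc i hi, sub_zero]
        constructor
        · intro h1
          have : i.val = 1 ∨ i.val = n - 1 := by omega
          rcases this with h | h
          · rw [h]; exact hR3
          · rw [h]; exact hR2
        · intro h2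
          exact hR1 i.val (by omega) (by omega)
      · have ha1 : 1 ≤ i.val := ZMod.val_pos.mpr hi
        have ha2 : i.val < n := ZMod.val_lt i
        have hb1 : 1 ≤ j.val := ZMod.val_pos.mpr hj
        have hb2 : j.val < n := ZMod.val_lt j
        have hab : i.val ≠ j.val := fun h => hij (by
          have := congrArg (Nat.cast : ℕ → ZMod n) h
          rwa [ZMod.natCast_rightInverse i, ZMod.natCast_rightInverse j] at this)
        have hD2 : ((i - j).val = i.val - j.val ∧ j.val < i.val) ∨
            ((i - j).val = n - (j.val - i.val) ∧ i.val < j.val) := by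
          rcases lt_or_gt_of_ne hab with h | h
          · right
            refine ⟨?_, h⟩
            have hji : (j - i).val = j.val - i.val := ZMod.val_sub (le_of_lt h)
            have hne : j - i ≠ 0 := sub_ne_zero.mpr (Ne.symm hij)
            haveI : NeZero (j - i) := ⟨hne⟩
            have hsw : i - j = -(j - i) := by ring
            rw [hsw, ZMod.val_neg_of_ne_zero, hji]
          · left; exact ⟨ZMod.val_sub (le_of_lt h), h⟩
        rw [hDuc i hi, hDuc j hj]
        constructor
        · intro h1
          have : i.val = j.val + 1 ∨ j.val = i.val + 1 := by omega
          rcases this with h | h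
          · rw [h]; exact (hb' j.val hb1 (by omega)).symm
          · rw [h]; exact hb' i.val ha1 (by omega)
        · intro h2
          have : j.val + 2 ≤ i.val ∨ i.val + 2 ≤ j.val := by omega
          rcases this with h | h
          · exact (hc' j.val i.val hb1 h (by omega)).symm
          · exact hc' i.val j.val ha1 h (by omega)
  intro i j hij
  obtain ⟨hbr, hco⟩ := hrel i j hij
  constructor
  · intro h1
    have hu := hbr h1
    have hab : (A i + 1) * (A j + 1) * (A i + 1) = (A j + 1) * (A i + 1) * (A j + 1) := by
      have := congrArg (Units.val) hu
      simpa only [Units.val_mul, hDuval i, hDuval j] using this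
    have key1 : A i + A i ^ 2 + A i * A j * A i = A i * (1 + A i + A j * A i) := by
      noncomm_ring
    have key2 : A i + A i ^ 2 + A i * A j * A i = A j * (1 + A j + A i * A j) := by
      have e1 : A i + A i ^ 2 + A i * A j * A i
          = (A i + 1) * (A j + 1) * (A i + 1)
            - (1 + A i + A j + A i * A j + A j * A i) := by noncomm_ring
      rw [e1, hab]; noncomm_ring
    rw [ge_iff_le]
    apply Submodule.finrank_mono
    apply le_inf
    · rw [key1, Matrix.mulVecLin_mul]
      exact LinearMap.range_comp_le_range _ _
    · rw [key2, Matrix.mulVecLin_mul]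
      exact LinearMap.range_comp_le_range _ _
  · intro h2
    have hu := hco h2
    have hab : (A i + 1) * (A j + 1) = (A j + 1) * (A i + 1) := by
      have := congrArg (Units.val) hu
      simpa only [Units.val_mul, hDuval i, hDuval j] using this
    have hcm : A i * A j = A j * A i := by
      have e1 : A i * A j = (A i + 1) * (A j + 1) - (A i + A j + 1) := by noncomm_ring
      rw [e1, hab]; noncomm_ring
    rw [ge_iff_le]
    apply Submodule.finrank_mono
    apply le_inf
    · rw [Matrix.mulVecLin_mul]
      exact LinearMap.range_comp_le_range _ _
    · rw [hcm, Matrix.mulVecLin_mul]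
      exact LinearMap.range_comp_le_range _ _
end

section
/- (Enhanced Lemma about Friends) Let n ≥ 3 and let C_1, …, C_{n−1} ∈ GL_r(ℂ) be a representation of B_n of dimension r; set A_i = C_i − I, T = C_1 ⋯ C_{n−1}, and A_0 = T C_{n−1} T^{−1} − I, indices in ℤ_n. Let i, j, k ∈ ℤ_n be three distinct indices with ||i−j|| = 1 and ||i−k|| ≥ 2. Then dim(Im A_j ∩ Im A_k) ≤ dim Im(A_i + A_i² + A_i A_j A_i) + dim Im(A_i A_k), i.e., f(A_j,A_k) ≤ tf(A_i,A_j) + tf(A_i,A_k). -/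
open Module LinearMap

open Module LinearMap
set_option synthInstance.maxHeartbeats 1000000 in
set_option maxHeartbeats 1000000 in
theorem key {r : ℕ} (X Y K : Matrix (Fin r) (Fin r) ℂ) (hu : IsUnit (1 + Y))
    (hbr : X + X^2 + X*Y*X = Y + Y^2 + Y*X*Y) :
    Module.finrank ℂ
        ↥(LinearMap.range Y.mulVecLin ⊓ LinearMap.range K.mulVecLin) ≤
      Module.finrank ℂ
          ↥(LinearMap.range (X + X ^ 2 + X * Y * X).mulVecLin) +
        Module.finrank ℂ ↥(LinearMap.range (X * K).mulVecLin) := by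
  set V := LinearMap.range Y.mulVecLin ⊓ LinearMap.range K.mulVecLin with hV
  set f : V →ₗ[ℂ] (Fin r → ℂ) := (Matrix.mulVecLin (1 + Y + Y*X)).comp V.subtype with hf
  have h1 : finrank ℂ V = finrank ℂ (LinearMap.range f) + finrank ℂ (LinearMap.ker f) :=
    (LinearMap.finrank_range_add_finrank_ker f).symm
  have hrange : LinearMap.range f ≤ LinearMap.range (X + X ^ 2 + X * Y * X).mulVecLin := by
    rintro w ⟨⟨v, hv⟩, rfl⟩
    obtain ⟨x, hx⟩ := hv.1
    refine ⟨x, ?_⟩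
    have : (X + X ^ 2 + X * Y * X) = (1 + Y + Y*X) * Y := by
      rw [hbr]; noncomm_ring
    simp only [this, Matrix.mulVecLin_mul, hf, LinearMap.comp_apply, Submodule.subtype_apply]
    rw [← hx]
  set g : LinearMap.ker f →ₗ[ℂ] (Fin r → ℂ) :=
    X.mulVecLin.comp (V.subtype.comp (LinearMap.ker f).subtype) with hg
  have hginj : Function.Injective g := by
    intro a b hab
    set v := ((a.1.1 : Fin r → ℂ)) - b.1.1 with hv'
    have hXv : X.mulVec v = 0 := by
      have h5 : X.mulVec a.1.1 = X.mulVec b.1.1 := hab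
      simp [hv', Matrix.mulVec_sub, h5]
    have hfv : (1 + Y + Y*X).mulVec v = 0 := by
      have ha := LinearMap.mem_ker.mp a.2
      have hb := LinearMap.mem_ker.mp b.2
      have ha' : (1 + Y + Y*X).mulVec a.1.1 = 0 := ha
      have hb' : (1 + Y + Y*X).mulVec b.1.1 = 0 := hb
      simp [hv', Matrix.mulVec_sub, ha', hb']
    have h2 : (1 + Y).mulVec v = 0 := by
      have h3 : (Y*X).mulVec v = Y.mulVec (X.mulVec v) := by
        rw [Matrix.mulVec_mulVec]
      rw [Matrix.add_mulVec, h3, hXv, Matrix.mulVec_zero, add_zero] at hfv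
      exact hfv
    have hv0 : v = 0 := by
      have h4 := congrArg (fun w => (1+Y)⁻¹.mulVec w) h2
      simpa [Matrix.mulVec_mulVec, Matrix.nonsing_inv_mul _ ((Matrix.isUnit_iff_isUnit_det _).1 hu)] using h4
    have h6 : (a.1.1 : Fin r → ℂ) = b.1.1 := by rwa [sub_eq_zero] at hv0
    exact Subtype.ext (Subtype.ext h6)
  have hker : finrank ℂ (LinearMap.ker f) ≤ finrank ℂ (LinearMap.range (X * K).mulVecLin) := by
    rw [← LinearMap.finrank_range_of_inj hginj]
    apply Submodule.finrank_mono
    rintro w ⟨z, rfl⟩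
    have hz : (z.1 : Fin r → ℂ) ∈ V := z.1.2
    obtain ⟨y, hy⟩ := hz.2
    refine ⟨y, ?_⟩
    show ((X * K).mulVecLin) y = g z
    simp only [Matrix.mulVecLin_mul, LinearMap.comp_apply, hg, Submodule.subtype_apply]
    rw [hy]
  have hr2 : finrank ℂ (LinearMap.range f) ≤ finrank ℂ (LinearMap.range (X + X ^ 2 + X * Y * X).mulVecLin) :=
    Submodule.finrank_mono hrange
  omega

variable {r n : ℕ}

private noncomputable def gp (C : ℕ → Matrix (Fin r) (Fin r) ℂ) (k : ℕ) : Matrix (Fin r) (Fin r) ℂ :=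
  (List.map (fun i => C (i + 1)) (List.range k)).prod

variable (C : ℕ → Matrix (Fin r) (Fin r) ℂ)

private lemma gp_succ (k : ℕ) : gp C (k+1) = gp C k * C (k+1) := by
  simp [gp, List.range_succ]

private lemma gp_unit (hinv : ∀ i, 1 ≤ i → i ≤ n - 1 → IsUnit (C i)) :
    ∀ k, k ≤ n - 1 → IsUnit (gp C k) := by
  intro k
  induction k with
  | zero => intro _; simp [gp]
  | succ m ih =>
    intro hm
    rw [gp_succ]
    exact (ih (by omega)).mul (hinv (m+1) (by omega) hm)

private lemma gp_comm_low
    (hcomm : ∀ i j, 1 ≤ i → i ≤ n - 1 → 1 ≤ j → j ≤ n - 1 → i + 2 ≤ j →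
      C i * C j = C j * C i)
    (s t : ℕ) (hst : s + 2 ≤ t) (ht : t ≤ n - 1) :
    Commute (C t) (gp C s) := by
  apply Commute.list_prod_right
  intro x hx
  simp only [List.mem_map, List.mem_range] at hx
  obtain ⟨i, hi, rfl⟩ := hx
  have := hcomm (i+1) t (by omega) (by omega) (by omega) (by omega) (by omega)
  exact Commute.symm (by simpa [Commute, SemiconjBy] using this)

private lemma gp_conj
    (hcomm : ∀ i j, 1 ≤ i → i ≤ n - 1 → 1 ≤ j → j ≤ n - 1 → i + 2 ≤ j →
      C i * C j = C j * C i)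
    (hbraid : ∀ i, 1 ≤ i → i ≤ n - 2 →
      C i * C (i + 1) * C i = C (i + 1) * C i * C (i + 1)) :
    ∀ s k, s + 2 ≤ k → k ≤ n - 1 → gp C k * C (s+1) = C (s+2) * gp C k := by
  intro s k hsk hk
  obtain ⟨m, rfl⟩ : ∃ m, k = (s+2) + m := ⟨k - (s+2), by omega⟩
  have hsplit : gp C ((s+2)+m)
      = gp C (s+2) * (List.map (fun i => C (s + 2 + i + 1)) (List.range m)).prod := by
    rw [gp, List.range_add, List.map_append, List.prod_append, List.map_map]
    rfl
  set P := (List.map (fun i => C (s + 2 + i + 1)) (List.range m)).prod with hP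
  have hcomP : Commute (C (s+1)) P := by
    apply Commute.list_prod_right
    intro x hx
    simp only [List.mem_map, List.mem_range] at hx
    obtain ⟨i, hi, rfl⟩ := hx
    have := hcomm (s+1) (s+2+i+1) (by omega) (by omega) (by omega) (by omega) (by omega)
    simpa [Commute, SemiconjBy] using this
  have hcomS : Commute (C (s+2)) (gp C s) :=
    gp_comm_low C hcomm s (s+2) (by omega) (by omega)
  have h1 : gp C (s+2) * C (s+1) = C (s+2) * gp C (s+2) := by
    rw [gp_succ, gp_succ]
    have hb := hbraid (s+1) (by omega) (by omega)
    calc gp C s * C (s+1) * C (s+2) * C (s+1)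
        = gp C s * (C (s+1) * C (s+2) * C (s+1)) := by
          simp only [mul_assoc]
      _ = gp C s * (C (s+2) * C (s+1) * C (s+2)) := by rw [hb]
      _ = (C (s+2) * gp C s) * (C (s+1) * C (s+2)) := by
          rw [hcomS.eq]; simp only [mul_assoc]
      _ = C (s+2) * (gp C s * C (s+1) * C (s+2)) := by simp only [mul_assoc]
  calc gp C (s+2+m) * C (s+1)
      = gp C (s+2) * (P * C (s+1)) := by rw [hsplit, mul_assoc]
    _ = gp C (s+2) * C (s+1) * P := by rw [← hcomP.eq, ← mul_assoc]
    _ = C (s+2) * (gp C (s+2) * P) := by rw [h1, mul_assoc]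
    _ = C (s+2) * gp C (s+2+m) := by rw [← hsplit]

private lemma gp_L4
    (hcomm : ∀ i j, 1 ≤ i → i ≤ n - 1 → 1 ≤ j → j ≤ n - 1 → i + 2 ≤ j →
      C i * C j = C j * C i)
    (hbraid : ∀ i, 1 ≤ i → i ≤ n - 2 →
      C i * C (i + 1) * C i = C (i + 1) * C i * C (i + 1)) :
    ∀ k, k + 1 ≤ n - 1 →
      gp C (k+1) * gp C k * C (k+1) = C 1 * (gp C (k+1) * gp C k) := by
  intro k
  induction k with
  | zero => intro _; simp [gp, List.range_succ]
  | succ m ih =>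
    intro hm
    have hb := hbraid (m+1) (by omega) (by omega)
    have hcom : Commute (C (m+2)) (gp C m) :=
      gp_comm_low C hcomm m (m+2) (by omega) (by omega)
    have ihm := ih (by omega)
    calc gp C (m+2) * gp C (m+1) * C (m+2)
        = gp C (m+1) * (C (m+2) * gp C m) * (C (m+1) * C (m+2)) := by
          rw [gp_succ C (m+1), gp_succ C m]; simp only [mul_assoc]
      _ = gp C (m+1) * gp C m * (C (m+2) * C (m+1) * C (m+2)) := by
          rw [hcom.eq]; simp only [mul_assoc]
      _ = gp C (m+1) * gp C m * (C (m+1) * C (m+2) * C (m+1)) := by rw [← hb]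
      _ = (gp C (m+1) * gp C m * C (m+1)) * (C (m+2) * C (m+1)) := by
          simp only [mul_assoc]
      _ = C 1 * (gp C (m+1) * (gp C m * C (m+2)) * C (m+1)) := by
          rw [ihm]; simp only [mul_assoc]
      _ = C 1 * (gp C (m+1) * (C (m+2) * gp C m) * C (m+1)) := by rw [← hcom.eq]
      _ = C 1 * (gp C (m+2) * gp C (m+1)) := by
          rw [gp_succ C (m+1), gp_succ C m]; simp only [mul_assoc]

set_option maxHeartbeats 1000000 in
set_option synthInstance.maxHeartbeats 1000000 in
/-- (Enhanced Lemma about Friends) For a representation of `B_n` (`n ≥ 3`) with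
`A i = C i - 1` (`i ∈ ℤ_n`, `A 0 = T C_{n-1} T⁻¹ - 1`): for three distinct indices
`i j k : ZMod n` with `‖i - j‖ = 1` and `‖i - k‖ ≥ 2`,
`f(A_j, A_k) ≤ tf(A_i, A_j) + tf(A_i, A_k)`. -/
theorem stmt_12 (n r : ℕ) (hn : 3 ≤ n) (hr : 1 ≤ r)
    (C : ℕ → Matrix (Fin r) (Fin r) ℂ)
    (hinv : ∀ i, 1 ≤ i → i ≤ n - 1 → IsUnit (C i))
    (hcomm : ∀ i j, 1 ≤ i → i ≤ n - 1 → 1 ≤ j → j ≤ n - 1 → i + 2 ≤ j →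
      C i * C j = C j * C i)
    (hbraid : ∀ i, 1 ≤ i → i ≤ n - 2 →
      C i * C (i + 1) * C i = C (i + 1) * C i * C (i + 1))
    (T : Matrix (Fin r) (Fin r) ℂ)
    (hT : T = (List.map (fun i => C (i + 1)) (List.range (n - 1))).prod)
    (A : ZMod n → Matrix (Fin r) (Fin r) ℂ)
    (hA : ∀ i : ℕ, 1 ≤ i → i ≤ n - 1 → A (i : ZMod n) = C i - 1)
    (hA0 : A 0 = T * C (n - 1) * T⁻¹ - 1)
    (i j k : ZMod n) (hij : i ≠ j) (hik : i ≠ k) (hjk : j ≠ k)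
    (hnij : min ((i - j).val) (n - (i - j).val) = 1)
    (hnik : 2 ≤ min ((i - k).val) (n - (i - k).val)) :
    Module.finrank ℂ
        ↥(LinearMap.range (A j).mulVecLin ⊓ LinearMap.range (A k).mulVecLin) ≤
      Module.finrank ℂ
          ↥(LinearMap.range (A i + A i ^ 2 + A i * A j * A i).mulVecLin) +
        Module.finrank ℂ ↥(LinearMap.range (A i * A k).mulVecLin) := by
  obtain ⟨m, rfl⟩ : ∃ m, n = m + 3 := ⟨n - 3, by omega⟩
  haveI : NeZero (m + 3) := ⟨by omega⟩
  haveI : Fact (1 < m + 3) := ⟨by omega⟩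
  have hn1 : m + 3 - 1 = m + 2 := by omega
  have hn2 : m + 3 - 2 = m + 1 := by omega
  -- T is the full product
  have hTg : T = gp C (m + 2) := by rw [hT, hn1]; rfl
  have hTu : IsUnit T := hTg ▸ gp_unit C hinv (m + 2) (by omega)
  have hdet : IsUnit T.det := (Matrix.isUnit_iff_isUnit_det T).1 hTu
  have hTi : T⁻¹ * T = 1 := Matrix.nonsing_inv_mul T hdet
  have hTi' : T * T⁻¹ = 1 := Matrix.mul_nonsing_inv T hdet
  have hconj : ∀ x y : Matrix (Fin r) (Fin r) ℂ,
      (T * x * T⁻¹) * (T * y * T⁻¹) = T * (x * y) * T⁻¹ := by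
    intro x y
    simp only [mul_assoc]
    rw [show T⁻¹ * (T * (y * T⁻¹)) = y * T⁻¹ by rw [← mul_assoc, hTi, one_mul]]
  -- conjugation shifts indices
  have hshift : ∀ s, s + 2 ≤ m + 2 → T * C (s + 1) = C (s + 2) * T := by
    intro s hs
    rw [hTg]
    exact gp_conj C hcomm hbraid s (m + 2) hs (by omega)
  set Cz := T * C (m + 2) * T⁻¹ with hCz
  have hCm2 : C (m + 2) = T * C (m + 1) * T⁻¹ := by
    have h := hshift m (by omega)
    rw [h, mul_assoc, hTi', mul_one]
  have hbm1 : C (m + 1) * C (m + 2) * C (m + 1) = C (m + 2) * C (m + 1) * C (m + 2) := by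
    have h := hbraid (m + 1) (by omega) (by omega)
    rwa [show m + 1 + 1 = m + 2 by omega] at h
  have braid0 : Cz * C (m + 2) * Cz = C (m + 2) * Cz * C (m + 2) := by
    have e : (T * C (m+2) * T⁻¹) * (T * C (m+1) * T⁻¹) * (T * C (m+2) * T⁻¹)
        = T * (C (m+2) * C (m+1) * C (m+2)) * T⁻¹ := by rw [hconj, hconj]
    have e' : (T * C (m+1) * T⁻¹) * (T * C (m+2) * T⁻¹) * (T * C (m+1) * T⁻¹)
        = T * (C (m+1) * C (m+2) * C (m+1)) * T⁻¹ := by rw [hconj, hconj]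
    calc Cz * C (m+2) * Cz
        = (T * C (m+2) * T⁻¹) * (T * C (m+1) * T⁻¹) * (T * C (m+2) * T⁻¹) := by
          rw [← hCm2, ← hCz]
      _ = T * (C (m+2) * C (m+1) * C (m+2)) * T⁻¹ := e
      _ = T * (C (m+1) * C (m+2) * C (m+1)) * T⁻¹ := by rw [hbm1]
      _ = (T * C (m+1) * T⁻¹) * (T * C (m+2) * T⁻¹) * (T * C (m+1) * T⁻¹) := e'.symm
      _ = C (m+2) * Cz * C (m+2) := by rw [← hCm2, ← hCz]
  have gs : gp C (m + 2) = gp C (m + 1) * C (m + 2) := by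
    rw [show m + 2 = m + 1 + 1 by omega]
    exact gp_succ C (m+1)
  have hL4' : gp C (m + 2) * gp C (m + 1) * C (m + 2)
      = C 1 * (gp C (m + 2) * gp C (m + 1)) := by
    rw [show m + 2 = m + 1 + 1 by omega]
    exact gp_L4 C hcomm hbraid (m+1) (by omega)
  have hT2C : T * T * C (m + 2) = C 1 * (T * T) := by
    have h := hL4'
    rw [hTg, gs]
    rw [gs] at h
    simp only [← mul_assoc] at h ⊢
    rw [h]
  have hTCz : T * Cz * T⁻¹ = C 1 := by
    rw [hCz]
    calc T * (T * C (m + 2) * T⁻¹) * T⁻¹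
        = T * T * C (m + 2) * (T⁻¹ * T⁻¹) := by simp only [mul_assoc]
      _ = C 1 * (T * T) * (T⁻¹ * T⁻¹) := by rw [hT2C]
      _ = C 1 := by
          simp only [mul_assoc]
          rw [show T * (T⁻¹ * T⁻¹) = T⁻¹ by rw [← mul_assoc, hTi', one_mul],
            hTi', mul_one]
  have braid01 : Cz * C 1 * Cz = C 1 * Cz * C 1 := by
    have h1 : C 1 * Cz * C 1 = (T * Cz * T⁻¹) * (T * C (m+2) * T⁻¹) * (T * Cz * T⁻¹) := by
      rw [hTCz, ← hCz]
    have h2 : Cz * C 1 * Cz = (T * C (m+2) * T⁻¹) * (T * Cz * T⁻¹) * (T * C (m+2) * T⁻¹) := by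
      rw [hTCz, ← hCz]
    rw [h1, h2, hconj, hconj, hconj, hconj, braid0]
  -- units
  have hCzu : IsUnit Cz := by
    rw [hCz]
    exact (hTu.mul (hinv (m + 2) (by omega) (by omega))).mul
      ((Matrix.isUnit_nonsing_inv_iff ..).2 hTu)
  -- the cyclic family
  set Dm : ZMod (m + 3) → Matrix (Fin r) (Fin r) ℂ :=
    fun x => if x = 0 then Cz else C x.val with hDm
  have hDA : ∀ x : ZMod (m + 3), A x = Dm x - 1 := by
    intro x
    by_cases hx : x = 0
    · rw [hx, hDm]
      simp only [if_pos rfl]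
      rw [hA0, hn1, hCz]
      simp
    · have hx1 : 1 ≤ x.val := ZMod.val_pos.2 hx
      have hx2 : x.val ≤ m + 2 := by have := ZMod.val_lt x; omega
      have := hA x.val hx1 (by omega)
      rw [ZMod.natCast_rightInverse x] at this
      rw [this, hDm]
      simp only [if_neg hx]
  have hDu : ∀ x : ZMod (m + 3), IsUnit (Dm x) := by
    intro x
    by_cases hx : x = 0
    · rw [hDm]; simp only [hx, if_pos rfl]; exact hCzu
    · rw [hDm]; simp only [if_neg hx]
      have hx1 : 1 ≤ x.val := ZMod.val_pos.2 hx
      have hx2 : x.val ≤ m + 2 := by have := ZMod.val_lt x; omega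
      exact hinv x.val hx1 (by omega)
  have hone : (1 : ZMod (m + 3)) ≠ 0 := by
    intro h
    have := congrArg ZMod.val h
    rw [ZMod.val_one] at this
    simp at this
  have hDbr : ∀ x : ZMod (m + 3),
      Dm x * Dm (x + 1) * Dm x = Dm (x + 1) * Dm x * Dm (x + 1) := by
    intro x
    by_cases hx : x = 0
    · subst hx
      rw [zero_add, hDm]
      simp only [if_pos rfl, if_neg hone, ZMod.val_one]
      exact braid01
    · by_cases hx1 : x + 1 = 0
      · have hxeq : x = -1 := eq_neg_of_add_eq_zero_left hx1
        rw [hx1, hDm]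
        simp only [if_pos rfl, if_neg hx]
        rw [hxeq, show ((-1 : ZMod (m+3)).val) = m + 2 from ZMod.val_neg_one (m+2)]
        exact braid0.symm
      · have hxv1 : 1 ≤ x.val := ZMod.val_pos.2 hx
        have hxvlt : x.val < m + 3 := ZMod.val_lt x
        have hxv2 : x.val ≤ m + 1 := by
          by_contra h
          have hv : x.val = m + 2 := by omega
          apply hx1
          have : x = ((m + 2 : ℕ) : ZMod (m + 3)) := by
            rw [← hv, ZMod.natCast_rightInverse x]
          rw [this]
          have : ((m + 3 : ℕ) : ZMod (m + 3)) = 0 := ZMod.natCast_self _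
          push_cast at this ⊢
          linear_combination this
        have hx1v : (x + 1).val = x.val + 1 := by
          conv_lhs => rw [← ZMod.natCast_rightInverse x]
          rw [← Nat.cast_one, ← Nat.cast_add]
          exact ZMod.val_cast_of_lt (by omega)
        rw [hDm]
        simp only [if_neg hx, if_neg hx1, hx1v]
        exact hbraid x.val hxv1 (by omega)
  -- identify the neighbor pair
  have hvij : (i - j).val = 1 ∨ (i - j).val = m + 2 := by
    have := ZMod.val_lt (i - j)
    omega
  have hb : Dm i * Dm j * Dm i = Dm j * Dm i * Dm j := by
    rcases hvij with hv | hv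
    · have hij1 : i = j + 1 := by
        have h := ZMod.natCast_rightInverse (i - j)
        rw [hv] at h
        push_cast at h
        linear_combination -h
      rw [hij1]
      exact (hDbr j).symm
    · have hij1 : j = i + 1 := by
        have h := ZMod.natCast_rightInverse (i - j)
        rw [hv] at h
        have h3 : ((m + 3 : ℕ) : ZMod (m + 3)) = 0 := ZMod.natCast_self _
        push_cast at h h3
        linear_combination h - h3
      rw [hij1]
      exact hDbr i
  -- braid identity for A's
  have hXi : A i = Dm i - 1 := hDA i
  have hXj : A j = Dm j - 1 := hDA j
  have e1 : A i + A i ^ 2 + A i * A j * A i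
      = Dm i * Dm j * Dm i - Dm i * Dm j - Dm j * Dm i + Dm i + Dm j - 1 := by
    rw [hXi, hXj]; noncomm_ring
  have e2 : A j + A j ^ 2 + A j * A i * A j
      = Dm j * Dm i * Dm j - Dm j * Dm i - Dm i * Dm j + Dm j + Dm i - 1 := by
    rw [hXi, hXj]; noncomm_ring
  have hbr : A i + A i ^ 2 + A i * A j * A i = A j + A j ^ 2 + A j * A i * A j := by
    rw [e1, e2, hb]; noncomm_ring
  have hu : IsUnit (1 + A j) := by
    rw [hXj, show (1 : Matrix (Fin r) (Fin r) ℂ) + (Dm j - 1) = Dm j by noncomm_ring]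
    exact hDu j
  exact key (A i) (A j) (A k) hu hbr
end

section
/- Let n ≥ 4 and let C_1, …, C_{n−1} ∈ GL_r(ℂ) be a representation of B_n of dimension r; set A_i = C_i − I for 1 ≤ i ≤ n−1. Then dim Im(A_1 A_3) = dim Im(A_1 A_4) = ⋯ = dim Im(A_1 A_{n−1}); that is, tf(k) = dim Im(A_1 A_{1+k}) takes the same value for all k = 2, 3, …, n−2. -/
/-- For a representation of `B_n` (`n ≥ 4`) with `A i = C i - 1`, the quantity
`tf(k) = dim Im (A 1 * A (1+k))` is the same for all `k = 2, …, n-2`. -/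
theorem stmt_13 (n r : ℕ) (hn : 4 ≤ n) (hr : 1 ≤ r)
    (C : ℕ → Matrix (Fin r) (Fin r) ℂ)
    (hinv : ∀ i, 1 ≤ i → i ≤ n - 1 → IsUnit (C i))
    (hcomm : ∀ i j, 1 ≤ i → i ≤ n - 1 → 1 ≤ j → j ≤ n - 1 → i + 2 ≤ j →
      C i * C j = C j * C i)
    (hbraid : ∀ i, 1 ≤ i → i ≤ n - 2 →
      C i * C (i + 1) * C i = C (i + 1) * C i * C (i + 1)) :
    ∀ k l, 2 ≤ k → k ≤ n - 2 → 2 ≤ l → l ≤ n - 2 →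
      Module.finrank ℂ
          ↥(LinearMap.range ((C 1 - 1) * (C (1 + k) - 1)).mulVecLin) =
        Module.finrank ℂ
          ↥(LinearMap.range ((C 1 - 1) * (C (1 + l) - 1)).mulVecLin) := by
  -- reformulate in terms of Matrix.rank
  have hrank : ∀ k, Module.finrank ℂ
      ↥(LinearMap.range ((C 1 - 1) * (C (1 + k) - 1)).mulVecLin)
      = ((C 1 - 1) * (C (1 + k) - 1)).rank := fun k => rfl
  -- step: for 2 ≤ k ≤ n - 3, ranks at k and k+1 agree
  have step : ∀ k, 2 ≤ k → k + 1 ≤ n - 2 →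
      ((C 1 - 1) * (C (1 + (k+1)) - 1)).rank = ((C 1 - 1) * (C (1 + k) - 1)).rank := by
    intro k hk2 hk
    set j := 1 + k with hj
    have hj3 : 3 ≤ j := by omega
    have hjn : j ≤ n - 2 := by omega
    have hjn1 : j ≤ n - 1 := by omega
    have hj1n1 : j + 1 ≤ n - 1 := by omega
    have hUj : IsUnit (C j) := hinv j (by omega) hjn1
    have hUj1 : IsUnit (C (j+1)) := hinv (j+1) (by omega) hj1n1
    have hU : IsUnit (C j * C (j+1)) := hUj.mul hUj1
    have hc1j : C 1 * C j = C j * C 1 := hcomm 1 j le_rfl (by omega) (by omega) hjn1 hj3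
    have hc1j1 : C 1 * C (j+1) = C (j+1) * C 1 :=
      hcomm 1 (j+1) le_rfl (by omega) (by omega) hj1n1 (by omega)
    have hb : C j * C (j+1) * C j = C (j+1) * C j * C (j+1) := hbraid j (by omega) hjn
    set U := C j * C (j+1) with hUdef
    have key : ((C 1 - 1) * (C (j+1) - 1)) * U = U * ((C 1 - 1) * (C j - 1)) := by
      have h1 : (C (j+1) - 1) * U = U * (C j - 1) := by
        simp only [sub_mul, mul_sub, one_mul, mul_one, hUdef]
        rw [← mul_assoc, hb]
      have h2 : (C 1 - 1) * U = U * (C 1 - 1) := by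
        simp only [sub_mul, mul_sub, one_mul, mul_one, hUdef]
        rw [← mul_assoc, hc1j, mul_assoc, hc1j1, ← mul_assoc]
      calc (C 1 - 1) * (C (j+1) - 1) * U = (C 1 - 1) * (U * (C j - 1)) := by
            rw [mul_assoc, h1]
        _ = U * ((C 1 - 1) * (C j - 1)) := by
            rw [← mul_assoc, h2, mul_assoc]
    have hdet : IsUnit U.det := (Matrix.isUnit_iff_isUnit_det U).mp hU
    have : (1 + (k+1)) = j + 1 := by omega
    rw [this]
    calc ((C 1 - 1) * (C (j+1) - 1)).rank
        = (((C 1 - 1) * (C (j+1) - 1)) * U).rank :=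
          (Matrix.rank_mul_eq_left_of_isUnit_det U _ hdet).symm
      _ = (U * ((C 1 - 1) * (C j - 1))).rank := by rw [key]
      _ = ((C 1 - 1) * (C j - 1)).rank := Matrix.rank_mul_eq_right_of_isUnit_det U _ hdet
  -- all ranks equal the rank at k = 2
  have base : ∀ k, 2 ≤ k → k ≤ n - 2 →
      ((C 1 - 1) * (C (1 + k) - 1)).rank = ((C 1 - 1) * (C (1 + 2) - 1)).rank := by
    intro k hk2 hkn
    induction k with
    | zero => omega
    | succ m ih =>
      rcases Nat.lt_or_ge m 2 with hm | hm
      · interval_cases m <;> simp_all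
      · rw [step m hm (by omega), ih hm (by omega)]
  intro k l hk2 hkn hl2 hln
  rw [hrank, hrank, base k hk2 hkn, base l hl2 hln]
end

section
/- Let n ≥ 5 and let C_1, …, C_{n−1} ∈ GL_r(ℂ) be an irreducible representation of B_n of dimension r ≥ n+1; set A_i = C_i − I, T = C_1 ⋯ C_{n−1}, A_0 = T C_{n−1} T^{−1} − I, indices in ℤ_n. Suppose the corank k = rank(A_1) satisfies 3 ≤ k ≤ r−1. Then dim(Im A_1 ∩ Im A_{1+j}) < k for every j = 1, 2, …, n−1 (indices modulo n). -/
namespace Stmt15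

variable {M : Type*} [Monoid M]

def pr (C : ℕ → M) (s m : ℕ) : M := ((List.range m).map fun i => C (s + i)).prod

lemma pr_zero (C : ℕ → M) (s : ℕ) : pr C s 0 = 1 := rfl

lemma pr_succ (C : ℕ → M) (s m : ℕ) : pr C s (m + 1) = pr C s m * C (s + m) := by
  simp [pr, List.range_succ]

lemma pr_one (C : ℕ → M) (s : ℕ) : pr C s 1 = C s := by
  rw [pr, show List.range 1 = [0] from rfl]; simp

lemma pr_succ' (C : ℕ → M) (s m : ℕ) : pr C s (m + 1) = C s * pr C (s + 1) m := by
  induction m with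
  | zero => simp [pr_one, pr_zero]
  | succ m ih =>
      have e : s + 1 + m = s + (m + 1) := by omega
      rw [pr_succ, ih, pr_succ, mul_assoc, e]

lemma pr_add (C : ℕ → M) (s a b : ℕ) : pr C s (a + b) = pr C s a * pr C (s + a) b := by
  induction b with
  | zero => simp [pr_zero]
  | succ b ih =>
      have e : s + a + b = s + (a + b) := by omega
      rw [show a + (b+1) = (a+b)+1 from rfl, pr_succ, ih, pr_succ, mul_assoc, e]

lemma pr_commute {C : ℕ → M} {x : M} {s m : ℕ}
    (h : ∀ i, i < m → x * C (s + i) = C (s + i) * x) :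
    x * pr C s m = pr C s m * x := by
  induction m with
  | zero => simp [pr_zero]
  | succ m ih =>
      rw [pr_succ, ← mul_assoc, ih (fun i hi => h i (by omega)), mul_assoc,
        h m (by omega), mul_assoc]

lemma pr_isUnit {C : ℕ → M} {s m : ℕ} (h : ∀ i, i < m → IsUnit (C (s + i))) :
    IsUnit (pr C s m) := by
  induction m with
  | zero => simp [pr_zero]
  | succ m ih =>
      rw [pr_succ]
      exact (ih (fun i hi => h i (by omega))).mul (h m (by omega))




variable {M : Type*} [Monoid M] {n : ℕ} {C : ℕ → M}
  (hcomm : ∀ i j, 1 ≤ i → i ≤ n - 1 → 1 ≤ j → j ≤ n - 1 → i + 2 ≤ j →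
      C i * C j = C j * C i)
  (hbraid : ∀ i, 1 ≤ i → i ≤ n - 2 →
      C i * C (i + 1) * C i = C (i + 1) * C i * C (i + 1))

include hcomm hbraid

lemma shiftC (i : ℕ) (h1 : 1 ≤ i) (h2 : i + 2 ≤ n) :
    pr C 1 (n - 1) * C i = C (i + 1) * pr C 1 (n - 1) := by
  obtain ⟨a, rfl⟩ : ∃ a, i = a + 1 := ⟨i - 1, by omega⟩
  obtain ⟨b, hb⟩ : ∃ b, n = a + b + 3 := ⟨n - a - 3, by omega⟩
  have hsplit : pr C 1 (n - 1) = pr C 1 a * (C (a + 1) * (C (a + 2) * pr C (a + 3) b)) := by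
    have e1 : n - 1 = a + ((b + 1) + 1) := by omega
    rw [e1, pr_add, pr_succ', pr_succ']
    simp only [show 1 + a = a + 1 by omega, show a + 1 + 1 = a + 2 by omega,
      show a + 2 + 1 = a + 3 by omega]
  have hc1 : C (a + 1) * pr C (a + 3) b = pr C (a + 3) b * C (a + 1) := by
    refine pr_commute (fun i hi => ?_)
    exact (hcomm (a + 1) (a + 3 + i) (by omega) (by omega) (by omega) (by omega) (by omega)).symm
      |>.symm
  have hc2 : C (a + 2) * pr C 1 a = pr C 1 a * C (a + 2) := by
    refine pr_commute (fun i hi => ?_)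
    exact (hcomm (1 + i) (a + 2) (by omega) (by omega) (by omega) (by omega) (by omega)).symm
  have hb2 : C (a + 1) * C (a + 2) * C (a + 1) = C (a + 2) * C (a + 1) * C (a + 2) :=
    hbraid (a + 1) (by omega) (by omega)
  calc pr C 1 (n - 1) * C (a + 1)
      = pr C 1 a * (C (a + 1) * (C (a + 2) * (pr C (a + 3) b * C (a + 1)))) := by
        rw [hsplit]; simp only [mul_assoc]
    _ = pr C 1 a * (C (a + 1) * (C (a + 2) * (C (a + 1) * pr C (a + 3) b))) := by
        rw [← hc1]
    _ = pr C 1 a * (C (a + 1) * C (a + 2) * C (a + 1)) * pr C (a + 3) b := by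
        simp only [mul_assoc]
    _ = pr C 1 a * (C (a + 2) * C (a + 1) * C (a + 2)) * pr C (a + 3) b := by rw [hb2]
    _ = (pr C 1 a * C (a + 2)) * (C (a + 1) * (C (a + 2) * pr C (a + 3) b)) := by
        simp only [mul_assoc]
    _ = C (a + 2) * (pr C 1 a * (C (a + 1) * (C (a + 2) * pr C (a + 3) b))) := by
        rw [← hc2]; simp only [mul_assoc]
    _ = C (a + 1 + 1) * pr C 1 (n - 1) := by rw [hsplit]

lemma shift_prod (m : ℕ) (h : m + 2 ≤ n) :
    pr C 1 (n - 1) * pr C 1 m = pr C 2 m * pr C 1 (n - 1) := by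
  induction m with
  | zero => simp [pr_zero]
  | succ m ih =>
      rw [pr_succ, ← mul_assoc, ih (by omega), mul_assoc,
        shiftC hcomm hbraid (1 + m) (by omega) (by omega), ← mul_assoc,
        show 1 + m + 1 = 2 + m by omega, ← pr_succ]

lemma keyUV (m : ℕ) (h1 : 1 ≤ m) (h2 : m + 2 ≤ n) :
    pr C 2 m * pr C 1 m * C (m + 1) = C 1 * (pr C 2 m * pr C 1 m) := by
  induction m with
  | zero => omega
  | succ m ih =>
      rcases Nat.eq_zero_or_pos m with hm | hm
      · subst hm
        have hb := hbraid 1 (by omega) (by omega)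
        norm_num [pr_one] at hb ⊢
        rw [← mul_assoc]
        exact hb.symm
      · have ih' := ih hm (by omega)
        have hcm : C (m + 2) * pr C 1 m = pr C 1 m * C (m + 2) := by
          refine pr_commute (fun i hi => ?_)
          exact (hcomm (1 + i) (m + 2) (by omega) (by omega) (by omega) (by omega)
            (by omega)).symm
        have hb := hbraid (m + 1) (by omega) (by omega)
        have hb' : C (m + 2) * (C (m + 1) * C (m + 2)) = C (m + 1) * (C (m + 2) * C (m + 1)) := by
          simpa only [mul_assoc, show m + 1 + 1 = m + 2 by omega] using hb.symm
        rw [pr_succ, pr_succ, show 2 + m = m + 2 by omega, show 1 + m = m + 1 by omega,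
          show m + 1 + 1 = m + 2 by omega]
        rw [show pr C 2 m * C (m + 2) * (pr C 1 m * C (m + 1)) * C (m + 2)
            = pr C 2 m * (C (m + 2) * pr C 1 m) * (C (m + 1) * C (m + 2)) by
          simp only [mul_assoc], hcm]
        rw [show pr C 2 m * (pr C 1 m * C (m + 2)) * (C (m + 1) * C (m + 2))
            = pr C 2 m * pr C 1 m * (C (m + 2) * (C (m + 1) * C (m + 2))) by
          simp only [mul_assoc], hb']
        rw [show pr C 2 m * pr C 1 m * (C (m + 1) * (C (m + 2) * C (m + 1)))
            = (pr C 2 m * pr C 1 m * C (m + 1)) * (C (m + 2) * C (m + 1)) by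
          simp only [mul_assoc], ih']
        rw [show C 1 * (pr C 2 m * pr C 1 m) * (C (m + 2) * C (m + 1))
            = C 1 * (pr C 2 m * (pr C 1 m * C (m + 2)) * C (m + 1)) by
          simp only [mul_assoc], ← hcm]
        simp only [mul_assoc]

lemma TTkey (hn : 3 ≤ n) :
    pr C 1 (n - 1) * pr C 1 (n - 1) * C (n - 1) = C 1 * (pr C 1 (n - 1) * pr C 1 (n - 1)) := by
  have e1 : n - 1 = (n - 2) + 1 := by omega
  have h1 : pr C 1 (n - 1) = C 1 * pr C 2 (n - 2) := by
    rw [e1, pr_succ']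
  have h2 : pr C 1 (n - 1) = pr C 1 (n - 2) * C (n - 1) := by
    rw [e1, pr_succ, show 1 + (n - 2) = n - 2 + 1 by omega]
  have key := keyUV hcomm hbraid (n - 2) (by omega) (by omega)
  rw [show n - 2 + 1 = n - 1 by omega] at key
  have hTT : pr C 1 (n - 1) * pr C 1 (n - 1)
      = C 1 * (C 1 * (pr C 2 (n - 2) * pr C 1 (n - 2))) := by
    calc pr C 1 (n - 1) * pr C 1 (n - 1)
        = C 1 * (pr C 2 (n - 2) * pr C 1 (n - 2) * C (n - 1)) := by
          nth_rewrite 1 [h1]; nth_rewrite 1 [h2]; simp only [mul_assoc]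
      _ = C 1 * (C 1 * (pr C 2 (n - 2) * pr C 1 (n - 2))) := by rw [key]
  rw [hTT, show C 1 * (C 1 * (pr C 2 (n - 2) * pr C 1 (n - 2))) * C (n - 1)
      = C 1 * (C 1 * (pr C 2 (n - 2) * pr C 1 (n - 2) * C (n - 1))) by simp only [mul_assoc],
    key]

end Stmt15




open Stmt15

/-- For `n ≥ 5` and an irreducible representation of `B_n` of dimension `r ≥ n+1`,
with `A i = C i - 1` (`i ∈ ℤ_n`, `A 0 = T C_{n-1} T⁻¹ - 1`): if the corank
`k = rank (A 1)` satisfies `3 ≤ k ≤ r - 1`, then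
`dim (Im A_1 ∩ Im A_{1+j}) < k` for all `j = 1, …, n-1`. -/
theorem stmt_15 (n r : ℕ) (hn : 5 ≤ n) (hr : n + 1 ≤ r)
    (C : ℕ → Matrix (Fin r) (Fin r) ℂ)
    (hinv : ∀ i, 1 ≤ i → i ≤ n - 1 → IsUnit (C i))
    (hcomm : ∀ i j, 1 ≤ i → i ≤ n - 1 → 1 ≤ j → j ≤ n - 1 → i + 2 ≤ j →
      C i * C j = C j * C i)
    (hbraid : ∀ i, 1 ≤ i → i ≤ n - 2 →
      C i * C (i + 1) * C i = C (i + 1) * C i * C (i + 1))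
    (hirr : ∀ p : Submodule ℂ (Fin r → ℂ),
      (∀ i, 1 ≤ i → i ≤ n - 1 → ∀ v ∈ p, (C i).mulVec v ∈ p) → p = ⊥ ∨ p = ⊤)
    (T : Matrix (Fin r) (Fin r) ℂ)
    (hT : T = (List.map (fun i => C (i + 1)) (List.range (n - 1))).prod)
    (A : ZMod n → Matrix (Fin r) (Fin r) ℂ)
    (hA : ∀ i : ℕ, 1 ≤ i → i ≤ n - 1 → A (i : ZMod n) = C i - 1)
    (hA0 : A 0 = T * C (n - 1) * T⁻¹ - 1)
    (k : ℕ) (hk : (A 1).rank = k) (hk3 : 3 ≤ k) (hkr : k ≤ r - 1) :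
    ∀ j : ℕ, 1 ≤ j → j ≤ n - 1 →
      Module.finrank ℂ
          ↥(LinearMap.range (A 1).mulVecLin ⊓
            LinearMap.range (A ((1 + j : ℕ) : ZMod n)).mulVecLin) < k := by
  haveI : NeZero n := ⟨by omega⟩
  intro j hj1 hj2
  -- T as a product
  have hTeq : T = pr C 1 (n - 1) := by
    rw [hT, pr]
    congr 1
    apply List.map_congr_left
    intro i _
    rw [Nat.add_comm]
  have hTunit : IsUnit T := by
    rw [hTeq]; exact pr_isUnit (fun i hi => hinv (1 + i) (by omega) (by omega))
  have hdet : IsUnit T.det := (Matrix.isUnit_iff_isUnit_det T).mp hTunit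
  have hTi : T * T⁻¹ = 1 := Matrix.mul_nonsing_inv T hdet
  have hTi' : T⁻¹ * T = 1 := Matrix.nonsing_inv_mul T hdet
  have hshift : ∀ i : ℕ, 1 ≤ i → i + 2 ≤ n → T * C i = C (i + 1) * T := by
    intro i h1 h2; rw [hTeq]; exact shiftC hcomm hbraid i h1 h2
  have hTT : T * T * C (n - 1) = C 1 * (T * T) := by
    rw [hTeq]; exact TTkey hcomm hbraid (by omega)
  -- shift the A family
  have hAshift : ∀ i : ZMod n, T * A i = A (i + 1) * T := by
    intro i
    obtain ⟨m, hm, rfl⟩ : ∃ m : ℕ, m < n ∧ (m : ZMod n) = i :=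
      ⟨i.val, i.val_lt, ZMod.natCast_rightInverse i⟩
    rcases Nat.eq_zero_or_pos m with h0 | h1
    · subst h0
      rw [Nat.cast_zero, hA0,
        show ((0 : ZMod n) + 1) = ((1 : ℕ) : ZMod n) by push_cast; ring,
        hA 1 le_rfl (by omega)]
      have key : T * (T * C (n - 1) * T⁻¹) = C 1 * T := by
        calc T * (T * C (n - 1) * T⁻¹) = T * T * C (n - 1) * T⁻¹ := by
              simp only [mul_assoc]
          _ = C 1 * (T * T) * T⁻¹ := by rw [hTT]
          _ = C 1 * T * (T * T⁻¹) := by simp only [mul_assoc]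
          _ = C 1 * T := by rw [hTi, mul_one]
      rw [mul_sub, sub_mul, key, mul_one, one_mul]
    · rcases Nat.lt_or_ge m (n - 1) with h2 | h2
      · rw [hA m h1 (by omega),
          show ((m : ZMod n) + 1) = ((m + 1 : ℕ) : ZMod n) by push_cast; ring,
          hA (m + 1) (by omega) (by omega)]
        rw [mul_sub, sub_mul, mul_one, one_mul, hshift m h1 (by omega)]
      · have hm1 : m = n - 1 := by omega
        subst hm1
        have hz : (((n - 1 : ℕ) : ZMod n) + 1) = (0 : ZMod n) := by
          have h' : ((n - 1 + 1 : ℕ) : ZMod n) = ((n : ℕ) : ZMod n) := by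
            rw [show n - 1 + 1 = n by omega]
          rw [Nat.cast_add, Nat.cast_one] at h'
          rw [h', ZMod.natCast_self]
        rw [hA (n - 1) (by omega) le_rfl, hz, hA0]
        rw [mul_sub, sub_mul, mul_one, one_mul]
        congr 1
        rw [mul_assoc, hTi', mul_one]
  -- surjectivity / injectivity of multiplication by T
  have hfsurj : Function.Surjective T.mulVecLin := by
    intro v
    refine ⟨T⁻¹.mulVec v, ?_⟩
    rw [Matrix.mulVecLin_apply, Matrix.mulVec_mulVec, hTi, Matrix.one_mulVec]
  have hfinj : Function.Injective T.mulVecLin := by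
    have : Function.LeftInverse T⁻¹.mulVecLin T.mulVecLin := by
      intro v
      rw [Matrix.mulVecLin_apply, Matrix.mulVecLin_apply, Matrix.mulVec_mulVec, hTi',
        Matrix.one_mulVec]
    exact this.injective
  -- mapping ranges
  have hmap : ∀ i : ZMod n,
      (LinearMap.range (A i).mulVecLin).map T.mulVecLin
        = LinearMap.range (A (i + 1)).mulVecLin := by
    intro i
    calc (LinearMap.range (A i).mulVecLin).map T.mulVecLin
        = LinearMap.range (T.mulVecLin ∘ₗ (A i).mulVecLin) :=
          (LinearMap.range_comp _ _).symm
      _ = LinearMap.range ((T * A i).mulVecLin) := by rw [Matrix.mulVecLin_mul]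
      _ = LinearMap.range ((A (i + 1) * T).mulVecLin) := by rw [hAshift i]
      _ = LinearMap.range ((A (i + 1)).mulVecLin ∘ₗ T.mulVecLin) := by
          rw [Matrix.mulVecLin_mul]
      _ = LinearMap.range (A (i + 1)).mulVecLin :=
          LinearMap.range_comp_of_range_eq_top _ (LinearMap.range_eq_top.mpr hfsurj)
  have hfr : ∀ p : Submodule ℂ (Fin r → ℂ),
      Module.finrank ℂ (p.map T.mulVecLin) = Module.finrank ℂ p := by
    intro p
    exact LinearEquiv.finrank_map_eq (LinearEquiv.ofBijective T.mulVecLin ⟨hfinj, hfsurj⟩) p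
  have hrank1 : Module.finrank ℂ (LinearMap.range (A 1).mulVecLin) = k := hk
  have hranks : ∀ t : ℕ,
      Module.finrank ℂ (LinearMap.range (A (1 + (t : ZMod n))).mulVecLin) = k := by
    intro t
    induction t with
    | zero => rw [Nat.cast_zero, add_zero]; exact hrank1
    | succ t ih =>
        rw [show (1 : ZMod n) + ((t + 1 : ℕ) : ZMod n) = (1 + (t : ZMod n)) + 1 by
            push_cast; ring,
          ← hmap, hfr]
        exact ih
  refine lt_of_le_of_ne ?_ ?_
  · exact le_trans (Submodule.finrank_mono inf_le_left) (le_of_eq hrank1)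
  intro heq
  have hcast : ((1 + j : ℕ) : ZMod n) = 1 + (j : ZMod n) := by push_cast; ring
  rw [hcast] at heq
  have hQrank : Module.finrank ℂ
      (LinearMap.range (A (1 + (j : ZMod n))).mulVecLin) = k := hranks j
  -- equality of the two ranges
  have h1 : LinearMap.range (A 1).mulVecLin ⊓
      LinearMap.range (A (1 + (j : ZMod n))).mulVecLin
      = LinearMap.range (A 1).mulVecLin :=
    Submodule.eq_of_le_of_finrank_le inf_le_left (by rw [hrank1, heq])
  have h2 : LinearMap.range (A 1).mulVecLin ⊓
      LinearMap.range (A (1 + (j : ZMod n))).mulVecLin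
      = LinearMap.range (A (1 + (j : ZMod n))).mulVecLin :=
    Submodule.eq_of_le_of_finrank_le inf_le_right (by rw [hQrank, heq])
  have hPQ : LinearMap.range (A 1).mulVecLin
      = LinearMap.range (A (1 + (j : ZMod n))).mulVecLin := h1.symm.trans h2
  -- propagate the equality around the circle
  have hind : ∀ t : ℕ, LinearMap.range (A (1 + (t : ZMod n))).mulVecLin
      = LinearMap.range (A (1 + (t : ZMod n) + (j : ZMod n))).mulVecLin := by
    intro t
    induction t with
    | zero => rw [Nat.cast_zero, add_zero]; exact hPQ
    | succ t ih =>
        have e1 : (1 : ZMod n) + ((t + 1 : ℕ) : ZMod n) = (1 + (t : ZMod n)) + 1 := by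
          push_cast; ring
        have e2 : (1 : ZMod n) + ((t + 1 : ℕ) : ZMod n) + (j : ZMod n)
            = (1 + (t : ZMod n) + (j : ZMod n)) + 1 := by push_cast; ring
        rw [e2, e1, ← hmap, ← hmap, ih]
  have hstep : ∀ c : ZMod n, LinearMap.range (A c).mulVecLin
      = LinearMap.range (A (c + (j : ZMod n))).mulVecLin := by
    intro c
    have hc : c = 1 + (((c - 1).val : ℕ) : ZMod n) := by
      rw [ZMod.natCast_rightInverse (c - 1)]; ring
    rw [hc]
    exact hind _
  have hW1 : LinearMap.range (A (1 + (j : ZMod n))).mulVecLin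
      = LinearMap.range (A 1).mulVecLin := hPQ.symm
  have hW2 : LinearMap.range (A (1 + (j : ZMod n) + (j : ZMod n))).mulVecLin
      = LinearMap.range (A 1).mulVecLin := (hstep (1 + j)).symm.trans hW1
  -- arithmetic facts in ZMod n
  have hj0 : (j : ZMod n) ≠ 0 := by
    intro h
    rw [ZMod.natCast_eq_zero_iff] at h
    have := Nat.le_of_dvd (by omega) h
    omega
  have h40 : ((4 : ℕ) : ZMod n) ≠ 0 := by
    intro h
    rw [ZMod.natCast_eq_zero_iff] at h
    have := Nat.le_of_dvd (by omega) h
    omega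
  -- commutation of C m with A c for cyclically non-adjacent indices
  have hAcomm : ∀ (c : ZMod n) (m : ℕ), 1 ≤ m → m ≤ n - 1 →
      c ≠ (m : ZMod n) - 1 → c ≠ (m : ZMod n) + 1 → C m * A c = A c * C m := by
    intro c m hm1 hm2 hne1 hne2
    obtain ⟨c', hc', rfl⟩ : ∃ c' : ℕ, c' < n ∧ (c' : ZMod n) = c :=
      ⟨c.val, c.val_lt, ZMod.natCast_rightInverse c⟩
    rcases Nat.eq_zero_or_pos c' with h0 | h1
    · subst h0
      have hm1' : m ≠ 1 := by
        rintro rfl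
        exact hne1 (by push_cast; ring)
      have hm2' : m ≠ n - 1 := by
        rintro rfl
        apply hne2
        have h' : ((n - 1 + 1 : ℕ) : ZMod n) = ((n : ℕ) : ZMod n) := by
          rw [show n - 1 + 1 = n by omega]
        rw [Nat.cast_add, Nat.cast_one] at h'
        rw [Nat.cast_zero, h', ZMod.natCast_self]
      rw [Nat.cast_zero, hA0]
      have hs : T * C (m - 1) = C m * T := by
        have := hshift (m - 1) (by omega) (by omega)
        rwa [show m - 1 + 1 = m by omega] at this
      have hs2 : C (m - 1) * T⁻¹ = T⁻¹ * C m := by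
        calc C (m - 1) * T⁻¹ = T⁻¹ * T * C (m - 1) * T⁻¹ := by rw [hTi', one_mul]
          _ = T⁻¹ * (T * C (m - 1)) * T⁻¹ := by simp only [mul_assoc]
          _ = T⁻¹ * (C m * T) * T⁻¹ := by rw [hs]
          _ = T⁻¹ * C m * (T * T⁻¹) := by simp only [mul_assoc]
          _ = T⁻¹ * C m := by rw [hTi, mul_one]
      have hcm : C (m - 1) * C (n - 1) = C (n - 1) * C (m - 1) :=
        hcomm (m - 1) (n - 1) (by omega) (by omega) (by omega) (by omega) (by omega)
      have key : C m * (T * C (n - 1) * T⁻¹) = (T * C (n - 1) * T⁻¹) * C m := by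
        calc C m * (T * C (n - 1) * T⁻¹) = C m * T * C (n - 1) * T⁻¹ := by
              simp only [mul_assoc]
          _ = T * C (m - 1) * C (n - 1) * T⁻¹ := by rw [← hs]
          _ = T * (C (m - 1) * C (n - 1)) * T⁻¹ := by simp only [mul_assoc]
          _ = T * (C (n - 1) * C (m - 1)) * T⁻¹ := by rw [hcm]
          _ = T * C (n - 1) * (C (m - 1) * T⁻¹) := by simp only [mul_assoc]
          _ = T * C (n - 1) * (T⁻¹ * C m) := by rw [hs2]
          _ = (T * C (n - 1) * T⁻¹) * C m := by simp only [mul_assoc]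
      rw [mul_sub, sub_mul, mul_one, one_mul, key]
    · rw [hA c' h1 (by omega)]
      by_cases hcm : c' = m
      · subst hcm
        rw [mul_sub, sub_mul, mul_one, one_mul]
      · have e1 : c' ≠ m - 1 := by
          intro h
          apply hne1
          rw [h, Nat.cast_sub (by omega), Nat.cast_one]
        have e2 : c' ≠ m + 1 := by
          intro h
          apply hne2
          rw [h]; push_cast; ring
        have h3 : c' + 2 ≤ m ∨ m + 2 ≤ c' := by omega
        have hcc : C c' * C m = C m * C c' := by
          rcases h3 with h | h
          · exact hcomm c' m (by omega) (by omega) (by omega) (by omega) h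
          · exact (hcomm m c' (by omega) (by omega) (by omega) (by omega) h).symm
        rw [mul_sub, sub_mul, mul_one, one_mul, hcc]
  -- existence of a good representative
  have goodc : ∀ m : ℕ, 1 ≤ m → m ≤ n - 1 →
      ∃ c : ZMod n, LinearMap.range (A c).mulVecLin
          = LinearMap.range (A 1).mulVecLin ∧
        c ≠ (m : ZMod n) - 1 ∧ c ≠ (m : ZMod n) + 1 := by
    intro m _ _
    by_cases h1 : (1 : ZMod n) ≠ (m : ZMod n) - 1 ∧ (1 : ZMod n) ≠ (m : ZMod n) + 1
    · exact ⟨1, rfl, h1.1, h1.2⟩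
    by_cases h2 : (1 + (j : ZMod n)) ≠ (m : ZMod n) - 1 ∧
        (1 + (j : ZMod n)) ≠ (m : ZMod n) + 1
    · exact ⟨1 + (j : ZMod n), hW1, h2.1, h2.2⟩
    by_cases h3 : (1 + (j : ZMod n) + (j : ZMod n)) ≠ (m : ZMod n) - 1 ∧
        (1 + (j : ZMod n) + (j : ZMod n)) ≠ (m : ZMod n) + 1
    · exact ⟨1 + (j : ZMod n) + (j : ZMod n), hW2, h3.1, h3.2⟩
    exfalso
    push_neg at h1 h2 h3
    have hx01 : (1 : ZMod n) ≠ 1 + (j : ZMod n) := by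
      intro h
      apply hj0
      have := h.symm
      rwa [add_eq_left] at this
    have hx12 : (1 + (j : ZMod n)) ≠ 1 + (j : ZMod n) + (j : ZMod n) := by
      intro h
      apply hj0
      have := h.symm
      rwa [add_eq_left] at this
    have p1 : (1 : ZMod n) = (m : ZMod n) - 1 ∨ (1 : ZMod n) = (m : ZMod n) + 1 := by
      by_cases ha : (1 : ZMod n) = (m : ZMod n) - 1
      · exact Or.inl ha
      · exact Or.inr (h1 ha)
    have p2 : (1 + (j : ZMod n)) = (m : ZMod n) - 1 ∨
        (1 + (j : ZMod n)) = (m : ZMod n) + 1 := by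
      by_cases ha : (1 + (j : ZMod n)) = (m : ZMod n) - 1
      · exact Or.inl ha
      · exact Or.inr (h2 ha)
    have p3 : (1 + (j : ZMod n) + (j : ZMod n)) = (m : ZMod n) - 1 ∨
        (1 + (j : ZMod n) + (j : ZMod n)) = (m : ZMod n) + 1 := by
      by_cases ha : (1 + (j : ZMod n) + (j : ZMod n)) = (m : ZMod n) - 1
      · exact Or.inl ha
      · exact Or.inr (h3 ha)
    apply h40
    rw [show ((4 : ℕ) : ZMod n) = (4 : ZMod n) by push_cast; ring]
    rcases p1 with q1 | q1 <;> rcases p2 with q2 | q2 <;> rcases p3 with q3 | q3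
    · exact absurd (q1.trans q2.symm) hx01
    · exact absurd (q1.trans q2.symm) hx01
    · linear_combination q1 - 2 * q2 + q3
    · exact absurd (q2.trans q3.symm) hx12
    · exact absurd (q2.trans q3.symm) hx12
    · linear_combination -q1 + 2 * q2 - q3
    · exact absurd (q1.trans q2.symm) hx01
    · exact absurd (q1.trans q2.symm) hx01
  -- the common image is invariant
  have hWinv : ∀ i, 1 ≤ i → i ≤ n - 1 →
      ∀ w ∈ LinearMap.range (A 1).mulVecLin,
        (C i).mulVec w ∈ LinearMap.range (A 1).mulVecLin := by
    intro m hm1 hm2 w hw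
    obtain ⟨c, hcW, hcu, hcv⟩ := goodc m hm1 hm2
    rw [← hcW] at hw ⊢
    obtain ⟨x, hx⟩ := hw
    refine ⟨(C m).mulVec x, ?_⟩
    have hcomm' := hAcomm c m hm1 hm2 hcu hcv
    rw [Matrix.mulVecLin_apply] at hx ⊢
    rw [Matrix.mulVec_mulVec, ← hcomm', ← Matrix.mulVec_mulVec, hx]
  rcases hirr (LinearMap.range (A 1).mulVecLin) hWinv with hbot | htop
  · rw [hbot, finrank_bot] at hrank1
    omega
  · rw [htop, finrank_top, Module.finrank_pi, Fintype.card_fin] at hrank1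
    omega
end
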